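/- arXiv:2507.02441 — 10 statements merged into one kernel-verified Lean document; each statement's English description precedes it below -/
import Mathlib

section
/- Let K be a field, V a K-vector space, and Q : V → K a quadratic form whose polar form B is nondegenerate. Let c ∈ V with c ≠ 0, and let φ : V → V be a K-linear automorphism such that (a) φ(w) = w for every w ∈ V with B(c,w) = 0, and (b) φ(v) − v ∈ K·c for every v ∈ V (so, projectively, φ is a central collineation of PG(V) with centre c and axis the hyperplane c^⊥). If there exists x ∈ V with Q(x) = 0, Q(φ(x)) = 0 and φ(x) ∉ K·x, then φ preserves the quadric of Q: for every v ∈ V, Q(v) = 0 if and only if Q(φ(v)) = 0. -/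
/-- Let `Q` be a quadratic form on a `K`-vector space `V` whose polar
form is nondegenerate, let `c ≠ 0`, and let `φ` be a linear automorphism of `V` that fixes
every vector of the hyperplane `c^⊥` and moves every vector `v` by an element of `K·c`
(a central collineation with centre `c` and axis `c^⊥`).  If `φ` maps some singular point
to a different singular point, then `φ` preserves the quadric of `Q`. -/
theorem central_collineation_preserves_quadric
    {K V : Type*} [Field K] [AddCommGroup V] [Module K V]
    (Q : QuadraticForm K V)
    (hnd : ∀ v : V, (∀ w : V, QuadraticMap.polar (⇑Q) v w = 0) → v = 0)
    (c : V) (hc : c ≠ 0)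
    (φ : V ≃ₗ[K] V)
    (haxis : ∀ w : V, QuadraticMap.polar (⇑Q) c w = 0 → φ w = w)
    (hcentre : ∀ v : V, φ v - v ∈ Submodule.span K ({c} : Set V))
    (hmoves : ∃ x : V, Q x = 0 ∧ Q (φ x) = 0 ∧ φ x ∉ Submodule.span K ({x} : Set V)) :
    ∀ v : V, Q v = 0 ↔ Q (φ v) = 0 := by
  -- find w0 with B(c,w0) ≠ 0
  obtain ⟨w0, hw0⟩ : ∃ w : V, QuadraticMap.polar (⇑Q) c w ≠ 0 := by
    by_contra h
    push_neg at h
    exact hc (hnd c h)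
  obtain ⟨μ, hμ⟩ := Submodule.mem_span_singleton.mp (hcentre w0)
  obtain ⟨b, hb⟩ : ∃ b : K, b = QuadraticMap.polar (⇑Q) c w0 := ⟨_, rfl⟩
  rw [← hb] at hw0
  obtain ⟨l, hl⟩ : ∃ l : K, l = μ / b := ⟨_, rfl⟩
  -- key formula: φ v = v + (l * B(c,v)) • c
  have key : ∀ v : V, φ v = v + (l * QuadraticMap.polar (⇑Q) c v) • c := by
    intro v
    obtain ⟨s, hs⟩ : ∃ s : K, s = QuadraticMap.polar (⇑Q) c v / b := ⟨_, rfl⟩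
    have hfix : φ (v - s • w0) = v - s • w0 := by
      apply haxis
      have h1 : QuadraticMap.polar (⇑Q) c (v - s • w0)
          = QuadraticMap.polar (⇑Q) c v - s * b := by
        rw [QuadraticMap.polar_sub_right, QuadraticMap.polar_smul_right]
        rw [hb, smul_eq_mul]
      rw [h1, hs]
      field_simp
      ring
    have hφ : φ v - s • φ w0 = v - s • w0 := by
      have h2 := hfix
      rw [map_sub, map_smul] at h2
      exact h2
    have h3 : φ v = v + s • (φ w0 - w0) := by
      rw [smul_sub]
      rw [sub_eq_iff_eq_add] at hφ
      rw [hφ]; abel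
    rw [h3, ← hμ, smul_smul]
    congr 1
    rw [hl, hs]
    field_simp
  -- expansion formula
  have qform : ∀ (v : V) (t : K),
      Q (v + t • c) = Q v + t * QuadraticMap.polar (⇑Q) c v + t * t * Q c := by
    intro v t
    have hp : QuadraticMap.polar (⇑Q) v (t • c) = Q (v + t • c) - Q v - Q (t • c) := rfl
    have h1 : QuadraticMap.polar (⇑Q) v (t • c) = t * QuadraticMap.polar (⇑Q) c v := by
      rw [QuadraticMap.polar_smul_right, QuadraticMap.polar_comm]
      rw [smul_eq_mul]
    have h2 : Q (t • c) = t * t * Q c := by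
      rw [QuadraticMap.map_smul, smul_eq_mul]
    rw [hp, h2] at h1
    linear_combination h1
  -- use the singular pair to get l * Q c + 1 = 0
  obtain ⟨x, hx, hφx, hxs⟩ := hmoves
  obtain ⟨t, ht⟩ : ∃ t : K, t = l * QuadraticMap.polar (⇑Q) c x := ⟨_, rfl⟩
  have htx : φ x = x + t • c := by rw [ht]; exact key x
  have htne : t ≠ 0 := by
    intro h
    apply hxs
    rw [htx, h, zero_smul, add_zero]
    exact Submodule.mem_span_singleton_self x
  have hBx : QuadraticMap.polar (⇑Q) c x ≠ 0 := by
    intro h; exact htne (by rw [ht, h, mul_zero])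
  have hkey : l * Q c + 1 = 0 := by
    have h0 : Q (φ x) = Q x + t * QuadraticMap.polar (⇑Q) c x + t * t * Q c := by
      rw [htx]; exact qform x t
    rw [hx, hφx] at h0
    have h1 : t * (QuadraticMap.polar (⇑Q) c x + t * Q c) = 0 := by
      linear_combination -h0
    have h2 : QuadraticMap.polar (⇑Q) c x + t * Q c = 0 :=
      (mul_eq_zero.mp h1).resolve_left htne
    rw [ht] at h2
    have h3 : QuadraticMap.polar (⇑Q) c x * (l * Q c + 1) = 0 := by
      linear_combination h2
    exact (mul_eq_zero.mp h3).resolve_left hBx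
  -- conclude Q (φ v) = Q v for all v
  intro v
  have hQ : Q (φ v) = Q v := by
    rw [key v, qform]
    linear_combination
      (l * QuadraticMap.polar (⇑Q) c v * QuadraticMap.polar (⇑Q) c v) * hkey
  rw [hQ]
end

section
/- Let K be a field and V a finite-dimensional K-vector space, and Q : V → K a quadratic form whose polar form B is nondegenerate; assume there exists a nonzero v ∈ V with Q(v) = 0 (Witt index at least 1). Let G ≤ V be a subspace of codimension 2 and set L := G^⊥. Assume that either L ∩ G = {0}, or L ⊆ G and Q(v) ≠ 0 for every nonzero v ∈ L (i.e., the line L of PG(V) is not a tangent line of the quadric). Let φ : V → V be a K-linear automorphism which is a similitude of Q (there is λ ∈ K, λ ≠ 0, with Q(φ(v)) = λ·Q(v) for all v) and which satisfies φ(g) ∈ K·g for every g ∈ G (projectively, φ fixes the subhyperplane PG(G) pointwise). Then φ is, up to a scalar, a product of two reflections: there exist codimension-1 subspaces H₁, H₂ of V, K-linear automorphisms ψ₁, ψ₂ of V each of which preserves the quadric {v | Q(v) = 0} and satisfies ψᵢ(h) ∈ K·h for every h ∈ Hᵢ, and a scalar c ∈ K, c ≠ 0, such that φ = c · (ψ₂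 ∘ ψ₁). -/
/-- The perp of a subspace `S` with respect to the polar form of a quadratic form `Q`:
`S^⊥ = {v ∈ V | B(s,v) = 0 for all s ∈ S}`. -/
noncomputable def polarPerp {K V : Type*} [Field K] [AddCommGroup V] [Module K V]
    (Q : QuadraticForm K V) (S : Submodule K V) : Submodule K V :=
  LinearMap.BilinForm.orthogonal (QuadraticMap.polarBilin Q) S


open Module Submodule QuadraticMap


section AuxLemmas

variable {K V : Type*} [Field K] [AddCommGroup V] [Module K V]

lemma polar_expand (Q : QuadraticForm K V) (x y : V) :
    Q (x + y) = Q x + Q y + polar ⇑Q x y := by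
  simp only [QuadraticMap.polar]; ring

lemma polar_self_eq (Q : QuadraticForm K V) (x : V) :
    polar ⇑Q x x = 2 * Q x := by
  rw [QuadraticMap.polar_self, two_nsmul, two_mul]

/-- The reflection in a vector `x` with `Q x ≠ 0`, as a linear map. -/
noncomputable def reflMap (Q : QuadraticForm K V) (x : V) : V →ₗ[K] V :=
  LinearMap.id - LinearMap.smulRight ((Q x)⁻¹ • (QuadraticMap.polarBilin Q x)) x

lemma reflMap_apply (Q : QuadraticForm K V) (x v : V) :
    reflMap Q x v = v - ((Q x)⁻¹ * polar ⇑Q x v) • x := by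
  simp [reflMap, LinearMap.smulRight_apply, smul_smul, QuadraticMap.polarBilin_apply_apply,
    smul_eq_mul]

lemma reflMap_invol (Q : QuadraticForm K V) {x : V} (hx : Q x ≠ 0) (v : V) :
    reflMap Q x (reflMap Q x v) = v := by
  simp only [reflMap_apply, QuadraticMap.polar_sub_right, QuadraticMap.polar_smul_right,
    smul_eq_mul, polar_self_eq]
  have h : (Q x)⁻¹ * (polar ⇑Q x v - (Q x)⁻¹ * polar ⇑Q x v * (2 * Q x))
      = -((Q x)⁻¹ * polar ⇑Q x v) := by
    field_simp; ring
  rw [h, neg_smul, sub_neg_eq_add, sub_add_cancel]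

lemma reflMap_isometry (Q : QuadraticForm K V) {x : V} (hx : Q x ≠ 0) (v : V) :
    Q (reflMap Q x v) = Q v := by
  have h : reflMap Q x v = v + (-((Q x)⁻¹ * polar ⇑Q x v)) • x := by
    rw [reflMap_apply, neg_smul, sub_eq_add_neg]
  rw [h, polar_expand, QuadraticMap.map_smul, QuadraticMap.polar_smul_right, smul_eq_mul,
    smul_eq_mul, QuadraticMap.polar_comm]
  field_simp; ring

/-- The reflection in a vector `x` with `Q x ≠ 0`, as a linear equivalence. -/
noncomputable def reflEquiv (Q : QuadraticForm K V) {x : V} (hx : Q x ≠ 0) : V ≃ₗ[K] V :=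
  LinearEquiv.ofLinear (reflMap Q x) (reflMap Q x)
    (LinearMap.ext fun v => reflMap_invol Q hx v)
    (LinearMap.ext fun v => reflMap_invol Q hx v)

lemma reflEquiv_apply (Q : QuadraticForm K V) {x : V} (hx : Q x ≠ 0) (v : V) :
    reflEquiv Q hx v = v - ((Q x)⁻¹ * polar ⇑Q x v) • x := reflMap_apply Q x v

lemma reflEquiv_isometry (Q : QuadraticForm K V) {x : V} (hx : Q x ≠ 0) (v : V) :
    Q (reflEquiv Q hx v) = Q v := reflMap_isometry Q hx v

lemma reflEquiv_invol (Q : QuadraticForm K V) {x : V} (hx : Q x ≠ 0) (v : V) :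
    reflEquiv Q hx (reflEquiv Q hx v) = v := reflMap_invol Q hx v

lemma reflEquiv_fix (Q : QuadraticForm K V) {x : V} (hx : Q x ≠ 0) {v : V}
    (h : polar ⇑Q x v = 0) : reflEquiv Q hx v = v := by
  rw [reflEquiv_apply, h]; simp

/-- A linear automorphism with every vector of `G` an eigenvector is scalar on `G`. -/
lemma exists_scalar_of_fix (G : Submodule K V) (φ : V ≃ₗ[K] V)
    (h : ∀ g ∈ G, ∃ a : K, φ g = a • g) : ∃ a : K, ∀ g ∈ G, φ g = a • g := by
  by_cases hG : ∀ g ∈ G, g = (0 : V)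
  · exact ⟨1, fun g hg => by rw [hG g hg]; simp⟩
  push_neg at hG
  obtain ⟨g₀, hg₀G, hg₀⟩ := hG
  obtain ⟨a, ha⟩ := h g₀ hg₀G
  refine ⟨a, fun g hg => ?_⟩
  by_cases hsp : g ∈ (K ∙ g₀)
  · obtain ⟨t, rfl⟩ := Submodule.mem_span_singleton.mp hsp
    rw [_root_.map_smul, ha, smul_comm]
  · obtain ⟨b, hb⟩ := h g hg
    obtain ⟨c, hc⟩ := h (g + g₀) (G.add_mem hg hg₀G)
    rw [map_add, hb, ha, smul_add] at hc
    have key : (b - c) • g = (c - a) • g₀ := by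
      rw [sub_smul, sub_smul, sub_eq_sub_iff_add_eq_add, add_comm (c • g₀) (c • g)]
      exact hc
    have hbc : b = c := by
      by_contra hne
      apply hsp
      have : g = ((b - c)⁻¹ * (c - a)) • g₀ := by
        rw [mul_smul, ← key, smul_smul, inv_mul_cancel₀ (sub_ne_zero.mpr hne), one_smul]
      exact Submodule.mem_span_singleton.mpr ⟨_, this.symm⟩
    have hca : c = a := by
      have h0 : (c - a) • g₀ = 0 := by rw [← key, hbc, sub_self, zero_smul]
      rcases smul_eq_zero.mp h0 with h' | h'
      · exact sub_eq_zero.mp h'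
      · exact absurd h' hg₀
    rw [hb, hbc, hca]

/-- The "hyperplane" `x^⊥` has codimension 1 when the polar form is nondegenerate. -/
lemma ker_polar_finrank [FiniteDimensional K V] (Q : QuadraticForm K V)
    (hnd : ∀ v : V, (∀ w : V, polar ⇑Q v w = 0) → v = 0) {x : V} (hx : x ≠ 0) :
    finrank K (LinearMap.ker (QuadraticMap.polarBilin Q x)) + 1 = finrank K V := by
  obtain ⟨w, hw⟩ : ∃ w, polar ⇑Q x w ≠ 0 := by
    by_contra h; push_neg at h; exact hx (hnd x h)
  have hrange : LinearMap.range (QuadraticMap.polarBilin Q x) = ⊤ := by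
    rw [eq_top_iff]; rintro s -
    refine ⟨(s * (polar ⇑Q x w)⁻¹) • w, ?_⟩
    simp only [QuadraticMap.polarBilin_apply_apply, QuadraticMap.polar_smul_right, smul_eq_mul]
    field_simp
  have h2 := LinearMap.finrank_range_add_finrank_ker (QuadraticMap.polarBilin Q x)
  rw [hrange, finrank_top, Module.finrank_self] at h2
  omega

end AuxLemmas

section Diag
variable {K V : Type*} [Field K] [AddCommGroup V] [Module K V]

/-- The map fixing `u` and scaling `w` by `γ` (w.r.t. a hyperbolic pair `u, w`). -/
noncomputable def diagMap (Q : QuadraticForm K V) (u w : V) (γ : K) : V →ₗ[K] V :=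
  LinearMap.id + LinearMap.smulRight ((γ - 1) • (QuadraticMap.polarBilin Q u)) w

lemma diagMap_apply (Q : QuadraticForm K V) (u w : V) (γ : K) (v : V) :
    diagMap Q u w γ v = v + ((γ - 1) * polar ⇑Q u v) • w := by
  simp [diagMap, LinearMap.smulRight_apply, QuadraticMap.polarBilin_apply_apply, smul_eq_mul]

lemma diagMap_comp (Q : QuadraticForm K V) {u w : V} (huw : polar ⇑Q u w = 1)
    (huu : polar ⇑Q u u = 0) (γ δ : K) (v : V) :
    diagMap Q u w γ (diagMap Q u w δ v) = diagMap Q u w (γ * δ) v := by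
  simp only [diagMap_apply, QuadraticMap.polar_add_right, QuadraticMap.polar_smul_right,
    smul_eq_mul, huw, huu]
  rw [add_assoc, ← add_smul]
  congr 1
  ring

lemma diagMap_one (Q : QuadraticForm K V) (u w : V) (v : V) :
    diagMap Q u w 1 v = v := by
  rw [diagMap_apply]; simp

/-- The diagonal map as a linear equivalence, for `γ ≠ 0`. -/
noncomputable def diagEquiv (Q : QuadraticForm K V) {u w : V} (huw : polar ⇑Q u w = 1)
    (huu : polar ⇑Q u u = 0) {γ : K} (hγ : γ ≠ 0) : V ≃ₗ[K] V :=
  LinearEquiv.ofLinear (diagMap Q u w γ) (diagMap Q u w γ⁻¹)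
    (LinearMap.ext fun v => by
      simp only [LinearMap.comp_apply, LinearMap.id_apply]
      rw [diagMap_comp Q huw huu, mul_inv_cancel₀ hγ, diagMap_one])
    (LinearMap.ext fun v => by
      simp only [LinearMap.comp_apply, LinearMap.id_apply]
      rw [diagMap_comp Q huw huu, inv_mul_cancel₀ hγ, diagMap_one])

lemma diagEquiv_apply (Q : QuadraticForm K V) {u w : V} (huw : polar ⇑Q u w = 1)
    (huu : polar ⇑Q u u = 0) {γ : K} (hγ : γ ≠ 0) (v : V) :
    diagEquiv Q huw huu hγ v = diagMap Q u w γ v := rfl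

end Diag

section Crux
variable {K V : Type*} [Field K] [AddCommGroup V] [Module K V] [FiniteDimensional K V]

/-- Key step: a non-identity isometry fixing `G` pointwise and moving every vector
within `L = G^⊥` moves some vector by a non-isotropic amount. -/
lemma exists_nonisotropic_displacement
    (Q : QuadraticForm K V)
    (hnd : ∀ v : V, (∀ w : V, polar ⇑Q v w = 0) → v = 0)
    (G : Submodule K V) (hG : finrank K G + 2 = finrank K V)
    (L : Submodule K V)
    (hLmem : ∀ v : V, v ∈ L ↔ ∀ g ∈ G, polar ⇑Q g v = 0)
    (hfrL : finrank K L = 2)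
    (hnotTangent : L ⊓ G = ⊥ ∨ (L ≤ G ∧ ∀ v ∈ L, v ≠ 0 → Q v ≠ 0))
    (σ : V ≃ₗ[K] V)
    (hiso : ∀ v, Q (σ v) = Q v)
    (hBiso : ∀ v w, polar ⇑Q (σ v) (σ w) = polar ⇑Q v w)
    (hσL : ∀ v : V, σ v - v ∈ L)
    (hne : ∃ v, σ v ≠ v) :
    ∃ v : V, Q (σ v - v) ≠ 0 := by
  by_contra hQ0
  push_neg at hQ0
  -- the displacement space D
  set D : Submodule K V := LinearMap.range (σ.toLinearMap - LinearMap.id) with hD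
  have hDmem : ∀ v : V, σ v - v ∈ D := fun v => ⟨v, by simp⟩
  have hDform : ∀ d ∈ D, ∃ v : V, σ v - v = d := by
    rintro d ⟨v, rfl⟩; exact ⟨v, by simp⟩
  have hQD : ∀ d ∈ D, Q d = 0 := by
    intro d hd; obtain ⟨v, rfl⟩ := hDform d hd; exact hQ0 v
  have hBD : ∀ d ∈ D, ∀ e ∈ D, polar ⇑Q d e = 0 := by
    intro d hd e he
    obtain ⟨v, rfl⟩ := hDform d hd
    obtain ⟨x, rfl⟩ := hDform e he
    have hsum : σ (v + x) - (v + x) = (σ v - v) + (σ x - x) := by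
      rw [map_add]; abel
    have h1 : Q ((σ v - v) + (σ x - x)) = 0 := by rw [← hsum]; exact hQ0 _
    rw [polar_expand] at h1
    rw [hQ0 v, hQ0 x] at h1
    linear_combination h1
  have hBK : ∀ d ∈ D, ∀ k : V, σ k = k → polar ⇑Q d k = 0 := by
    intro d hd k hk
    obtain ⟨v, rfl⟩ := hDform d hd
    have : polar ⇑Q (σ v) k = polar ⇑Q v k := by
      conv_lhs => rw [← hk, hBiso]
    rw [QuadraticMap.polar_sub_left, this, sub_self]
  have hDL : D ≤ L := by rintro d ⟨v, rfl⟩; simpa using hσL v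
  by_cases hLD : L ≤ D
  · rcases hnotTangent with h1 | ⟨hLG, haniso⟩
    · -- L is totally isotropic, so L ≤ L^⊥ = G, contradicting L ⊓ G = ⊥
      have hBL : ∀ l ∈ L, ∀ l' ∈ L, polar ⇑Q l l' = 0 :=
        fun l hl l' hl' => hBD l (hLD hl) l' (hLD hl')
      -- orthogonal of L equals G
      set B : LinearMap.BilinForm K V := QuadraticMap.polarBilin Q with hB
      have hBapp : ∀ x y : V, B x y = polar ⇑Q x y := fun x y => rfl
      have hBnd : B.Nondegenerate := ⟨fun m h => hnd m fun w => h w,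
    fun m h => hnd m fun w => by rw [QuadraticMap.polar_comm]; exact h w⟩
      have hBrefl : B.IsRefl := fun x y h => by
        rw [hBapp, QuadraticMap.polar_comm]; exact h
      have hGle : G ≤ B.orthogonal L := by
        intro g hg
        rw [LinearMap.BilinForm.mem_orthogonal_iff]
        intro l hl
        rw [hBapp, QuadraticMap.polar_comm]
        exact (hLmem l).mp hl g hg
      have hfrOL : finrank K (B.orthogonal L) = finrank K G := by
        rw [LinearMap.BilinForm.finrank_orthogonal hBnd, hfrL]
        omega
      have hOL : B.orthogonal L = G :=
        (Submodule.eq_of_le_of_finrank_le hGle (le_of_eq hfrOL)).symm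
      have hLG' : L ≤ G := by
        rw [← hOL]
        intro l hl
        rw [LinearMap.BilinForm.mem_orthogonal_iff]
        intro l' hl'
        rw [hBapp]
        exact hBL l' hl' l hl
      have hLbot : L = ⊥ := by
        have h2 : L ≤ L ⊓ G := le_inf le_rfl hLG'
        rw [h1] at h2
        exact le_bot_iff.mp h2
      rw [hLbot] at hfrL
      simp at hfrL
    · obtain ⟨l, hlL, hl0⟩ := Submodule.exists_mem_ne_zero_of_ne_bot (p := L)
        (by intro h; rw [h] at hfrL; simp at hfrL)
      exact haniso l hlL hl0 (hQD l (hLD hlL))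
  · -- D is a line spanned by u
    have hDlt : D < L := lt_of_le_of_ne hDL (fun h => hLD (le_of_eq h.symm))
    have hfrD : finrank K D < 2 := hfrL ▸ Submodule.finrank_lt_finrank_of_lt hDlt
    obtain ⟨v₀, hv₀⟩ := hne
    set u := σ v₀ - v₀ with hu
    have hu0 : u ≠ 0 := sub_ne_zero.mpr hv₀
    have huD : u ∈ D := hDmem v₀
    have hDspan : D ≤ K ∙ u := by
      have h1 : (K ∙ u) ≤ D := (Submodule.span_singleton_le_iff_mem u D).mpr huD
      have h2 : finrank K (K ∙ u) = 1 := finrank_span_singleton hu0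
      exact le_of_eq (Submodule.eq_of_le_of_finrank_le h1 (by omega)).symm
    obtain ⟨w, hw⟩ : ∃ w, polar ⇑Q u w ≠ 0 := by
      by_contra h; push_neg at h; exact hu0 (hnd u h)
    obtain ⟨t, ht⟩ := Submodule.mem_span_singleton.mp (hDspan (hDmem w))
    -- t • u = σ w - w
    have hpol0 : polar ⇑Q w (σ w - w) = 0 := by
      have hexp : Q (σ w) = Q w + Q (σ w - w) + polar ⇑Q w (σ w - w) := by
        conv_lhs => rw [show σ w = w + (σ w - w) by abel]
        rw [polar_expand]
      rw [hiso w, hQ0 w] at hexp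
      linear_combination -hexp
    have htz : t = 0 := by
      rw [← ht, QuadraticMap.polar_smul_right, smul_eq_mul, QuadraticMap.polar_comm] at hpol0
      rcases mul_eq_zero.mp hpol0 with h' | h'
      · exact h'
      · exact absurd h' hw
    have hfixw : σ w = w := by
      have : σ w - w = 0 := by rw [← ht, htz, zero_smul]
      exact sub_eq_zero.mp this
    exact hw (hBK u huD w hfixw)

end Crux

/-- Let `Q` be a quadratic form of Witt index at least `1` on a finite
dimensional `K`-vector space `V`, with nondegenerate polar form.  Let `G` be a subspace of
codimension `2` with `L := G^⊥`, and suppose the line `L` is not a tangent line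
(`L ∩ G = 0`, or `L ⊆ G` and `Q` is anisotropic on `L`).  Then every similitude `φ` of `Q`
fixing the subhyperplane `PG(G)` pointwise is, up to a nonzero scalar, the product of two
reflections (automorphisms preserving the quadric and fixing a projective hyperplane
pointwise). -/
theorem similitude_fixing_subhyperplane_is_product_of_two_reflections
    {K V : Type*} [Field K] [AddCommGroup V] [Module K V] [FiniteDimensional K V]
    (Q : QuadraticForm K V)
    (hnd : ∀ v : V, (∀ w : V, QuadraticMap.polar (⇑Q) v w = 0) → v = 0)
    (hisotropic : ∃ v : V, v ≠ 0 ∧ Q v = 0)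
    (G : Submodule K V) (hG : Module.finrank K G + 2 = Module.finrank K V)
    (L : Submodule K V) (hL : L = polarPerp Q G)
    (hnotTangent : L ⊓ G = ⊥ ∨ (L ≤ G ∧ ∀ v ∈ L, v ≠ 0 → Q v ≠ 0))
    (φ : V ≃ₗ[K] V)
    (hsim : ∃ lam : K, lam ≠ 0 ∧ ∀ v : V, Q (φ v) = lam * Q v)
    (hfixG : ∀ g ∈ G, ∃ a : K, φ g = a • g) :
    ∃ (H₁ H₂ : Submodule K V) (ψ₁ ψ₂ : V ≃ₗ[K] V) (c : K),
      Module.finrank K H₁ + 1 = Module.finrank K V ∧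
      Module.finrank K H₂ + 1 = Module.finrank K V ∧
      (∀ v : V, Q v = 0 ↔ Q (ψ₁ v) = 0) ∧
      (∀ v : V, Q v = 0 ↔ Q (ψ₂ v) = 0) ∧
      (∀ h ∈ H₁, ∃ a : K, ψ₁ h = a • h) ∧
      (∀ h ∈ H₂, ∃ a : K, ψ₂ h = a • h) ∧
      c ≠ 0 ∧
      (∀ v : V, φ v = c • ψ₂ (ψ₁ v)) := by
  classical
  obtain ⟨lam, hlam0, hlam⟩ := hsim
  set B : LinearMap.BilinForm K V := QuadraticMap.polarBilin Q with hB
  have hBnd : B.Nondegenerate := ⟨fun m h => hnd m fun w => h w,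
    fun m h => hnd m fun w => by rw [QuadraticMap.polar_comm]; exact h w⟩
  have hBrefl : B.IsRefl := fun x y h => by
    rw [show (B y) x = polar ⇑Q y x from rfl, QuadraticMap.polar_comm]; exact h
  have hLmem : ∀ v : V, v ∈ L ↔ ∀ g ∈ G, polar ⇑Q g v = 0 := by
    intro v
    rw [hL]
    unfold polarPerp
    rw [← hB, LinearMap.BilinForm.mem_orthogonal_iff]
    constructor
    · intro h g hg; exact h g hg
    · intro h g hg; exact h g hg
  have hfrL : Module.finrank K L = 2 := by
    have h1 := LinearMap.BilinForm.finrank_orthogonal hBnd G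
    rw [hL]
    unfold polarPerp
    rw [← hB, h1]
    omega
  by_cases hdim : Module.finrank K G = 0
  · -- dim V = 2 : hyperbolic plane case
    have hV2 : Module.finrank K V = 2 := by omega
    obtain ⟨u, hu0, hQu⟩ := hisotropic
    have hpuu : polar ⇑Q u u = 0 := by rw [polar_self_eq, hQu, mul_zero]
    obtain ⟨w₀, hw₀⟩ : ∃ w, polar ⇑Q u w ≠ 0 := by
      by_contra h; push_neg at h; exact hu0 (hnd u h)
    have hstep : ∀ w₁ : V, polar ⇑Q u w₁ = 1 →
        polar ⇑Q u (w₁ - Q w₁ • u) = 1 ∧ Q (w₁ - Q w₁ • u) = 0 := by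
      intro w₁ h1
      constructor
      · rw [QuadraticMap.polar_sub_right, h1, QuadraticMap.polar_smul_right, hpuu, smul_zero,
          sub_zero]
      · rw [sub_eq_add_neg, ← neg_smul, polar_expand, QuadraticMap.map_smul, smul_eq_mul,
          hQu, QuadraticMap.polar_smul_right, smul_eq_mul, QuadraticMap.polar_comm, h1]
        ring
    have hpuw₁' : polar ⇑Q u ((polar ⇑Q u w₀)⁻¹ • w₀) = 1 := by
      rw [QuadraticMap.polar_smul_right, smul_eq_mul, inv_mul_cancel₀ hw₀]
    obtain ⟨w, hpuw, hQw⟩ : ∃ w : V, polar ⇑Q u w = 1 ∧ Q w = 0 :=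
      ⟨_, (hstep _ hpuw₁').1, (hstep _ hpuw₁').2⟩
    have hw0 : w ≠ 0 := by
      intro h
      rw [h, QuadraticMap.polar_zero_right] at hpuw
      exact zero_ne_one hpuw
    have li : LinearIndependent K ![u, w] := by
      rw [LinearIndependent.pair_iff' hu0]
      intro a ha
      have h1 : polar ⇑Q u w = 0 := by
        rw [← ha, QuadraticMap.polar_smul_right, hpuu, smul_zero]
      rw [hpuw] at h1
      exact one_ne_zero h1
    have hspan : ∀ v : V, ∃ x y : K, v = x • u + y • w := by
      have hsp : Submodule.span K (Set.range ![u, w]) = ⊤ := by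
        apply Submodule.eq_top_of_finrank_eq
        rw [finrank_span_eq_card li, hV2]
        simp
      intro v
      have hv : v ∈ Submodule.span K (Set.range ![u, w]) := by rw [hsp]; trivial
      rw [mem_span_range_iff_exists_fun] at hv
      obtain ⟨c, hc⟩ := hv
      exact ⟨c 0, c 1, by simpa [Fin.sum_univ_two] using hc.symm⟩
    have hpolv : ∀ x y : K, polar ⇑Q u (x • u + y • w) = y := by
      intro x y
      rw [QuadraticMap.polar_add_right, QuadraticMap.polar_smul_right,
        QuadraticMap.polar_smul_right, hpuu, hpuw, smul_eq_mul, smul_eq_mul]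
      ring
    have hQxy : ∀ x y : K, Q (x • u + y • w) = x * y := by
      intro x y
      rw [polar_expand, QuadraticMap.map_smul, QuadraticMap.map_smul,
        QuadraticMap.polar_smul_left, QuadraticMap.polar_smul_right, hQu, hQw, hpuw]
      simp only [smul_eq_mul]
      ring
    have hQdiag : ∀ (γ : K) (v : V), Q (diagMap Q u w γ v) = γ * Q v := by
      intro γ v
      obtain ⟨x, y, rfl⟩ := hspan v
      rw [diagMap_apply, hpolv, add_assoc, ← add_smul, hQxy, hQxy]
      ring
    have hdiagfix : ∀ (γ : K), ∀ h ∈ (K ∙ u), diagMap Q u w γ h = h := by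
      intro γ h hh
      obtain ⟨s, rfl⟩ := Submodule.mem_span_singleton.mp hh
      rw [diagMap_apply, QuadraticMap.polar_smul_right, hpuu, smul_zero, mul_zero, zero_smul,
        add_zero]
    have hfru : Module.finrank K (K ∙ u) + 1 = Module.finrank K V := by
      rw [finrank_span_singleton hu0, hV2]
    have caseA : ∀ (φ' : V ≃ₗ[K] V), (∀ v : V, Q (φ' v) = lam * Q v) →
        ∀ α : K, α ≠ 0 → φ' u = α • u →
        ∃ γ : K, γ ≠ 0 ∧ ∀ v : V, φ' v = α • diagMap Q u w γ v := by
      intro φ' hφ' α hα hφu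
      obtain ⟨x₂, y₂, hw₂⟩ := hspan (φ' w)
      have hQφw : x₂ * y₂ = 0 := by
        have h1 := hφ' w
        rw [hw₂, hQxy, hQw, mul_zero] at h1
        exact h1
      have hy₂ : y₂ ≠ 0 := by
        intro h0
        rw [h0, zero_smul, add_zero] at hw₂
        have h1 : φ' (α • w) = φ' (x₂ • u) := by
          rw [_root_.map_smul, _root_.map_smul, hw₂, hφu, smul_smul, smul_smul, mul_comm]
        have h2 : α • w = x₂ • u := φ'.injective h1
        have h3 := li
        rw [LinearIndependent.pair_iff' hu0] at h3
        refine h3 (α⁻¹ * x₂) ?_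
        rw [mul_smul, ← h2, smul_smul, inv_mul_cancel₀ hα, one_smul]
      have hx₂ : x₂ = 0 := by
        rcases mul_eq_zero.mp hQφw with h | h
        · exact h
        · exact absurd h hy₂
      refine ⟨y₂ / α, div_ne_zero hy₂ hα, ?_⟩
      intro v
      obtain ⟨x, y, rfl⟩ := hspan v
      rw [map_add, _root_.map_smul, _root_.map_smul, hφu, hw₂, hx₂, zero_smul, zero_add,
        diagMap_apply, hpolv]
      match_scalars <;> field_simp <;> ring
    obtain ⟨x₁, y₁, hw₁c⟩ := hspan (φ u)
    have hQφu : x₁ * y₁ = 0 := by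
      have h1 := hlam u
      rw [hw₁c, hQxy, hQu, mul_zero] at h1
      exact h1
    rcases mul_eq_zero.mp hQφu with hx₁ | hy₁
    · -- φ u = y₁ • w : swap case
      have hφu : φ u = y₁ • w := by rw [hw₁c, hx₁, zero_smul, zero_add]
      have hy₁0 : y₁ ≠ 0 := by
        intro h
        rw [h, zero_smul] at hφu
        exact hu0 (by simpa using φ.injective (by rw [hφu, map_zero]))
      have hQz : Q (u - w) = -1 := by
        rw [sub_eq_add_neg, polar_expand, QuadraticMap.map_neg, hQu, hQw,
          QuadraticMap.polar_neg_right, hpuw]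
        ring
      have hQz0 : Q (u - w) ≠ 0 := by rw [hQz]; exact neg_ne_zero.mpr one_ne_zero
      have hz0 : u - w ≠ 0 := by
        intro h
        rw [h, map_zero] at hQz
        exact one_ne_zero (neg_eq_zero.mp hQz.symm)
      have hpww : polar ⇑Q w w = 0 := by rw [polar_self_eq, hQw, mul_zero]
      have hpzu : polar ⇑Q (u - w) u = -1 := by
        rw [QuadraticMap.polar_sub_left, hpuu, QuadraticMap.polar_comm, hpuw]
        ring
      have hpzw : polar ⇑Q (u - w) w = 1 := by
        rw [QuadraticMap.polar_sub_left, hpuw, hpww]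
        ring
      have hτu : reflEquiv Q hQz0 u = w := by
        rw [reflEquiv_apply, hQz, hpzu, show ((-1 : K))⁻¹ * (-1) = 1 by norm_num, one_smul,
          sub_sub_cancel]
      have hτw : reflEquiv Q hQz0 w = u := by
        rw [reflEquiv_apply, hQz, hpzw, show ((-1 : K))⁻¹ * 1 = -1 by norm_num, neg_smul,
          sub_neg_eq_add]
        module
      set φ' : V ≃ₗ[K] V := φ.trans (reflEquiv Q hQz0) with hφ'def
      have hφ'sim : ∀ v : V, Q (φ' v) = lam * Q v := by
        intro v
        rw [show φ' v = reflEquiv Q hQz0 (φ v) from rfl, reflEquiv_isometry, hlam]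
      have hφ'u : φ' u = y₁ • u := by
        show reflEquiv Q hQz0 (φ u) = y₁ • u
        rw [hφu, _root_.map_smul, hτw]
      obtain ⟨γ, hγ0, hγ⟩ := caseA φ' hφ'sim y₁ hy₁0 hφ'u
      have hφv : ∀ v : V, φ v = y₁ • reflEquiv Q hQz0 (diagMap Q u w γ v) := by
        intro v
        have h1 : reflEquiv Q hQz0 (φ' v) = φ v := reflEquiv_invol Q hQz0 (φ v)
        rw [← h1, hγ v, _root_.map_smul]
      refine ⟨K ∙ u, LinearMap.ker (QuadraticMap.polarBilin Q (u - w)),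
        diagEquiv Q hpuw hpuu hγ0, reflEquiv Q hQz0, y₁, hfru,
        ker_polar_finrank Q hnd hz0, ?_, ?_, ?_, ?_, hy₁0, ?_⟩
      · intro v
        rw [diagEquiv_apply, hQdiag]
        constructor
        · intro h; rw [h, mul_zero]
        · intro h; rcases mul_eq_zero.mp h with h' | h'
          · exact absurd h' hγ0
          · exact h'
      · intro v
        rw [reflEquiv_isometry]
      · intro h hh
        exact ⟨1, by rw [one_smul, diagEquiv_apply, hdiagfix γ h hh]⟩
      · intro h hh
        refine ⟨1, by rw [one_smul]; exact reflEquiv_fix Q hQz0 (LinearMap.mem_ker.mp hh)⟩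
      · intro v
        rw [diagEquiv_apply]
        exact hφv v
    · -- φ u = x₁ • u : diagonal case
      have hφu : φ u = x₁ • u := by rw [hw₁c, hy₁, zero_smul, add_zero]
      have hx₁0 : x₁ ≠ 0 := by
        intro h
        rw [h, zero_smul] at hφu
        exact hu0 (by simpa using φ.injective (by rw [hφu, map_zero]))
      obtain ⟨γ, hγ0, hγ⟩ := caseA φ hlam x₁ hx₁0 hφu
      refine ⟨K ∙ u, K ∙ u, diagEquiv Q hpuw hpuu hγ0, LinearEquiv.refl K V, x₁, hfru, hfru,
        ?_, ?_, ?_, ?_, hx₁0, ?_⟩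
      · intro v
        rw [diagEquiv_apply, hQdiag]
        constructor
        · intro h; rw [h, mul_zero]
        · intro h; rcases mul_eq_zero.mp h with h' | h'
          · exact absurd h' hγ0
          · exact h'
      · intro v; simp
      · intro h hh
        exact ⟨1, by rw [one_smul, diagEquiv_apply, hdiagfix γ h hh]⟩
      · intro h _
        exact ⟨1, by rw [one_smul]; simp⟩
      · intro v
        simp only [LinearEquiv.refl_apply]
        rw [diagEquiv_apply]
        exact hγ v
  · -- dim V ≥ 3
    have hGne : G ≠ ⊥ := by
      intro h
      rw [h, finrank_bot] at hdim
      exact hdim rfl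
    obtain ⟨g₀, hg₀G, hg₀⟩ := Submodule.exists_mem_ne_zero_of_ne_bot hGne
    have hQG : ∃ g ∈ G, Q g ≠ 0 := by
      by_contra h
      push_neg at h
      have hBG : ∀ g ∈ G, ∀ g' ∈ G, polar ⇑Q g g' = 0 := by
        intro g hg g' hg'
        have h1 := polar_expand Q g g'
        rw [h g hg, h g' hg', h (g + g') (G.add_mem hg hg')] at h1
        linear_combination -h1
      have hGL : G ≤ L := by
        intro g hg
        rw [hLmem]
        intro g' hg'
        exact hBG g' hg' g hg
      rcases hnotTangent with h1 | ⟨hLG, haniso⟩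
      · have h2 : G ≤ ⊥ := by rw [← h1]; exact le_inf hGL le_rfl
        exact hg₀ (by simpa using h2 hg₀G)
      · exact (haniso g₀ (hGL hg₀G) hg₀) (h g₀ hg₀G)
    obtain ⟨a, ha⟩ := exists_scalar_of_fix G φ hfixG
    have ha0 : a ≠ 0 := by
      intro h0
      have h1 := ha g₀ hg₀G
      rw [h0, zero_smul] at h1
      exact hg₀ (by simpa using φ.injective (by rw [h1, map_zero]))
    set σ : V ≃ₗ[K] V := φ.trans (LinearEquiv.smulOfNeZero K V a⁻¹ (inv_ne_zero ha0)) with hσdef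
    have hσ : ∀ v : V, σ v = a⁻¹ • φ v := fun v => rfl
    have hfixσ : ∀ g ∈ G, σ g = g := by
      intro g hg
      rw [hσ, ha g hg, smul_smul, inv_mul_cancel₀ ha0, one_smul]
    have hQσ : ∀ v : V, Q (σ v) = (a⁻¹ * a⁻¹ * lam) * Q v := by
      intro v
      rw [hσ, QuadraticMap.map_smul, smul_eq_mul, hlam]
      ring
    obtain ⟨g₁, hg₁G, hQg₁⟩ := hQG
    have hμ : a⁻¹ * a⁻¹ * lam = 1 := by
      have h1 := hQσ g₁
      rw [hfixσ g₁ hg₁G] at h1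
      have h2 : (a⁻¹ * a⁻¹ * lam) * Q g₁ = 1 * Q g₁ := by rw [one_mul, ← h1]
      exact mul_right_cancel₀ hQg₁ h2
    have hiso : ∀ v : V, Q (σ v) = Q v := fun v => by rw [hQσ, hμ, one_mul]
    have hBiso : ∀ v x : V, polar ⇑Q (σ v) (σ x) = polar ⇑Q v x := by
      intro v x
      simp only [QuadraticMap.polar, ← map_add, hiso]
    have hσL : ∀ v : V, σ v - v ∈ L := by
      intro v
      rw [hLmem]
      intro g hg
      have h1 : polar ⇑Q g (σ v) = polar ⇑Q g v := by
        conv_lhs => rw [← hfixσ g hg]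
        rw [hBiso]
      rw [QuadraticMap.polar_sub_right, h1, sub_self]
    by_cases hid : ∀ v : V, σ v = v
    · obtain ⟨v₀, hv₀0, _⟩ := hisotropic
      refine ⟨LinearMap.ker (QuadraticMap.polarBilin Q v₀),
        LinearMap.ker (QuadraticMap.polarBilin Q v₀),
        LinearEquiv.refl K V, LinearEquiv.refl K V, a,
        ker_polar_finrank Q hnd hv₀0, ker_polar_finrank Q hnd hv₀0,
        fun v => by simp, fun v => by simp,
        fun h _ => ⟨1, by simp⟩, fun h _ => ⟨1, by simp⟩, ha0, ?_⟩
      intro v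
      have h1 := hid v
      rw [hσ] at h1
      simp only [LinearEquiv.refl_apply]
      conv_rhs => rw [← h1]
      rw [smul_smul, mul_inv_cancel₀ ha0, one_smul]
    · push_neg at hid
      obtain ⟨v, hv⟩ := exists_nonisotropic_displacement Q hnd G hG L hLmem hfrL hnotTangent
        σ hiso hBiso hσL hid
      have hvmoved : σ v ≠ v := by
        intro h
        apply hv
        rw [h, sub_self, map_zero]
      have hv0 : v ≠ 0 := by
        intro h
        apply hvmoved
        rw [h, map_zero]
      have hvG : v ∉ G := fun h => hvmoved (hfixσ v h)
      have hx0 : σ v - v ≠ 0 := sub_ne_zero.mpr hvmoved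
      have hxG : ∀ g ∈ G, polar ⇑Q (σ v - v) g = 0 := by
        intro g hg
        rw [QuadraticMap.polar_sub_left]
        have h1 : polar ⇑Q (σ v) g = polar ⇑Q v g := by
          conv_lhs => rw [← hfixσ g hg]
          rw [hBiso]
        rw [h1, sub_self]
      have hτσv : reflEquiv Q hv (σ v) = v := by
        have hpxσv : polar ⇑Q (σ v - v) (σ v) = Q (σ v - v) := by
          have hRHS : Q (σ v - v) = Q (σ v) + Q v + (- polar ⇑Q (σ v) v) := by
            rw [sub_eq_add_neg, polar_expand, QuadraticMap.map_neg,
              QuadraticMap.polar_neg_right]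
          rw [QuadraticMap.polar_sub_left, polar_self_eq, hRHS, hiso,
            QuadraticMap.polar_comm (⇑Q) v (σ v)]
          ring
        rw [reflEquiv_apply, hpxσv, inv_mul_cancel₀ hv, one_smul]
        abel
      have hτfixG : ∀ g ∈ G, reflEquiv Q hv g = g := fun g hg =>
        reflEquiv_fix Q hv (hxG g hg)
      set H₁ : Submodule K V := G ⊔ (K ∙ v) with hH₁
      have hfrH₁ : Module.finrank K H₁ + 1 = Module.finrank K V := by
        have hinf : G ⊓ (K ∙ v) = ⊥ := by
          rw [eq_bot_iff]
          rintro y ⟨hyG, hysp⟩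
          obtain ⟨t, rfl⟩ := Submodule.mem_span_singleton.mp hysp
          rcases eq_or_ne t 0 with ht | ht
          · rw [ht, zero_smul]; exact Submodule.zero_mem ⊥
          · exfalso
            apply hvG
            have : v = t⁻¹ • (t • v) := by rw [smul_smul, inv_mul_cancel₀ ht, one_smul]
            rw [this]
            exact G.smul_mem _ hyG
        have h2 := Submodule.finrank_sup_add_finrank_inf_eq G (K ∙ v)
        rw [hinf, finrank_bot, finrank_span_singleton hv0] at h2
        rw [hH₁]
        omega
      have hψ₁fix : ∀ h ∈ H₁, reflEquiv Q hv (σ h) = h := by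
        intro h hh
        obtain ⟨g, hg, z, hz, rfl⟩ := Submodule.mem_sup.mp hh
        obtain ⟨t, rfl⟩ := Submodule.mem_span_singleton.mp hz
        rw [map_add, _root_.map_smul, hfixσ g hg, map_add, _root_.map_smul, hτσv,
          hτfixG g hg]
      refine ⟨H₁, LinearMap.ker (QuadraticMap.polarBilin Q (σ v - v)),
        σ.trans (reflEquiv Q hv), reflEquiv Q hv, a, hfrH₁,
        ker_polar_finrank Q hnd hx0, ?_, ?_, ?_, ?_, ha0, ?_⟩
      · intro x
        rw [show (σ.trans (reflEquiv Q hv)) x = reflEquiv Q hv (σ x) from rfl,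
          reflEquiv_isometry, hiso]
      · intro x
        rw [reflEquiv_isometry]
      · intro h hh
        exact ⟨1, by rw [one_smul]; exact hψ₁fix h hh⟩
      · intro h hh
        exact ⟨1, by rw [one_smul]; exact reflEquiv_fix Q hv (LinearMap.mem_ker.mp hh)⟩
      · intro x
        show φ x = a • reflEquiv Q hv (reflEquiv Q hv (σ x))
        rw [reflEquiv_invol, hσ, smul_smul, mul_inv_cancel₀ ha0, one_smul]
end

section
/- Let (P, 𝓛) be a thick generalized quadrangle in which every line contains at least 4 points. Let p₁, p₂ ∈ P and let S := {q ∈ P | ¬(q ⊥ p₁) and ¬(q ⊥ p₂)} be the set of points opposite both p₁ and p₂. Then the collinearity graph on S is connected: for all q, q' ∈ S there exist n ∈ ℕ and points x₀, x₁, …, x_n ∈ S with x₀ = q, x_n = q', and xᵢ ⊥ xᵢ₊₁ for every i < n. -/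
/-- Two points of a point-line geometry `(P, 𝓛)` are collinear if some line contains both. -/
def GeomCollinear {P : Type*} (𝓛 : Set (Set P)) (p q : P) : Prop :=
  ∃ l ∈ 𝓛, p ∈ l ∧ q ∈ l

section Aux

variable {P : Type*} {𝓛 : Set (Set P)}

private lemma gsym {p q : P} (h : GeomCollinear 𝓛 p q) : GeomCollinear 𝓛 q p := by
  obtain ⟨l, hl, hp, hq⟩ := h
  exact ⟨l, hl, hq, hp⟩

private lemma gmem {l : Set P} (hl : l ∈ 𝓛) {p q : P} (hp : p ∈ l) (hq : q ∈ l) :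
    GeomCollinear 𝓛 p q := ⟨l, hl, hp, hq⟩

private lemma encard_le3' {α : Type*} (a b c : α) : ({a,b,c} : Set α).encard ≤ 3 := by
  calc ({a,b,c} : Set α).encard ≤ ({b,c} : Set α).encard + 1 := Set.encard_insert_le _ _
    _ ≤ (({c} : Set α).encard + 1) + 1 := add_le_add (Set.encard_insert_le _ _) le_rfl
    _ = 3 := by rw [Set.encard_singleton]; rfl

private lemma encard_four_le {α : Type*} {s : Set α} (h : 4 ≤ s.encard) (a b c : α) :
    ∃ d ∈ s, d ≠ a ∧ d ≠ b ∧ d ≠ c := by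
  by_contra hcon
  push_neg at hcon
  have hsub : s ⊆ {a, b, c} := by
    intro t ht
    rcases eq_or_ne t a with rfl | h1
    · exact Set.mem_insert _ _
    rcases eq_or_ne t b with rfl | h2
    · exact Set.mem_insert_of_mem _ (Set.mem_insert _ _)
    · simp [hcon t ht h1 h2]
  have h2 : (4 : ℕ∞) ≤ 3 := le_trans h (le_trans (Set.encard_mono hsub) (encard_le3' a b c))
  norm_num at h2

private lemma encard_three_le {α : Type*} {s : Set α} (h : 3 ≤ s.encard) (a b : α) :
    ∃ c ∈ s, c ≠ a ∧ c ≠ b := by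
  by_contra hcon
  push_neg at hcon
  have hsub : s ⊆ {a, b} := by
    intro t ht
    rcases eq_or_ne t a with rfl | h1
    · exact Set.mem_insert _ _
    · simp [hcon t ht h1]
  have hle : ({a,b} : Set α).encard ≤ 2 := by
    calc ({a,b} : Set α).encard ≤ ({b} : Set α).encard + 1 := Set.encard_insert_le _ _
      _ = 2 := by rw [Set.encard_singleton]; rfl
  have h2 : (3 : ℕ∞) ≤ 2 := le_trans h (le_trans (Set.encard_mono hsub) hle)
  norm_num at h2

/-- Core step (asymmetric version): if `x, y` are opposite points both opposite `p₁` and `p₂`,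
`M` is a line through `x`, `z ∈ M` is collinear with `y` and with `p₁`, and no point `m` of `M`
opposite both `p₁, p₂` has a common neighbour with `y` that is opposite both `p₁, p₂`, then
we get a contradiction. -/
private lemma core'
    (hpoint3 : ∀ p : P, 3 ≤ {l ∈ 𝓛 | p ∈ l}.encard)
    (hunique : ∀ p q : P, p ≠ q → ∀ l₁ ∈ 𝓛, ∀ l₂ ∈ 𝓛,
      p ∈ l₁ → q ∈ l₁ → p ∈ l₂ → q ∈ l₂ → l₁ = l₂)
    (hGQ : ∀ p : P, ∀ l ∈ 𝓛, p ∉ l → ∃! q : P, q ∈ l ∧ GeomCollinear 𝓛 p q)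
    (hline4 : ∀ l ∈ 𝓛, 4 ≤ l.encard)
    (p₁ p₂ x y : P)
    (hx1 : ¬ GeomCollinear 𝓛 x p₁) (hx2 : ¬ GeomCollinear 𝓛 x p₂)
    (hy1 : ¬ GeomCollinear 𝓛 y p₁) (hy2 : ¬ GeomCollinear 𝓛 y p₂)
    (hxy : ¬ GeomCollinear 𝓛 x y)
    (M : Set P) (hM : M ∈ 𝓛) (hxM : x ∈ M)
    (hbad : ∀ m ∈ M, ¬ GeomCollinear 𝓛 m p₁ → ¬ GeomCollinear 𝓛 m p₂ →
      ∀ w, GeomCollinear 𝓛 w m → GeomCollinear 𝓛 w y →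
        GeomCollinear 𝓛 w p₁ ∨ GeomCollinear 𝓛 w p₂)
    (z : P) (hzM : z ∈ M) (hzy : GeomCollinear 𝓛 z y) (hz1 : GeomCollinear 𝓛 z p₁) :
    False := by
  have hyM : y ∉ M := fun h => hxy (gmem hM hxM h)
  have hp1M : p₁ ∉ M := fun h => hx1 (gmem hM hxM h)
  have hp2M : p₂ ∉ M := fun h => hx2 (gmem hM hxM h)
  -- projection of y onto M is z
  have hproj_yM : ∀ w ∈ M, GeomCollinear 𝓛 y w → w = z := by
    obtain ⟨b, _, hbu⟩ := hGQ y M hM hyM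
    intro w hw hc
    exact (hbu w ⟨hw, hc⟩).trans (hbu z ⟨hzM, gsym hzy⟩).symm
  -- projection of p₁ onto M is z
  have hproj_p1M : ∀ w ∈ M, GeomCollinear 𝓛 p₁ w → w = z := by
    obtain ⟨b, _, hbu⟩ := hGQ p₁ M hM hp1M
    intro w hw hc
    exact (hbu w ⟨hw, hc⟩).trans (hbu z ⟨hzM, gsym hz1⟩).symm
  have hyz : y ≠ z := fun h => hyM (h ▸ hzM)
  -- a line through y avoiding z
  have hLex : ∃ L, (L ∈ 𝓛 ∧ y ∈ L) ∧ z ∉ L := by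
    obtain ⟨l₁, hl₁, -, -⟩ := encard_three_le (hpoint3 y) ∅ ∅
    obtain ⟨l₂, hl₂, hne, -⟩ := encard_three_le (hpoint3 y) l₁ l₁
    by_cases hz1' : z ∈ l₁
    · refine ⟨l₂, ⟨hl₂.1, hl₂.2⟩, fun hz2' => hne ?_⟩
      exact (hunique y z hyz l₂ hl₂.1 l₁ hl₁.1 hl₂.2 hz2' hl₁.2 hz1').symm ▸
        (hunique y z hyz l₁ hl₁.1 l₁ hl₁.1 hl₁.2 hz1' hl₁.2 hz1')
    · exact ⟨l₁, ⟨hl₁.1, hl₁.2⟩, hz1'⟩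
  obtain ⟨L, ⟨hL, hyL⟩, hzL⟩ := hLex
  -- points of M are not on L
  have hML : ∀ h ∈ M, h ∉ L := by
    intro h hhM hhL
    exact hzL ((hproj_yM h hhM (gmem hL hyL hhL)) ▸ hhL)
  have hp1L : p₁ ∉ L := fun h => hy1 (gmem hL hyL h)
  have hp2L : p₂ ∉ L := fun h => hy2 (gmem hL hyL h)
  obtain ⟨c₁, ⟨hc₁L, hc₁⟩, hc₁u⟩ := hGQ p₁ L hL hp1L
  obtain ⟨c₂, ⟨hc₂L, hc₂⟩, hc₂u⟩ := hGQ p₂ L hL hp2L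
  -- Step F4 : z is NOT collinear with p₂
  have hz2 : ¬ GeomCollinear 𝓛 z p₂ := by
    intro hzp2
    have hproj_p2M : ∀ w ∈ M, GeomCollinear 𝓛 p₂ w → w = z := by
      obtain ⟨b, _, hbu⟩ := hGQ p₂ M hM hp2M
      intro w hw hc
      exact (hbu w ⟨hw, hc⟩).trans (hbu z ⟨hzM, gsym hzp2⟩).symm
    have hMS : ∀ m ∈ M, m ≠ z → ¬ GeomCollinear 𝓛 m p₁ ∧ ¬ GeomCollinear 𝓛 m p₂ := by
      intro m hm hne
      exact ⟨fun h => hne (hproj_p1M m hm (gsym h)), fun h => hne (hproj_p2M m hm (gsym h))⟩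
    -- three distinct points of M different from z
    obtain ⟨m₀, hm₀M, hm₀z, -, -⟩ := encard_four_le (hline4 M hM) z z z
    obtain ⟨m₁, hm₁M, hm₁z, hm₁m₀, -⟩ := encard_four_le (hline4 M hM) z m₀ m₀
    obtain ⟨m₂, hm₂M, hm₂z, hm₂m₀, hm₂m₁⟩ := encard_four_le (hline4 M hM) z m₀ m₁
    -- projections onto L land in {c₁, c₂} and are "injective"
    have key : ∀ m ∈ M, m ≠ z → ∃ w ∈ L, GeomCollinear 𝓛 m w ∧ (w = c₁ ∨ w = c₂) ∧
        (∀ m' ∈ M, GeomCollinear 𝓛 m' w → m' = m) := by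
      intro m hmM hmz
      obtain ⟨w, ⟨hwL, hw⟩, -⟩ := hGQ m L hL (hML m hmM)
      obtain ⟨h1, h2⟩ := hMS m hmM hmz
      have hw12 : GeomCollinear 𝓛 w p₁ ∨ GeomCollinear 𝓛 w p₂ :=
        hbad m hmM h1 h2 w (gsym hw) (gmem hL hwL hyL)
      refine ⟨w, hwL, hw, hw12.imp (fun h => hc₁u w ⟨hwL, gsym h⟩)
        (fun h => hc₂u w ⟨hwL, gsym h⟩), ?_⟩
      intro m' hm'M hm'w
      have hwM : w ∉ M := fun h => hML w h hwL
      obtain ⟨q, -, hqu⟩ := hGQ w M hM hwM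
      exact (hqu m' ⟨hm'M, gsym hm'w⟩).trans (hqu m ⟨hmM, gsym hw⟩).symm
    obtain ⟨w₀, hw₀L, hw₀, hw₀c, hu₀⟩ := key m₀ hm₀M hm₀z
    obtain ⟨w₁, hw₁L, hw₁, hw₁c, hu₁⟩ := key m₁ hm₁M hm₁z
    obtain ⟨w₂, hw₂L, hw₂, hw₂c, hu₂⟩ := key m₂ hm₂M hm₂z
    have h01 : w₀ ≠ w₁ := fun h => hm₁m₀.symm (hu₁ m₀ hm₀M (h ▸ hw₀))
    have h02 : w₀ ≠ w₂ := fun h => hm₂m₀.symm (hu₂ m₀ hm₀M (h ▸ hw₀))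
    have h12 : w₁ ≠ w₂ := fun h => hm₂m₁.symm (hu₂ m₁ hm₁M (h ▸ hw₁))
    rcases hw₀c with rfl | rfl <;> rcases hw₁c with h1' | h1' <;>
      rcases hw₂c with h2' | h2'
    · exact h01 h1'.symm
    · exact h01 h1'.symm
    · exact h02 h2'.symm
    · exact h12 (h1'.trans h2'.symm)
    · exact h12 (h1'.trans h2'.symm)
    · exact h02 h2'.symm
    · exact h01 h1'.symm
    · exact h01 h1'.symm
  -- a := projection of p₂ onto M
  obtain ⟨a, ⟨haM, hap2⟩, hau⟩ := hGQ p₂ M hM hp2M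
  have haz : a ≠ z := fun h => hz2 (gsym (h ▸ hap2))
  have hay : ¬ GeomCollinear 𝓛 a y := fun h => haz (hproj_yM a haM (gsym h))
  -- the line A through a and p₂
  obtain ⟨A, hA, hp2A, haA⟩ := hap2
  have hyA : y ∉ A := fun h => hy2 ⟨A, hA, h, hp2A⟩
  -- g := projection of y onto A
  obtain ⟨g, ⟨hgA, hyg⟩, -⟩ := hGQ y A hA hyA
  have hgp2 : GeomCollinear 𝓛 g p₂ := ⟨A, hA, hgA, hp2A⟩
  have hgacol : GeomCollinear 𝓛 g a := ⟨A, hA, hgA, haA⟩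
  -- L' := the line through y and g
  obtain ⟨L', hL', hyL', hgL'⟩ := hyg
  by_cases hzL' : z ∈ L'
  · -- then g = z, contradicting z not ⊥ p₂
    have haL' : a ∉ L' := fun h => hay ⟨L', hL', h, hyL'⟩
    obtain ⟨r, -, hru⟩ := hGQ a L' hL' haL'
    have h1 : g = z :=
      (hru g ⟨hgL', gsym hgacol⟩).trans (hru z ⟨hzL', gmem hM haM hzM⟩).symm
    exact hz2 (h1 ▸ hgp2)
  · have hp1L' : p₁ ∉ L' := fun h => hy1 ⟨_, hL', hyL', h⟩
    have hp2L' : p₂ ∉ L' := fun h => hy2 ⟨_, hL', hyL', h⟩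
    obtain ⟨c₁', ⟨hc₁L', hc₁'⟩, hc₁u'⟩ := hGQ p₁ L' hL' hp1L'
    obtain ⟨c₂', ⟨hc₂L', hc₂'⟩, hc₂u'⟩ := hGQ p₂ L' hL' hp2L'
    obtain ⟨u, huL, huc₁, huc₂, huy⟩ := encard_four_le (hline4 L' hL') c₁' c₂' y
    have hu1 : ¬ GeomCollinear 𝓛 u p₁ := fun h => huc₁ (hc₁u' u ⟨huL, gsym h⟩)
    have hu2 : ¬ GeomCollinear 𝓛 u p₂ := fun h => huc₂ (hc₂u' u ⟨huL, gsym h⟩)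
    have huM : u ∉ M := by
      intro h
      exact hzL' ((hproj_yM u h (gmem hL' hyL' huL)) ▸ huL)
    -- c := projection of u onto M
    obtain ⟨c, ⟨hcM, hcu⟩, -⟩ := hGQ u M hM huM
    have hc12 : GeomCollinear 𝓛 c p₁ ∨ GeomCollinear 𝓛 c p₂ := by
      by_contra hcon
      push_neg at hcon
      rcases hbad c hcM hcon.1 hcon.2 u hcu (gmem hL' huL hyL') with h | h
      · exact hu1 h
      · exact hu2 h
    have hca : c = a := by
      rcases hc12 with h | h
      · exfalso
        have hcz : c = z := hproj_p1M c hcM (gsym h)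
        obtain ⟨r, -, hru⟩ := hGQ z L' hL' hzL'
        have hzu : GeomCollinear 𝓛 z u := by
          have h' := hcu; rw [hcz] at h'; exact gsym h'
        have : u = y := (hru u ⟨huL, hzu⟩).trans (hru y ⟨hyL', hzy⟩).symm
        exact huy this
      · exact hau c ⟨hcM, gsym h⟩
    have haL' : a ∉ L' := fun h => hay ⟨_, hL', h, hyL'⟩
    obtain ⟨r, -, hru⟩ := hGQ a L' hL' haL'
    have hau' : GeomCollinear 𝓛 a u := by
      have h' := hcu; rw [hca] at h'; exact gsym h'
    have hug : u = g :=
      (hru u ⟨huL, hau'⟩).trans (hru g ⟨hgL', gsym hgacol⟩).symm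
    have hgc : g = c₂' := hc₂u' g ⟨hgL', gsym hgp2⟩
    exact huc₂ (hug.trans hgc)

/-- Core step (symmetric version). -/
private lemma core
    (hpoint3 : ∀ p : P, 3 ≤ {l ∈ 𝓛 | p ∈ l}.encard)
    (hunique : ∀ p q : P, p ≠ q → ∀ l₁ ∈ 𝓛, ∀ l₂ ∈ 𝓛,
      p ∈ l₁ → q ∈ l₁ → p ∈ l₂ → q ∈ l₂ → l₁ = l₂)
    (hGQ : ∀ p : P, ∀ l ∈ 𝓛, p ∉ l → ∃! q : P, q ∈ l ∧ GeomCollinear 𝓛 p q)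
    (hline4 : ∀ l ∈ 𝓛, 4 ≤ l.encard)
    (p₁ p₂ x y : P)
    (hx1 : ¬ GeomCollinear 𝓛 x p₁) (hx2 : ¬ GeomCollinear 𝓛 x p₂)
    (hy1 : ¬ GeomCollinear 𝓛 y p₁) (hy2 : ¬ GeomCollinear 𝓛 y p₂)
    (hxy : ¬ GeomCollinear 𝓛 x y)
    (M : Set P) (hM : M ∈ 𝓛) (hxM : x ∈ M)
    (hbad : ∀ m ∈ M, ¬ GeomCollinear 𝓛 m p₁ → ¬ GeomCollinear 𝓛 m p₂ →
      ∀ w, GeomCollinear 𝓛 w m → GeomCollinear 𝓛 w y →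
        GeomCollinear 𝓛 w p₁ ∨ GeomCollinear 𝓛 w p₂) :
    False := by
  have hyM : y ∉ M := fun h => hxy (gmem hM hxM h)
  obtain ⟨z, ⟨hzM, hzy⟩, -⟩ := hGQ y M hM hyM
  have hz12 : GeomCollinear 𝓛 z p₁ ∨ GeomCollinear 𝓛 z p₂ := by
    by_contra hcon
    push_neg at hcon
    rcases hbad z hzM hcon.1 hcon.2 z (gmem hM hzM hzM) (gsym hzy) with h | h
    · exact hcon.1 h
    · exact hcon.2 h
  rcases hz12 with h | h
  · exact core' hpoint3 hunique hGQ hline4 p₁ p₂ x y hx1 hx2 hy1 hy2 hxy M hM hxM hbad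
      z hzM (gsym hzy) h
  · exact core' hpoint3 hunique hGQ hline4 p₂ p₁ x y hx2 hx1 hy2 hy1 hxy M hM hxM
      (fun m hm h2 h1 w hwm hwy => (hbad m hm h1 h2 w hwm hwy).symm) z hzM (gsym hzy) h

end Aux

/-- In a thick generalized quadrangle with at least `4` points per line,
the collinearity graph on the set `S` of points opposite two given points `p₁, p₂` is
connected. -/
theorem GQ_points_opposite_two_points_connected
    {P : Type*} (𝓛 : Set (Set P))
    -- thick generalized quadrangle axioms
    (hline3 : ∀ l ∈ 𝓛, 3 ≤ l.encard)
    (hpoint3 : ∀ p : P, 3 ≤ {l ∈ 𝓛 | p ∈ l}.encard)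
    (hunique : ∀ p q : P, p ≠ q → ∀ l₁ ∈ 𝓛, ∀ l₂ ∈ 𝓛,
      p ∈ l₁ → q ∈ l₁ → p ∈ l₂ → q ∈ l₂ → l₁ = l₂)
    (hGQ : ∀ p : P, ∀ l ∈ 𝓛, p ∉ l → ∃! q : P, q ∈ l ∧ GeomCollinear 𝓛 p q)
    -- every line contains at least 4 points
    (hline4 : ∀ l ∈ 𝓛, 4 ≤ l.encard)
    (p₁ p₂ : P)
    (S : Set P)
    (hS : S = {q : P | ¬ GeomCollinear 𝓛 q p₁ ∧ ¬ GeomCollinear 𝓛 q p₂}) :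
    ∀ q ∈ S, ∀ q' ∈ S, ∃ (n : ℕ) (x : ℕ → P),
      x 0 = q ∧ x n = q' ∧ (∀ i ≤ n, x i ∈ S) ∧
      ∀ i < n, GeomCollinear 𝓛 (x i) (x (i + 1)) := by
  subst hS
  intro q hq q' hq'
  simp only [Set.mem_setOf_eq] at hq hq'
  by_cases hqq' : GeomCollinear 𝓛 q q'
  · refine ⟨1, fun i => if i = 0 then q else q', by simp, by simp, ?_, ?_⟩
    · intro i hi
      interval_cases i
      · simpa using hq
      · simpa using hq'
    · intro i hi
      have : i = 0 := by omega
      subst this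
      simpa using hqq'
  · obtain ⟨M, hM, hqM⟩ : ∃ l ∈ 𝓛, q ∈ l := by
      obtain ⟨l, hl, -, -⟩ := encard_three_le (hpoint3 q) ∅ ∅
      exact ⟨l, hl.1, hl.2⟩
    have key : ∃ m w, m ∈ M ∧
        (¬ GeomCollinear 𝓛 m p₁ ∧ ¬ GeomCollinear 𝓛 m p₂) ∧
        (¬ GeomCollinear 𝓛 w p₁ ∧ ¬ GeomCollinear 𝓛 w p₂) ∧
        GeomCollinear 𝓛 w m ∧ GeomCollinear 𝓛 w q' := by
      by_contra hcon
      refine core hpoint3 hunique hGQ hline4 p₁ p₂ q q' hq.1 hq.2 hq'.1 hq'.2 hqq' M hM hqM ?_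
      intro m hm h1 h2 w hwm hwq'
      by_contra hc2
      push_neg at hc2
      exact hcon ⟨m, w, hm, ⟨h1, h2⟩, ⟨hc2.1, hc2.2⟩, hwm, hwq'⟩
    obtain ⟨m, w, hmM, hmS, hwS, hwm, hwq'⟩ := key
    refine ⟨3, fun i => if i = 0 then q else if i = 1 then m else if i = 2 then w else q',
      by simp, by simp, ?_, ?_⟩
    · intro i hi
      interval_cases i
      · simpa using hq
      · simpa using hmS
      · simpa using hwS
      · simpa using hq'
    · intro i hi
      interval_cases i
      · simpa using gmem hM hqM hmM
      · simpa using gsym hwm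
      · simpa using hwq'
end

section
/- Let (P, 𝓛) be a thick generalized quadrangle in which every point lies on at least 4 lines. Let L₁, L₂ ∈ 𝓛 and let S := {J ∈ 𝓛 | J ∩ L₁ = ∅ and J ∩ L₂ = ∅} be the set of lines opposite both L₁ and L₂ (in a generalized quadrangle two lines are opposite exactly when they are disjoint). Then the concurrency graph on S is connected: for all J, J' ∈ S there exist n ∈ ℕ and lines J = J₀, J₁, …, J_n = J' in S with Jᵢ ∩ Jᵢ₊₁ ≠ ∅ for every i < n. -/
section Aux

variable {P : Type*} {𝓛 : Set (Set P)}

/-- From a set with more elements than another, pick an element of the difference. -/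
lemma exists_mem_diff_of_encard_lt {X : Type*} {A B : Set X} (h : B.encard < A.encard) :
    (A \ B).Nonempty := by
  rw [Set.nonempty_iff_ne_empty]
  intro hempty
  rw [Set.diff_eq_empty] at hempty
  exact absurd (Set.encard_le_encard hempty) (not_le.mpr h)

/-- If a set has ≥ 4 elements and another ≤ 2, the difference has ≥ 2 elements. -/
lemma exists_two_mem_diff {X : Type*} {A B : Set X} (hA : 4 ≤ A.encard) (hB : B.encard ≤ 2) :
    ∃ a b, a ∈ A \ B ∧ b ∈ A \ B ∧ a ≠ b := by
  have hsub : A ⊆ (A \ B) ∪ B := by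
    intro x hx
    by_cases h : x ∈ B
    · exact Or.inr h
    · exact Or.inl ⟨hx, h⟩
  have h1 : A.encard ≤ (A \ B).encard + B.encard :=
    le_trans (Set.encard_le_encard hsub) (Set.encard_union_le _ _)
  have h2 : 1 < (A \ B).encard := by
    by_contra hcon
    push_neg at hcon
    have : A.encard ≤ 3 := by
      refine le_trans h1 (le_trans (add_le_add hcon hB) ?_)
      norm_num
    have h4 : (4 : ℕ∞) ≤ 3 := le_trans hA this
    norm_num at h4
  obtain ⟨a, b, ha, hb, hne⟩ := Set.one_lt_encard_iff.mp h2
  exact ⟨a, b, ha, hb, hne⟩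

/-- Through a point not on a line `L`, there is at most one line meeting `L`. -/
lemma line_to_line_unique
    (hunique : ∀ p q : P, p ≠ q → ∀ l₁ ∈ 𝓛, ∀ l₂ ∈ 𝓛,
      p ∈ l₁ → q ∈ l₁ → p ∈ l₂ → q ∈ l₂ → l₁ = l₂)
    (hGQ : ∀ p : P, ∀ l ∈ 𝓛, p ∉ l → ∃! q : P, q ∈ l ∧ GeomCollinear 𝓛 p q)
    {L : Set P} (hL : L ∈ 𝓛) {g : P} (hg : g ∉ L)
    {N N' : Set P} (hN : N ∈ 𝓛) (hN' : N' ∈ 𝓛) (hgN : g ∈ N) (hgN' : g ∈ N')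
    (h1 : (N ∩ L).Nonempty) (h2 : (N' ∩ L).Nonempty) : N = N' := by
  obtain ⟨f, hfN, hfL⟩ := h1
  obtain ⟨f', hf'N', hf'L⟩ := h2
  have hff : f = f' :=
    (hGQ g L hL hg).unique ⟨hfL, ⟨N, hN, hgN, hfN⟩⟩ ⟨hf'L, ⟨N', hN', hgN', hf'N'⟩⟩
  have hgf : g ≠ f := fun h => hg (h ▸ hfL)
  exact hunique g f hgf N hN N' hN' hgN hfN hgN' (hff ▸ hf'N')

/-- Through a point off `L₁ ∪ L₂`, there are at least two lines of `S`. -/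
lemma two_S_lines
    (hunique : ∀ p q : P, p ≠ q → ∀ l₁ ∈ 𝓛, ∀ l₂ ∈ 𝓛,
      p ∈ l₁ → q ∈ l₁ → p ∈ l₂ → q ∈ l₂ → l₁ = l₂)
    (hGQ : ∀ p : P, ∀ l ∈ 𝓛, p ∉ l → ∃! q : P, q ∈ l ∧ GeomCollinear 𝓛 p q)
    (hpoint4 : ∀ p : P, 4 ≤ {l ∈ 𝓛 | p ∈ l}.encard)
    {L₁ L₂ : Set P} (hL₁ : L₁ ∈ 𝓛) (hL₂ : L₂ ∈ 𝓛)
    {S : Set (Set P)} (hS : S = {J ∈ 𝓛 | J ∩ L₁ = ∅ ∧ J ∩ L₂ = ∅})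
    {z : P} (hz1 : z ∉ L₁) (hz2 : z ∉ L₂) :
    ∃ B₁ B₂, B₁ ∈ S ∧ B₂ ∈ S ∧ z ∈ B₁ ∧ z ∈ B₂ ∧ B₁ ≠ B₂ := by
  set A := {l ∈ 𝓛 | z ∈ l} with hA
  set Bad₁ := {l ∈ 𝓛 | z ∈ l ∧ (l ∩ L₁).Nonempty} with hBad₁
  set Bad₂ := {l ∈ 𝓛 | z ∈ l ∧ (l ∩ L₂).Nonempty} with hBad₂
  have hBad₁le : Bad₁.encard ≤ 1 := by
    rw [Set.encard_le_one_iff]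
    rintro a b ⟨ha𝓛, hza, hacap⟩ ⟨hb𝓛, hzb, hbcap⟩
    exact line_to_line_unique hunique hGQ hL₁ hz1 ha𝓛 hb𝓛 hza hzb hacap hbcap
  have hBad₂le : Bad₂.encard ≤ 1 := by
    rw [Set.encard_le_one_iff]
    rintro a b ⟨ha𝓛, hza, hacap⟩ ⟨hb𝓛, hzb, hbcap⟩
    exact line_to_line_unique hunique hGQ hL₂ hz2 ha𝓛 hb𝓛 hza hzb hacap hbcap
  have hBadle : (Bad₁ ∪ Bad₂).encard ≤ 2 := by
    refine le_trans (Set.encard_union_le _ _) ?_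
    calc Bad₁.encard + Bad₂.encard ≤ 1 + 1 := add_le_add hBad₁le hBad₂le
    _ = 2 := by norm_num
  obtain ⟨B₁, B₂, hB₁, hB₂, hne⟩ := exists_two_mem_diff (hpoint4 z) hBadle
  have toS : ∀ B, B ∈ A \ (Bad₁ ∪ Bad₂) → B ∈ S ∧ z ∈ B := by
    rintro B ⟨⟨hB𝓛, hzB⟩, hBbad⟩
    refine ⟨?_, hzB⟩
    rw [hS]
    refine ⟨hB𝓛, ?_, ?_⟩
    · by_contra h
      exact hBbad (Or.inl ⟨hB𝓛, hzB, Set.nonempty_iff_ne_empty.mpr h⟩)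
    · by_contra h
      exact hBbad (Or.inr ⟨hB𝓛, hzB, Set.nonempty_iff_ne_empty.mpr h⟩)
  obtain ⟨hB₁S, hzB₁⟩ := toS _ hB₁
  obtain ⟨hB₂S, hzB₂⟩ := toS _ hB₂
  exact ⟨B₁, B₂, hB₁S, hB₂S, hzB₁, hzB₂, hne⟩

/-- Core step: `z` is joined by a short chain of `S`-lines to the auxiliary point `g`. -/
lemma core_one
    (hunique : ∀ p q : P, p ≠ q → ∀ l₁ ∈ 𝓛, ∀ l₂ ∈ 𝓛,
      p ∈ l₁ → q ∈ l₁ → p ∈ l₂ → q ∈ l₂ → l₁ = l₂)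
    (hGQ : ∀ p : P, ∀ l ∈ 𝓛, p ∉ l → ∃! q : P, q ∈ l ∧ GeomCollinear 𝓛 p q)
    (hpoint4 : ∀ p : P, 4 ≤ {l ∈ 𝓛 | p ∈ l}.encard)
    {L₁ L₂ : Set P} (hL₁ : L₁ ∈ 𝓛) (hL₂ : L₂ ∈ 𝓛)
    {S : Set (Set P)} (hS : S = {J ∈ 𝓛 | J ∩ L₁ = ∅ ∧ J ∩ L₂ = ∅})
    {y g z : P} {G : Set P}
    (hyL₁ : y ∈ L₁) (hG𝓛 : G ∈ 𝓛) (hyG : y ∈ G) (hGL₁ : G ≠ L₁)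
    (hgG : g ∈ G) (hgy : g ≠ y) (hgL₂ : g ∉ L₂)
    (hz1 : z ∉ L₁) (hz2 : z ∉ L₂) (hzG : z ∉ G)
    (hzy : GeomCollinear 𝓛 z y) :
    ∃ B T, B ∈ S ∧ T ∈ S ∧ z ∈ B ∧ (B ∩ T).Nonempty ∧ g ∈ T := by
  have hyz : GeomCollinear 𝓛 y z := by
    obtain ⟨l, hl, h1, h2⟩ := hzy
    exact ⟨l, hl, h2, h1⟩
  have hgL₁ : g ∉ L₁ := fun h => hGL₁ (hunique g y hgy G hG𝓛 L₁ hL₁ hgG hyG h hyL₁)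
  -- g and z are not collinear
  have hgz : ¬ GeomCollinear 𝓛 g z := by
    rintro ⟨N, hN, hgN, hzN⟩
    by_cases hyN : y ∈ N
    · have hNG : N = G := hunique g y hgy N hN G hG𝓛 hgN hyN hgG hyG
      exact hzG (hNG ▸ hzN)
    · have hzg : z = g :=
        (hGQ y N hN hyN).unique ⟨hzN, hyz⟩ ⟨hgN, ⟨G, hG𝓛, hyG, hgG⟩⟩
      exact hzG (by rw [hzg]; exact hgG)
  obtain ⟨B₁, B₂, hB₁S, hB₂S, hzB₁, hzB₂, hBne⟩ :=
    two_S_lines hunique hGQ hpoint4 hL₁ hL₂ hS hz1 hz2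
  have hSprop : ∀ B ∈ S, B ∈ 𝓛 ∧ B ∩ L₁ = ∅ ∧ B ∩ L₂ = ∅ := by
    intro B hB
    rw [hS] at hB
    exact hB
  obtain ⟨hB₁𝓛, hB₁L₁, hB₁L₂⟩ := hSprop B₁ hB₁S
  obtain ⟨hB₂𝓛, hB₂L₁, hB₂L₂⟩ := hSprop B₂ hB₂S
  have hgB₁ : g ∉ B₁ := fun h => hgz ⟨B₁, hB₁𝓛, h, hzB₁⟩
  have hgB₂ : g ∉ B₂ := fun h => hgz ⟨B₂, hB₂𝓛, h, hzB₂⟩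
  obtain ⟨b₁, ⟨hb₁B, T₁col⟩, -⟩ := hGQ g B₁ hB₁𝓛 hgB₁
  obtain ⟨b₂, ⟨hb₂B, T₂col⟩, -⟩ := hGQ g B₂ hB₂𝓛 hgB₂
  obtain ⟨T₁, hT₁𝓛, hgT₁, hb₁T₁⟩ := T₁col
  obtain ⟨T₂, hT₂𝓛, hgT₂, hb₂T₂⟩ := T₂col
  by_cases hT₁S : T₁ ∈ S
  · exact ⟨B₁, T₁, hB₁S, hT₁S, hzB₁, ⟨b₁, hb₁B, hb₁T₁⟩, hgT₁⟩
  by_cases hT₂S : T₂ ∈ S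
  · exact ⟨B₂, T₂, hB₂S, hT₂S, hzB₂, ⟨b₂, hb₂B, hb₂T₂⟩, hgT₂⟩
  exfalso
  have hbad : ∀ T : Set P, T ∈ 𝓛 → T ∉ S → (T ∩ L₁).Nonempty ∨ (T ∩ L₂).Nonempty := by
    intro T hT hTS
    by_contra h
    push_neg at h
    apply hTS
    rw [hS]
    exact ⟨hT, h.1, h.2⟩
  have hbad₁ := hbad T₁ hT₁𝓛 hT₁S
  have hbad₂ := hbad T₂ hT₂𝓛 hT₂S
  have hb₁z : b₁ ≠ z := fun h => hgz ⟨T₁, hT₁𝓛, hgT₁, h ▸ hb₁T₁⟩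
  have hb₂z : b₂ ≠ z := fun h => hgz ⟨T₂, hT₂𝓛, hgT₂, h ▸ hb₂T₂⟩
  -- the two projection lines are distinct
  have hTne : T₁ ≠ T₂ := by
    intro h
    have hbne : b₁ ≠ b₂ := by
      intro hb
      exact hBne (hunique z b₁ (Ne.symm hb₁z) B₁ hB₁𝓛 B₂ hB₂𝓛 hzB₁ hb₁B hzB₂ (hb ▸ hb₂B))
    have hzT₁ : z ∉ T₁ := fun hz => hgz ⟨T₁, hT₁𝓛, hgT₁, hz⟩
    exact hbne ((hGQ z T₁ hT₁𝓛 hzT₁).unique ⟨hb₁T₁, ⟨B₁, hB₁𝓛, hzB₁, hb₁B⟩⟩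
      ⟨h ▸ hb₂T₂, ⟨B₂, hB₂𝓛, hzB₂, hb₂B⟩⟩)
  -- a projection line that meets L₁ leads to a contradiction
  have key : ∀ (B T : Set P) (b : P), B ∈ 𝓛 → B ∩ L₁ = ∅ → T ∈ 𝓛 → z ∈ B → b ∈ B →
      b ∈ T → g ∈ T → (T ∩ L₁).Nonempty → False := by
    intro B T b hB𝓛 hBL₁ hT𝓛 hzB hbB hbT hgT hTL₁
    have hTG : T = G :=
      line_to_line_unique hunique hGQ hL₁ hgL₁ hT𝓛 hG𝓛 hgT hgG hTL₁ ⟨y, hyG, hyL₁⟩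
    have hbG : b ∈ G := hTG ▸ hbT
    have hyB : y ∉ B := fun h => (Set.eq_empty_iff_forall_notMem.mp hBL₁) y ⟨h, hyL₁⟩
    have hzb : z = b :=
      (hGQ y B hB𝓛 hyB).unique ⟨hzB, hyz⟩ ⟨hbB, ⟨G, hG𝓛, hyG, hbG⟩⟩
    exact hzG (hzb ▸ hbG)
  rcases hbad₁ with h1 | h1
  · exact key B₁ T₁ b₁ hB₁𝓛 hB₁L₁ hT₁𝓛 hzB₁ hb₁B hb₁T₁ hgT₁ h1
  · rcases hbad₂ with h2 | h2
    · exact key B₂ T₂ b₂ hB₂𝓛 hB₂L₁ hT₂𝓛 hzB₂ hb₂B hb₂T₂ hgT₂ h2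
    · exact hTne (line_to_line_unique hunique hGQ hL₂ hgL₂ hT₁𝓛 hT₂𝓛 hgT₁ hgT₂ h1 h2)

/-- If `z, w` off `L₁ ∪ L₂` lie on a common line `M ∉ S`, they are joined by a chain of
four `S`-lines. -/
lemma core_s3
    (hline3 : ∀ l ∈ 𝓛, 3 ≤ l.encard)
    (hunique : ∀ p q : P, p ≠ q → ∀ l₁ ∈ 𝓛, ∀ l₂ ∈ 𝓛,
      p ∈ l₁ → q ∈ l₁ → p ∈ l₂ → q ∈ l₂ → l₁ = l₂)
    (hGQ : ∀ p : P, ∀ l ∈ 𝓛, p ∉ l → ∃! q : P, q ∈ l ∧ GeomCollinear 𝓛 p q)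
    (hpoint4 : ∀ p : P, 4 ≤ {l ∈ 𝓛 | p ∈ l}.encard)
    {L₁ L₂ : Set P} (hL₁ : L₁ ∈ 𝓛) (hL₂ : L₂ ∈ 𝓛)
    {S : Set (Set P)} (hS : S = {J ∈ 𝓛 | J ∩ L₁ = ∅ ∧ J ∩ L₂ = ∅})
    {z w : P} {M : Set P} (hM𝓛 : M ∈ 𝓛) (hzM : z ∈ M) (hwM : w ∈ M)
    (hz1 : z ∉ L₁) (hz2 : z ∉ L₂) (hw1 : w ∉ L₁) (hw2 : w ∉ L₂)
    (hMS : M ∉ S) :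
    ∃ (g : P) (B T T' C : Set P), B ∈ S ∧ T ∈ S ∧ T' ∈ S ∧ C ∈ S ∧ z ∈ B ∧
      (B ∩ T).Nonempty ∧ g ∈ T ∧ g ∈ T' ∧ (T' ∩ C).Nonempty ∧ w ∈ C := by
  have hMbad : (M ∩ L₁).Nonempty ∨ (M ∩ L₂).Nonempty := by
    by_contra h
    push_neg at h
    apply hMS
    rw [hS]
    exact ⟨hM𝓛, h.1, h.2⟩
  have key : ∀ L₁' L₂' : Set P, L₁' ∈ 𝓛 → L₂' ∈ 𝓛 →
      S = {J ∈ 𝓛 | J ∩ L₁' = ∅ ∧ J ∩ L₂' = ∅} →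
      z ∉ L₁' → z ∉ L₂' → w ∉ L₁' → w ∉ L₂' → (M ∩ L₁').Nonempty →
      ∃ (g : P) (B T T' C : Set P), B ∈ S ∧ T ∈ S ∧ T' ∈ S ∧ C ∈ S ∧ z ∈ B ∧
        (B ∩ T).Nonempty ∧ g ∈ T ∧ g ∈ T' ∧ (T' ∩ C).Nonempty ∧ w ∈ C := by
    intro L₁' L₂' hL₁' hL₂' hS' hz1' hz2' hw1' hw2' hcap
    obtain ⟨y, hyM, hyL₁'⟩ := hcap
    -- choose a line G through y different from L₁', L₂', M
    have hGex : ({l ∈ 𝓛 | y ∈ l} \ {L₁', L₂', M}).Nonempty := by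
      apply exists_mem_diff_of_encard_lt
      refine lt_of_le_of_lt ?_ (lt_of_lt_of_le (by norm_num : (3 : ℕ∞) < 4) (hpoint4 y))
      refine le_trans (Set.encard_insert_le _ _) ?_
      refine le_trans (add_le_add_left (Set.encard_insert_le _ _) 1) ?_
      rw [Set.encard_singleton]
      norm_num
    obtain ⟨G, ⟨hG𝓛, hyG⟩, hGnot⟩ := hGex
    have hGne : G ≠ L₁' ∧ G ≠ L₂' ∧ G ≠ M := by
      refine ⟨?_, ?_, ?_⟩ <;> intro h <;> exact hGnot (by rw [h]; simp)
    -- choose a point g on G distinct from y and off L₂'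
    have hGL₂cap : (G ∩ L₂').encard ≤ 1 := by
      rw [Set.encard_le_one_iff]
      rintro a b ⟨haG, haL⟩ ⟨hbG, hbL⟩
      by_contra hab
      exact hGne.2.1 (hunique a b hab G hG𝓛 L₂' hL₂' haG hbG haL hbL)
    have hsmall : (insert y (G ∩ L₂')).encard ≤ 2 := by
      refine le_trans (Set.encard_insert_le _ _ ) ?_
      calc (G ∩ L₂').encard + 1 ≤ 1 + 1 := add_le_add_left hGL₂cap 1
      _ = 2 := by norm_num
    have hgex : (G \ insert y (G ∩ L₂')).Nonempty := by
      apply exists_mem_diff_of_encard_lt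
      exact lt_of_le_of_lt hsmall (lt_of_lt_of_le (by norm_num : (2 : ℕ∞) < 3) (hline3 G hG𝓛))
    obtain ⟨g, hgG, hgnot⟩ := hgex
    have hgy : g ≠ y := fun h => hgnot (by rw [h]; exact Set.mem_insert _ _)
    have hgL₂' : g ∉ L₂' := fun h => hgnot (Set.mem_insert_of_mem _ ⟨hgG, h⟩)
    -- z, w are not on G
    have hzy2 : z ≠ y := fun h => hz1' (h ▸ hyL₁')
    have hwy2 : w ≠ y := fun h => hw1' (h ▸ hyL₁')
    have hzG : z ∉ G := fun h =>
      hGne.2.2 (hunique z y hzy2 G hG𝓛 M hM𝓛 h hyG hzM hyM)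
    have hwG : w ∉ G := fun h =>
      hGne.2.2 (hunique w y hwy2 G hG𝓛 M hM𝓛 h hyG hwM hyM)
    have hzy : GeomCollinear 𝓛 z y := ⟨M, hM𝓛, hzM, hyM⟩
    have hwy : GeomCollinear 𝓛 w y := ⟨M, hM𝓛, hwM, hyM⟩
    obtain ⟨B, T, hBS, hTS, hzB, hBT, hgT⟩ :=
      core_one hunique hGQ hpoint4 hL₁' hL₂' hS' hyL₁' hG𝓛 hyG hGne.1 hgG hgy hgL₂'
        hz1' hz2' hzG hzy
    obtain ⟨C, T', hCS, hT'S, hwC, hCT', hgT'⟩ :=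
      core_one hunique hGQ hpoint4 hL₁' hL₂' hS' hyL₁' hG𝓛 hyG hGne.1 hgG hgy hgL₂'
        hw1' hw2' hwG hwy
    refine ⟨g, B, T, T', C, hBS, hTS, hT'S, hCS, hzB, hBT, hgT, hgT', ?_, hwC⟩
    obtain ⟨c, hcC, hcT'⟩ := hCT'
    exact ⟨c, hcT', hcC⟩
  rcases hMbad with h | h
  · exact key L₁ L₂ hL₁ hL₂ hS hz1 hz2 hw1 hw2 h
  · refine key L₂ L₁ hL₂ hL₁ ?_ hz2 hz1 hw2 hw1 h
    rw [hS]
    ext J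
    constructor
    · rintro ⟨h1, h2, h3⟩; exact ⟨h1, h3, h2⟩
    · rintro ⟨h1, h2, h3⟩; exact ⟨h1, h3, h2⟩

end Aux

/-- In a thick generalized quadrangle with at least `4` lines per point,
the concurrency graph on the set `S` of lines opposite (i.e. disjoint from) two given lines
`L₁, L₂` is connected. -/
theorem GQ_lines_opposite_two_lines_connected
    {P : Type*} (𝓛 : Set (Set P))
    -- thick generalized quadrangle axioms
    (hline3 : ∀ l ∈ 𝓛, 3 ≤ l.encard)
    (hpoint3 : ∀ p : P, 3 ≤ {l ∈ 𝓛 | p ∈ l}.encard)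
    (hunique : ∀ p q : P, p ≠ q → ∀ l₁ ∈ 𝓛, ∀ l₂ ∈ 𝓛,
      p ∈ l₁ → q ∈ l₁ → p ∈ l₂ → q ∈ l₂ → l₁ = l₂)
    (hGQ : ∀ p : P, ∀ l ∈ 𝓛, p ∉ l → ∃! q : P, q ∈ l ∧ GeomCollinear 𝓛 p q)
    -- every point lies on at least 4 lines
    (hpoint4 : ∀ p : P, 4 ≤ {l ∈ 𝓛 | p ∈ l}.encard)
    (L₁ L₂ : Set P) (hL₁ : L₁ ∈ 𝓛) (hL₂ : L₂ ∈ 𝓛)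
    (S : Set (Set P))
    (hS : S = {J ∈ 𝓛 | J ∩ L₁ = ∅ ∧ J ∩ L₂ = ∅}) :
    ∀ J ∈ S, ∀ J' ∈ S, ∃ (n : ℕ) (Js : ℕ → Set P),
      Js 0 = J ∧ Js n = J' ∧ (∀ i ≤ n, Js i ∈ S) ∧
      ∀ i < n, (Js i ∩ Js (i + 1)).Nonempty := by
  intro J hJ J' hJ'
  have hSprop : ∀ B ∈ S, B ∈ 𝓛 ∧ B ∩ L₁ = ∅ ∧ B ∩ L₂ = ∅ := by
    intro B hB
    rw [hS] at hB
    exact hB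
  obtain ⟨hJ𝓛, hJL₁, hJL₂⟩ := hSprop J hJ
  obtain ⟨hJ'𝓛, hJ'L₁, hJ'L₂⟩ := hSprop J' hJ'
  -- pick a point on J
  obtain ⟨p, hpJ⟩ : J.Nonempty := by
    have h3 := hline3 J hJ𝓛
    rw [← Set.encard_pos]
    exact lt_of_lt_of_le (by norm_num : (0 : ℕ∞) < 3) h3
  have hp1 : p ∉ L₁ := fun h => (Set.eq_empty_iff_forall_notMem.mp hJL₁) p ⟨hpJ, h⟩
  have hp2 : p ∉ L₂ := fun h => (Set.eq_empty_iff_forall_notMem.mp hJL₂) p ⟨hpJ, h⟩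
  by_cases hpJ' : p ∈ J'
  · -- J and J' meet
    refine ⟨1, fun i => if i = 0 then J else J', by simp, by simp, ?_, ?_⟩
    · intro i hi
      interval_cases i <;> simp [hJ, hJ']
    · intro i hi
      interval_cases i
      simp only [if_pos rfl, one_ne_zero, if_neg]
      exact ⟨p, hpJ, hpJ'⟩
  -- project p onto J'
  obtain ⟨q, ⟨hqJ', hcol⟩, -⟩ := hGQ p J' hJ'𝓛 hpJ'
  obtain ⟨M, hM𝓛, hpM, hqM⟩ := hcol
  have hq1 : q ∉ L₁ := fun h => (Set.eq_empty_iff_forall_notMem.mp hJ'L₁) q ⟨hqJ', h⟩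
  have hq2 : q ∉ L₂ := fun h => (Set.eq_empty_iff_forall_notMem.mp hJ'L₂) q ⟨hqJ', h⟩
  by_cases hMS : M ∈ S
  · -- J, M, J' is a path
    refine ⟨2, fun i => if i = 0 then J else if i = 1 then M else J', by simp, by simp, ?_, ?_⟩
    · intro i hi
      interval_cases i <;> simp [hJ, hJ', hMS]
    · intro i hi
      interval_cases i
      · simp only [if_pos rfl, one_ne_zero, if_neg, if_pos]
        exact ⟨p, hpJ, hpM⟩
      · norm_num
        exact ⟨q, hqM, hqJ'⟩
  · -- use the core lemma
    obtain ⟨g, B, T, T', C, hBS, hTS, hT'S, hCS, hpB, hBT, hgT, hgT', hT'C, hqC⟩ :=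
      core_s3 hline3 hunique hGQ hpoint4 hL₁ hL₂ hS hM𝓛 hpM hqM hp1 hp2 hq1 hq2 hMS
    refine ⟨5, fun i => if i = 0 then J else if i = 1 then B else if i = 2 then T
      else if i = 3 then T' else if i = 4 then C else J', by simp, by norm_num, ?_, ?_⟩
    · intro i hi
      interval_cases i <;> simp [hJ, hJ', hBS, hTS, hT'S, hCS]
    · intro i hi
      interval_cases i
      · norm_num
        exact ⟨p, hpJ, hpB⟩
      · norm_num
        exact hBT
      · norm_num
        exact ⟨g, hgT, hgT'⟩
      · norm_num
        exact hT'C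
      · norm_num
        exact ⟨q, hqC, hqJ'⟩
end

section
/- Let (P, 𝓛) be a thick polar space of rank at least 3. Let p₁, p₂ ∈ P and let S := {q ∈ P | ¬(q ⊥ p₁) and ¬(q ⊥ p₂)} be the set of points opposite both p₁ and p₂. Then the collinearity graph on S is connected: for all q, q' ∈ S there exist n ∈ ℕ and points x₀, x₁, …, x_n ∈ S with x₀ = q, x_n = q', and xᵢ ⊥ xᵢ₊₁ for every i < n. -/
namespace PolarProofAux

variable {P : Type*} {𝓛 : Set (Set P)}

private lemma gsymm {p q : P} (h : GeomCollinear 𝓛 p q) : GeomCollinear 𝓛 q p := by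
  obtain ⟨l, hl, hp, hq⟩ := h
  exact ⟨l, hl, hq, hp⟩

private lemma of_mem {l : Set P} (hl : l ∈ 𝓛) {a b : P} (ha : a ∈ l) (hb : b ∈ l) :
    GeomCollinear 𝓛 a b := ⟨l, hl, ha, hb⟩

private lemma grefl (hpointline : ∀ p : P, ∃ l ∈ 𝓛, p ∈ l) (p : P) :
    GeomCollinear 𝓛 p p := by
  obtain ⟨l, hl, hp⟩ := hpointline p
  exact ⟨l, hl, hp, hp⟩

/-- Any line contains a point different from two given points. -/
private lemma thick3 (hline3 : ∀ l ∈ 𝓛, 3 ≤ l.encard) {l : Set P} (hl : l ∈ 𝓛) (a b : P) :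
    ∃ c ∈ l, c ≠ a ∧ c ≠ b := by
  by_contra h
  push_neg at h
  have hsub : l ⊆ {a, b} := by
    intro c hc
    rcases eq_or_ne c a with rfl | hca
    · exact Set.mem_insert _ _
    · exact Set.mem_insert_of_mem _ (h c hc hca)
  have h2 : l.encard ≤ 2 := by
    refine le_trans (Set.encard_mono hsub) ?_
    calc ({a, b} : Set P).encard ≤ ({b} : Set P).encard + 1 := Set.encard_insert_le _ _
    _ ≤ 2 := by
        rw [Set.encard_singleton]
        exact le_of_eq one_add_one_eq_two
  have := le_trans (hline3 l hl) h2
  norm_num at this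

/-- There is always at least one point of a line collinear with a given point. -/
private lemma exists_nbr (hline3 : ∀ l ∈ 𝓛, 3 ≤ l.encard)
    (hpointline : ∀ p : P, ∃ l ∈ 𝓛, p ∈ l)
    (hBS : ∀ p : P, ∀ l ∈ 𝓛, p ∉ l →
      (∃! q : P, q ∈ l ∧ GeomCollinear 𝓛 p q) ∨ (∀ q ∈ l, GeomCollinear 𝓛 p q))
    (p : P) {l : Set P} (hl : l ∈ 𝓛) :
    ∃ x ∈ l, GeomCollinear 𝓛 p x := by
  by_cases hpl : p ∈ l
  · exact ⟨p, hpl, grefl hpointline p⟩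
  rcases hBS p l hl hpl with ⟨x, ⟨hx, hcol⟩, -⟩ | hall
  · exact ⟨x, hx, hcol⟩
  · have hne : l.Nonempty := by
      rw [← Set.encard_ne_zero]
      intro h0
      have := hline3 l hl
      rw [h0] at this
      norm_num at this
    obtain ⟨x, hx⟩ := hne
    exact ⟨x, hx, hall x hx⟩

/-- If a point is collinear with two distinct points of a line, it is collinear with all of it. -/
private lemma two_imp_all
    (hBS : ∀ p : P, ∀ l ∈ 𝓛, p ∉ l →
      (∃! q : P, q ∈ l ∧ GeomCollinear 𝓛 p q) ∨ (∀ q ∈ l, GeomCollinear 𝓛 p q))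
    {l : Set P} (hl : l ∈ 𝓛) {a b : P} (ha : a ∈ l) (hb : b ∈ l) (hab : a ≠ b)
    {p : P} (hpa : GeomCollinear 𝓛 p a) (hpb : GeomCollinear 𝓛 p b) :
    ∀ c ∈ l, GeomCollinear 𝓛 p c := by
  intro c hc
  by_cases hpl : p ∈ l
  · exact of_mem hl hpl hc
  rcases hBS p l hl hpl with ⟨x, -, huniq⟩ | hall
  · exact absurd ((huniq a ⟨ha, hpa⟩).trans (huniq b ⟨hb, hpb⟩).symm) hab
  · exact hall c hc

/-- Unique trace: if `p` is not collinear with some point of `l`,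
then there is exactly one point of `l` collinear with `p`. -/
private lemma unique_nbr
    (hBS : ∀ p : P, ∀ l ∈ 𝓛, p ∉ l →
      (∃! q : P, q ∈ l ∧ GeomCollinear 𝓛 p q) ∨ (∀ q ∈ l, GeomCollinear 𝓛 p q))
    {l : Set P} (hl : l ∈ 𝓛) {p e : P} (he : e ∈ l) (hpe : ¬ GeomCollinear 𝓛 p e) :
    ∃! x, x ∈ l ∧ GeomCollinear 𝓛 p x := by
  have hpl : p ∉ l := fun h => hpe (of_mem hl h he)
  rcases hBS p l hl hpl with h | hall
  · exact h
  · exact absurd (hall e he) hpe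

private lemma line_eq
    (hunique : ∀ p q : P, p ≠ q → ∀ l₁ ∈ 𝓛, ∀ l₂ ∈ 𝓛,
      p ∈ l₁ → q ∈ l₁ → p ∈ l₂ → q ∈ l₂ → l₁ = l₂)
    {a b : P} (hab : a ≠ b) {l₁ l₂ : Set P} (h₁ : l₁ ∈ 𝓛) (h₂ : l₂ ∈ 𝓛)
    (ha₁ : a ∈ l₁) (hb₁ : b ∈ l₁) (ha₂ : a ∈ l₂) (hb₂ : b ∈ l₂) : l₁ = l₂ :=
  hunique a b hab l₁ h₁ l₂ h₂ ha₁ hb₁ ha₂ hb₂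

/-- Dominator lemma: if `t` is collinear with `α` and with every common neighbour of the
opposite pair `(α, β)`, then `t` is collinear with all of `α^⊥`. -/
private lemma CL1
    (hBS : ∀ p : P, ∀ l ∈ 𝓛, p ∉ l →
      (∃! q : P, q ∈ l ∧ GeomCollinear 𝓛 p q) ∨ (∀ q ∈ l, GeomCollinear 𝓛 p q))
    {α β t : P} (hαβ : ¬ GeomCollinear 𝓛 α β) (htα : GeomCollinear 𝓛 t α)
    (dom : ∀ c, GeomCollinear 𝓛 c α → GeomCollinear 𝓛 c β → GeomCollinear 𝓛 t c) :
    ∀ w, GeomCollinear 𝓛 w α → GeomCollinear 𝓛 t w := by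
  intro w hwα
  by_cases hwβ : GeomCollinear 𝓛 w β
  · exact dom w hwα hwβ
  obtain ⟨ν, hν, hwν, hαν⟩ := hwα
  have hβw : ¬ GeomCollinear 𝓛 β w := fun h => hwβ (gsymm h)
  obtain ⟨x₀, ⟨hx₀ν, hβx₀⟩, -⟩ := unique_nbr hBS hν hwν hβw
  have hx₀α : GeomCollinear 𝓛 x₀ α := of_mem hν hx₀ν hαν
  have htx₀ : GeomCollinear 𝓛 t x₀ := dom x₀ hx₀α (gsymm hβx₀)
  have hx₀ne : α ≠ x₀ := by
    rintro rfl
    exact hαβ (gsymm hβx₀)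
  exact two_imp_all hBS hν hαν hx₀ν hx₀ne htα htx₀ w hwν

/-- No radical point: a common neighbour of an opposite pair cannot be collinear with
all common neighbours. -/
private lemma NDrad
    (hBS : ∀ p : P, ∀ l ∈ 𝓛, p ∉ l →
      (∃! q : P, q ∈ l ∧ GeomCollinear 𝓛 p q) ∨ (∀ q ∈ l, GeomCollinear 𝓛 p q))
    (hnondeg : ∀ p : P, ∃ q : P, ¬ GeomCollinear 𝓛 p q)
    {u v t : P} (huv : ¬ GeomCollinear 𝓛 u v)
    (htu : GeomCollinear 𝓛 t u) (htv : GeomCollinear 𝓛 t v)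
    (dom : ∀ x, GeomCollinear 𝓛 x u → GeomCollinear 𝓛 x v → GeomCollinear 𝓛 t x) : False := by
  have h1 : ∀ w, GeomCollinear 𝓛 w u → GeomCollinear 𝓛 t w :=
    CL1 hBS huv htu (fun c hcu hcv => dom c hcu hcv)
  have h2 : ∀ w, GeomCollinear 𝓛 w v → GeomCollinear 𝓛 t w :=
    CL1 hBS (fun h => huv (gsymm h)) htv (fun c hcv hcu => dom c hcu hcv)
  obtain ⟨s, hts⟩ := hnondeg t
  have hsu : ¬ GeomCollinear 𝓛 s u := fun h => hts (h1 s h)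
  have dom2 : ∀ c, GeomCollinear 𝓛 c t → GeomCollinear 𝓛 c s → GeomCollinear 𝓛 u c := by
    intro c hct hcs
    obtain ⟨σ, hσ, hcσ, hsσ⟩ := hcs
    have hus : ¬ GeomCollinear 𝓛 u s := fun h => hsu (gsymm h)
    obtain ⟨x₀, ⟨hx₀σ, hux₀⟩, -⟩ := unique_nbr hBS hσ hsσ hus
    have htx₀ : GeomCollinear 𝓛 t x₀ := h1 x₀ (gsymm hux₀)
    obtain ⟨y, -, hyuniq⟩ := unique_nbr hBS hσ hsσ hts
    have hc_eq : c = y := hyuniq c ⟨hcσ, gsymm hct⟩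
    have hx₀_eq : x₀ = y := hyuniq x₀ ⟨hx₀σ, htx₀⟩
    rw [hc_eq, ← hx₀_eq]
    exact hux₀
  have h3 : ∀ w, GeomCollinear 𝓛 w t → GeomCollinear 𝓛 u w := CL1 hBS hts (gsymm htu) dom2
  exact huv (h3 v (gsymm htv))

/-- Every common neighbour of an opposite pair has another common neighbour collinear with it
(rank ≥ 3 is used here). -/
private lemma xline_exists
    (hline3 : ∀ l ∈ 𝓛, 3 ≤ l.encard)
    (hunique : ∀ p q : P, p ≠ q → ∀ l₁ ∈ 𝓛, ∀ l₂ ∈ 𝓛,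
      p ∈ l₁ → q ∈ l₁ → p ∈ l₂ → q ∈ l₂ → l₁ = l₂)
    (hpointline : ∀ p : P, ∃ l ∈ 𝓛, p ∈ l)
    (hBS : ∀ p : P, ∀ l ∈ 𝓛, p ∉ l →
      (∃! q : P, q ∈ l ∧ GeomCollinear 𝓛 p q) ∨ (∀ q ∈ l, GeomCollinear 𝓛 p q))
    (hrank3 : ∀ l ∈ 𝓛, ∃ p : P, p ∉ l ∧ ∀ q ∈ l, GeomCollinear 𝓛 p q)
    {u v x : P} (huv : ¬ GeomCollinear 𝓛 u v)
    (hxu : GeomCollinear 𝓛 x u) (hxv : GeomCollinear 𝓛 x v) :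
    ∃ y, GeomCollinear 𝓛 y u ∧ GeomCollinear 𝓛 y v ∧ GeomCollinear 𝓛 x y ∧ y ≠ x := by
  have hxu' : x ≠ u := by rintro rfl; exact huv hxv
  obtain ⟨l, hl, hxl, hul⟩ := hxu
  obtain ⟨r, hrl, hr⟩ := hrank3 l hl
  obtain ⟨m, hm, hrm, hum⟩ := hr u hul
  obtain ⟨y, hym, hvy⟩ := exists_nbr hline3 hpointline hBS v hm
  have hyu : GeomCollinear 𝓛 y u := of_mem hm hym hum
  have hyv : GeomCollinear 𝓛 y v := gsymm hvy
  have hxm : x ∉ m := by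
    intro hxm
    have : m = l := line_eq hunique hxu' hm hl hxm hum hxl hul
    exact hrl (this ▸ hrm)
  have hru : r ≠ u := fun h => hrl (h ▸ hul)
  have hxu2 : GeomCollinear 𝓛 x u := of_mem hl hxl hul
  have hxy : GeomCollinear 𝓛 x y :=
    two_imp_all hBS hm hrm hum hru (gsymm (hr x hxl)) hxu2 y hym
  exact ⟨y, hyu, hyv, hxy, fun h => hxm (h ▸ hym)⟩

/-- Dominator lemma inside the perp-set `X(u,v)`. -/
private lemma XCL1
    (hBS : ∀ p : P, ∀ l ∈ 𝓛, p ∉ l →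
      (∃! q : P, q ∈ l ∧ GeomCollinear 𝓛 p q) ∨ (∀ q ∈ l, GeomCollinear 𝓛 p q))
    {u v α β t : P} (huv : ¬ GeomCollinear 𝓛 u v)
    (hαu : GeomCollinear 𝓛 α u) (hαv : GeomCollinear 𝓛 α v)
    (hβu : GeomCollinear 𝓛 β u) (hβv : GeomCollinear 𝓛 β v)
    (hαβ : ¬ GeomCollinear 𝓛 α β) (htα : GeomCollinear 𝓛 t α)
    (dom : ∀ c, GeomCollinear 𝓛 c u → GeomCollinear 𝓛 c v →
      GeomCollinear 𝓛 c α → GeomCollinear 𝓛 c β → GeomCollinear 𝓛 t c) :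
    ∀ w, GeomCollinear 𝓛 w u → GeomCollinear 𝓛 w v →
      GeomCollinear 𝓛 w α → GeomCollinear 𝓛 t w := by
  intro w hwu hwv hwα
  by_cases hweq : w = α
  · exact hweq ▸ htα
  by_cases hwβ : GeomCollinear 𝓛 w β
  · exact dom w hwu hwv hwα hwβ
  obtain ⟨ν, hν, hwν, hαν⟩ := hwα
  have hwα' : w ≠ α := hweq
  have hνX : ∀ k ∈ ν, GeomCollinear 𝓛 k u ∧ GeomCollinear 𝓛 k v := by
    intro k hk
    constructor
    · exact gsymm (two_imp_all hBS hν hwν hαν hwα' (gsymm hwu) (gsymm hαu) k hk)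
    · exact gsymm (two_imp_all hBS hν hwν hαν hwα' (gsymm hwv) (gsymm hαv) k hk)
  have hβw : ¬ GeomCollinear 𝓛 β w := fun h => hwβ (gsymm h)
  obtain ⟨x₀, ⟨hx₀ν, hβx₀⟩, -⟩ := unique_nbr hBS hν hwν hβw
  have hx₀α : GeomCollinear 𝓛 x₀ α := of_mem hν hx₀ν hαν
  have htx₀ : GeomCollinear 𝓛 t x₀ :=
    dom x₀ (hνX x₀ hx₀ν).1 (hνX x₀ hx₀ν).2 hx₀α (gsymm hβx₀)
  have hx₀ne : α ≠ x₀ := by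
    rintro rfl
    exact hαβ (gsymm hβx₀)
  exact two_imp_all hBS hν hαν hx₀ν hx₀ne htα htx₀ w hwν

/-- Perp-inclusion is impossible inside the perp-set `X(u,v)`:
two distinct common neighbours have incomparable perps within `X(u,v)`. -/
private lemma XPI
    (hline3 : ∀ l ∈ 𝓛, 3 ≤ l.encard)
    (hpointline : ∀ p : P, ∃ l ∈ 𝓛, p ∈ l)
    (hBS : ∀ p : P, ∀ l ∈ 𝓛, p ∉ l →
      (∃! q : P, q ∈ l ∧ GeomCollinear 𝓛 p q) ∨ (∀ q ∈ l, GeomCollinear 𝓛 p q))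
    (hnondeg : ∀ p : P, ∃ q : P, ¬ GeomCollinear 𝓛 p q)
    {u v z y : P} (huv : ¬ GeomCollinear 𝓛 u v)
    (hzu : GeomCollinear 𝓛 z u) (hzv : GeomCollinear 𝓛 z v)
    (hyu : GeomCollinear 𝓛 y u) (hyv : GeomCollinear 𝓛 y v)
    (hsub : ∀ w, GeomCollinear 𝓛 w u → GeomCollinear 𝓛 w v →
      GeomCollinear 𝓛 w z → GeomCollinear 𝓛 w y)
    (hzy : z ≠ y) : False := by
  have hzz : GeomCollinear 𝓛 z z := grefl hpointline z
  have hzcy : GeomCollinear 𝓛 z y := hsub z hzu hzv hzz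
  obtain ⟨lam, hlam, hzlam, hylam⟩ := hzcy
  have hXlam : ∀ k ∈ lam, GeomCollinear 𝓛 k u ∧ GeomCollinear 𝓛 k v := by
    intro k hk
    constructor
    · exact gsymm (two_imp_all hBS hlam hzlam hylam hzy (gsymm hzu) (gsymm hyu) k hk)
    · exact gsymm (two_imp_all hBS hlam hzlam hylam hzy (gsymm hzv) (gsymm hyv) k hk)
  have hdag : ∀ ζ ∈ lam, ∀ w, GeomCollinear 𝓛 w u → GeomCollinear 𝓛 w v →
      GeomCollinear 𝓛 w z → GeomCollinear 𝓛 w ζ := by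
    intro ζ hζ w hwu hwv hwz
    exact two_imp_all hBS hlam hzlam hylam hzy hwz (hsub w hwu hwv hwz) ζ hζ
  have hζdom : ∀ ζ ∈ lam, ∀ w, GeomCollinear 𝓛 w u → GeomCollinear 𝓛 w v →
      GeomCollinear 𝓛 w ζ → GeomCollinear 𝓛 z w := by
    intro ζ hζ
    have hζu : GeomCollinear 𝓛 ζ u := (hXlam ζ hζ).1
    have hζv : GeomCollinear 𝓛 ζ v := (hXlam ζ hζ).2
    have hnd : ¬ ∀ s, GeomCollinear 𝓛 s u → GeomCollinear 𝓛 s v → GeomCollinear 𝓛 ζ s :=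
      fun h => NDrad hBS hnondeg huv hζu hζv h
    push_neg at hnd
    obtain ⟨s, hsu, hsv, hζs⟩ := hnd
    have hsz : ¬ GeomCollinear 𝓛 s z := fun h =>
      hζs (gsymm (hdag ζ hζ s hsu hsv h))
    have setid : ∀ c, GeomCollinear 𝓛 c u → GeomCollinear 𝓛 c v →
        GeomCollinear 𝓛 c ζ → GeomCollinear 𝓛 c s → GeomCollinear 𝓛 z c := by
      intro c hcu hcv hcζ hcs
      have hcs' : c ≠ s := by
        rintro rfl
        exact hζs (gsymm hcζ)
      obtain ⟨σ, hσ, hcσ, hsσ⟩ := hcs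
      have hσX : ∀ k ∈ σ, GeomCollinear 𝓛 k u ∧ GeomCollinear 𝓛 k v := by
        intro k hk
        constructor
        · exact gsymm (two_imp_all hBS hσ hcσ hsσ hcs' (gsymm hcu) (gsymm hsu) k hk)
        · exact gsymm (two_imp_all hBS hσ hcσ hsσ hcs' (gsymm hcv) (gsymm hsv) k hk)
      have hzs' : ¬ GeomCollinear 𝓛 z s := fun h => hsz (gsymm h)
      obtain ⟨x₀, ⟨hx₀σ, hzx₀⟩, -⟩ := unique_nbr hBS hσ hsσ hzs'
      have hx₀ζ : GeomCollinear 𝓛 x₀ ζ :=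
        hdag ζ hζ x₀ (hσX x₀ hx₀σ).1 (hσX x₀ hx₀σ).2 (gsymm hzx₀)
      obtain ⟨ystar, -, huniq⟩ := unique_nbr hBS hσ hsσ hζs
      have h1 : c = ystar := huniq c ⟨hcσ, gsymm hcζ⟩
      have h2 : x₀ = ystar := huniq x₀ ⟨hx₀σ, gsymm hx₀ζ⟩
      rw [h1, ← h2]
      exact hzx₀
    have hzζ : GeomCollinear 𝓛 z ζ := hdag ζ hζ z hzu hzv hzz
    intro w hwu hwv hwζ
    exact XCL1 hBS huv hζu hζv hsu hsv hζs hzζ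
      (fun c hcu hcv hcζ hcs => setid c hcu hcv hcζ hcs) w hwu hwv hwζ
  have hnd0 : ¬ ∀ s, GeomCollinear 𝓛 s u → GeomCollinear 𝓛 s v → GeomCollinear 𝓛 z s :=
    fun h => NDrad hBS hnondeg huv hzu hzv h
  push_neg at hnd0
  obtain ⟨s₀, hs₀u, hs₀v, hzs₀⟩ := hnd0
  obtain ⟨ζ₀, hζ₀lam, hs₀ζ₀⟩ := exists_nbr hline3 hpointline hBS s₀ hlam
  exact hzs₀ (hζdom ζ₀ hζ₀lam s₀ hs₀u hs₀v hs₀ζ₀)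

/-- Covering lemma: the perp-set of an opposite pair cannot be covered by the perps of
`p₁` and `p₂` while meeting the complement of each. -/
private lemma COV
    (hline3 : ∀ l ∈ 𝓛, 3 ≤ l.encard)
    (hunique : ∀ p q : P, p ≠ q → ∀ l₁ ∈ 𝓛, ∀ l₂ ∈ 𝓛,
      p ∈ l₁ → q ∈ l₁ → p ∈ l₂ → q ∈ l₂ → l₁ = l₂)
    (hpointline : ∀ p : P, ∃ l ∈ 𝓛, p ∈ l)
    (hBS : ∀ p : P, ∀ l ∈ 𝓛, p ∉ l →
      (∃! q : P, q ∈ l ∧ GeomCollinear 𝓛 p q) ∨ (∀ q ∈ l, GeomCollinear 𝓛 p q))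
    (hnondeg : ∀ p : P, ∃ q : P, ¬ GeomCollinear 𝓛 p q)
    (hrank3 : ∀ l ∈ 𝓛, ∃ p : P, p ∉ l ∧ ∀ q ∈ l, GeomCollinear 𝓛 p q)
    {u v pa pb : P} (huv : ¬ GeomCollinear 𝓛 u v)
    (cover : ∀ x, GeomCollinear 𝓛 x u → GeomCollinear 𝓛 x v →
      GeomCollinear 𝓛 x pa ∨ GeomCollinear 𝓛 x pb)
    {z w : P} (hzu : GeomCollinear 𝓛 z u) (hzv : GeomCollinear 𝓛 z v)
    (hzpa : ¬ GeomCollinear 𝓛 z pa)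
    (hwu : GeomCollinear 𝓛 w u) (hwv : GeomCollinear 𝓛 w v)
    (hwpb : ¬ GeomCollinear 𝓛 w pb) : False := by
  have cross : ∀ α β, GeomCollinear 𝓛 α u → GeomCollinear 𝓛 α v → ¬ GeomCollinear 𝓛 α pa →
      GeomCollinear 𝓛 β u → GeomCollinear 𝓛 β v → ¬ GeomCollinear 𝓛 β pb →
      ¬ GeomCollinear 𝓛 α β := by
    intro α β hαu hαv hαpa hβu hβv hβpb hcol
    have hβpa : GeomCollinear 𝓛 β pa := (cover β hβu hβv).resolve_right hβpb
    have hαpb : GeomCollinear 𝓛 α pb := (cover α hαu hαv).resolve_left hαpa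
    have hαβ' : α ≠ β := by rintro rfl; exact hαpa hβpa
    obtain ⟨L, hL, hαL, hβL⟩ := hcol
    have hLX : ∀ k ∈ L, GeomCollinear 𝓛 k u ∧ GeomCollinear 𝓛 k v := by
      intro k hk
      constructor
      · exact gsymm (two_imp_all hBS hL hαL hβL hαβ' (gsymm hαu) (gsymm hβu) k hk)
      · exact gsymm (two_imp_all hBS hL hαL hβL hαβ' (gsymm hαv) (gsymm hβv) k hk)
    have hpaα : ¬ GeomCollinear 𝓛 pa α := fun h => hαpa (gsymm h)
    obtain ⟨f₁, -, huniq₁⟩ := unique_nbr hBS hL hαL hpaα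
    have hpbβ : ¬ GeomCollinear 𝓛 pb β := fun h => hβpb (gsymm h)
    obtain ⟨f₂, -, huniq₂⟩ := unique_nbr hBS hL hβL hpbβ
    obtain ⟨γ, hγL, hγα, hγβ⟩ := thick3 hline3 hL f₂ f₁
    have hγpa : ¬ GeomCollinear 𝓛 γ pa := fun h => hγβ (huniq₁ γ ⟨hγL, gsymm h⟩)
    have hγpb : ¬ GeomCollinear 𝓛 γ pb := fun h => hγα (huniq₂ γ ⟨hγL, gsymm h⟩)
    rcases cover γ (hLX γ hγL).1 (hLX γ hγL).2 with h | h
    · exact hγpa h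
    · exact hγpb h
  -- a line of X through z
  obtain ⟨y₁, hy₁u, hy₁v, hzy₁, hy₁z⟩ :=
    xline_exists hline3 hunique hpointline hBS hrank3 huv hzu hzv
  obtain ⟨M, hM, hzM, hy₁M⟩ := hzy₁
  have hzy₁' : z ≠ y₁ := fun h => hy₁z h.symm
  have hMX : ∀ k ∈ M, GeomCollinear 𝓛 k u ∧ GeomCollinear 𝓛 k v := by
    intro k hk
    constructor
    · exact gsymm (two_imp_all hBS hM hzM hy₁M hzy₁' (gsymm hzu) (gsymm hy₁u) k hk)
    · exact gsymm (two_imp_all hBS hM hzM hy₁M hzy₁' (gsymm hzv) (gsymm hy₁v) k hk)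
  -- the unique point of M collinear with pa
  have hpaz : ¬ GeomCollinear 𝓛 pa z := fun h => hzpa (gsymm h)
  obtain ⟨y, ⟨hyM, hpay⟩, huniqM⟩ := unique_nbr hBS hM hzM hpaz
  -- M is entirely collinear with pb
  obtain ⟨k₁, hk₁M, hk₁y, -⟩ := thick3 hline3 hM y y
  obtain ⟨k₂, hk₂M, hk₂y, hk₂k₁⟩ := thick3 hline3 hM y k₁
  have hknpa : ∀ k ∈ M, k ≠ y → ¬ GeomCollinear 𝓛 k pa := by
    intro k hk hky h
    exact hky (huniqM k ⟨hk, gsymm h⟩)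
  have hk₁pb : GeomCollinear 𝓛 pb k₁ :=
    gsymm ((cover k₁ (hMX k₁ hk₁M).1 (hMX k₁ hk₁M).2).resolve_left (hknpa k₁ hk₁M hk₁y))
  have hk₂pb : GeomCollinear 𝓛 pb k₂ :=
    gsymm ((cover k₂ (hMX k₂ hk₂M).1 (hMX k₂ hk₂M).2).resolve_left (hknpa k₂ hk₂M hk₂y))
  have hMpb : ∀ k ∈ M, GeomCollinear 𝓛 pb k :=
    two_imp_all hBS hM hk₁M hk₂M (fun h => hk₂k₁ h.symm) hk₁pb hk₂pb
  have hypb : GeomCollinear 𝓛 y pb := gsymm (hMpb y hyM)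
  -- w is collinear with y
  obtain ⟨x, hxM, hwx⟩ := exists_nbr hline3 hpointline hBS w hM
  have hxy : x = y := by
    by_contra hne
    exact cross x w (hMX x hxM).1 (hMX x hxM).2 (hknpa x hxM hne) hwu hwv hwpb (gsymm hwx)
  have hwy : GeomCollinear 𝓛 w y := hxy ▸ hwx
  have hyz : y ≠ z := by rintro rfl; exact hzpa (gsymm hpay)
  have hzw : ¬ GeomCollinear 𝓛 z w := cross z w hzu hzv hzpa hwu hwv hwpb
  have hyu : GeomCollinear 𝓛 y u := (hMX y hyM).1
  have hyv : GeomCollinear 𝓛 y v := (hMX y hyM).2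
  have hyz' : GeomCollinear 𝓛 y z := of_mem hM hyM hzM
  -- y does not dominate X ∩ z^⊥ ∩ w^⊥
  have hE : ¬ ∀ c, GeomCollinear 𝓛 c u → GeomCollinear 𝓛 c v →
      GeomCollinear 𝓛 c z → GeomCollinear 𝓛 c w → GeomCollinear 𝓛 y c := by
    intro domh
    have hconc := XCL1 hBS huv hzu hzv hwu hwv hzw hyz' domh
    exact XPI hline3 hpointline hBS hnondeg huv hzu hzv hyu hyv
      (fun w' hw'u hw'v hw'z => gsymm (hconc w' hw'u hw'v hw'z)) hyz.symm
  push_neg at hE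
  obtain ⟨E, hEu, hEv, hEz, hEw, hyE⟩ := hE
  have hEpa : GeomCollinear 𝓛 E pa := by
    by_contra h
    exact cross E w hEu hEv h hwu hwv hwpb hEw
  have hEpb : GeomCollinear 𝓛 E pb := by
    by_contra h
    exact cross z E hzu hzv hzpa hEu hEv h (gsymm hEz)
  have hEM : E ∉ M := fun h => hyE (of_mem hM hyM h)
  have hEw' : E ≠ w := by rintro rfl; exact hzw (gsymm hEz)
  obtain ⟨N, hN, hEN, hwN⟩ := hEw
  have hNX : ∀ k ∈ N, GeomCollinear 𝓛 k u ∧ GeomCollinear 𝓛 k v := by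
    intro k hk
    constructor
    · exact gsymm (two_imp_all hBS hN hEN hwN hEw' (gsymm hEu) (gsymm hwu) k hk)
    · exact gsymm (two_imp_all hBS hN hEN hwN hEw' (gsymm hEv) (gsymm hwv) k hk)
  have hpbw : ¬ GeomCollinear 𝓛 pb w := fun h => hwpb (gsymm h)
  obtain ⟨g, -, huniqN⟩ := unique_nbr hBS hN hwN hpbw
  have hgE : E = g := huniqN E ⟨hEN, gsymm hEpb⟩
  obtain ⟨c, hcM, hcz, hcy⟩ := thick3 hline3 hM z y
  have hcpa : ¬ GeomCollinear 𝓛 c pa := hknpa c hcM hcy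
  obtain ⟨x', hx'N, hcx'⟩ := exists_nbr hline3 hpointline hBS c hN
  have hx'E : x' = E := by
    by_contra hne
    have hx'pb : ¬ GeomCollinear 𝓛 x' pb := by
      intro h
      exact hne ((huniqN x' ⟨hx'N, gsymm h⟩).trans hgE.symm)
    exact cross c x' (hMX c hcM).1 (hMX c hcM).2 hcpa
      (hNX x' hx'N).1 (hNX x' hx'N).2 hx'pb hcx'
  have hEc : GeomCollinear 𝓛 E c := hx'E ▸ (gsymm hcx')
  have hzc : z ≠ c := fun h => hcz h.symm
  have hall := two_imp_all hBS hM hzM hcM hzc hEz hEc y hyM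
  exact hyE (gsymm hall)

/-- Pencil lemma: given `q` opposite `pa, pb`, a line `l` through `q` and a point `r`
collinear with all of `l` but not on it, the pencil contains a point of `S` other than `q`
collinear with all of `l` and with `r`. -/
private lemma exists_S_nbr
    (hline3 : ∀ l ∈ 𝓛, 3 ≤ l.encard)
    (hunique : ∀ p q : P, p ≠ q → ∀ l₁ ∈ 𝓛, ∀ l₂ ∈ 𝓛,
      p ∈ l₁ → q ∈ l₁ → p ∈ l₂ → q ∈ l₂ → l₁ = l₂)
    (hBS : ∀ p : P, ∀ l ∈ 𝓛, p ∉ l →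
      (∃! q : P, q ∈ l ∧ GeomCollinear 𝓛 p q) ∨ (∀ q ∈ l, GeomCollinear 𝓛 p q))
    {q pa pb : P} {l : Set P} (hl : l ∈ 𝓛) (hql : q ∈ l)
    (hqa : ¬ GeomCollinear 𝓛 q pa) (hqb : ¬ GeomCollinear 𝓛 q pb)
    {r : P} (hrl : r ∉ l) (hr : ∀ k ∈ l, GeomCollinear 𝓛 r k) :
    ∃ a, ¬ GeomCollinear 𝓛 a pa ∧ ¬ GeomCollinear 𝓛 a pb ∧ a ≠ q ∧
      (∀ k ∈ l, GeomCollinear 𝓛 a k) ∧ GeomCollinear 𝓛 a r := by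
  by_cases hcase : ∃ b, b ∈ l ∧ b ≠ q ∧ ∃ m ∈ 𝓛, r ∈ m ∧ b ∈ m ∧
      (∃ e₁ ∈ m, ¬ GeomCollinear 𝓛 pa e₁) ∧ (∃ e₂ ∈ m, ¬ GeomCollinear 𝓛 pb e₂)
  · obtain ⟨b, hbl, hbq, m, hm, hrm, hbm, ⟨e₁, he₁m, hpae₁⟩, ⟨e₂, he₂m, hpbe₂⟩⟩ := hcase
    obtain ⟨f₁, -, huniq₁⟩ := unique_nbr hBS hm he₁m hpae₁
    obtain ⟨f₂, -, huniq₂⟩ := unique_nbr hBS hm he₂m hpbe₂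
    obtain ⟨a, ham, haf₁, haf₂⟩ := thick3 hline3 hm f₁ f₂
    have hapa : ¬ GeomCollinear 𝓛 a pa := fun h => haf₁ (huniq₁ a ⟨ham, gsymm h⟩)
    have hapb : ¬ GeomCollinear 𝓛 a pb := fun h => haf₂ (huniq₂ a ⟨ham, gsymm h⟩)
    have hqm : q ∉ m := by
      intro hq
      have hml : m = l := line_eq hunique (Ne.symm hbq) hm hl hq hbm hql hbl
      exact hrl (hml ▸ hrm)
    have haq : a ≠ q := fun h => hqm (h ▸ ham)
    have hrb : r ≠ b := fun h => hrl (h ▸ hbl)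
    refine ⟨a, hapa, hapb, haq, ?_, of_mem hm ham hrm⟩
    intro k hk
    exact gsymm (two_imp_all hBS hm hrm hbm hrb (gsymm (hr k hk)) (of_mem hl hk hbl) a ham)
  · have D : ∀ b, b ∈ l → b ≠ q → ∀ m, m ∈ 𝓛 → r ∈ m → b ∈ m →
        (∀ e ∈ m, GeomCollinear 𝓛 pa e) ∨ (∀ e ∈ m, GeomCollinear 𝓛 pb e) := by
      intro b hbl hbq m hm hrm hbm
      by_contra hD
      push_neg at hD
      obtain ⟨⟨e₁, he₁, he₁'⟩, ⟨e₂, he₂, he₂'⟩⟩ := hD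
      exact hcase ⟨b, hbl, hbq, m, hm, hrm, hbm, ⟨e₁, he₁, he₁'⟩, ⟨e₂, he₂, he₂'⟩⟩
    obtain ⟨b₁, hb₁l, hb₁q, -⟩ := thick3 hline3 hl q q
    obtain ⟨b₂, hb₂l, hb₂q, hb₂b₁⟩ := thick3 hline3 hl q b₁
    obtain ⟨m₁, hm₁, hrm₁, hb₁m₁⟩ := hr b₁ hb₁l
    obtain ⟨m₂, hm₂, hrm₂, hb₂m₂⟩ := hr b₂ hb₂l
    have hrpapb : GeomCollinear 𝓛 pa r ∧ GeomCollinear 𝓛 pb r := by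
      rcases D b₁ hb₁l hb₁q m₁ hm₁ hrm₁ hb₁m₁ with A₁ | B₁ <;>
        rcases D b₂ hb₂l hb₂q m₂ hm₂ hrm₂ hb₂m₂ with A₂ | B₂
      · exfalso
        have := two_imp_all hBS hl hb₁l hb₂l (fun h => hb₂b₁ h.symm)
          (A₁ b₁ hb₁m₁) (A₂ b₂ hb₂m₂) q hql
        exact hqa (gsymm this)
      · exact ⟨A₁ r hrm₁, B₂ r hrm₂⟩
      · exact ⟨A₂ r hrm₂, B₁ r hrm₁⟩
      · exfalso
        have := two_imp_all hBS hl hb₁l hb₂l (fun h => hb₂b₁ h.symm)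
          (B₁ b₁ hb₁m₁) (B₂ b₂ hb₂m₂) q hql
        exact hqb (gsymm this)
    obtain ⟨hpar, hpbr⟩ := hrpapb
    obtain ⟨mq, hmq, hrmq, hqmq⟩ := hr q hql
    have hpaq : ¬ GeomCollinear 𝓛 pa q := fun h => hqa (gsymm h)
    have hpbq : ¬ GeomCollinear 𝓛 pb q := fun h => hqb (gsymm h)
    obtain ⟨f, -, uniqa⟩ := unique_nbr hBS hmq hqmq hpaq
    obtain ⟨g, -, uniqb⟩ := unique_nbr hBS hmq hqmq hpbq
    have hfr : r = f := uniqa r ⟨hrmq, hpar⟩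
    have hgr : r = g := uniqb r ⟨hrmq, hpbr⟩
    obtain ⟨a, hamq, har, haq⟩ := thick3 hline3 hmq r q
    have hapa : ¬ GeomCollinear 𝓛 a pa := by
      intro h
      exact har ((uniqa a ⟨hamq, gsymm h⟩).trans hfr.symm)
    have hapb : ¬ GeomCollinear 𝓛 a pb := by
      intro h
      exact har ((uniqb a ⟨hamq, gsymm h⟩).trans hgr.symm)
    have hrq : r ≠ q := fun h => hrl (h ▸ hql)
    refine ⟨a, hapa, hapb, haq, ?_, of_mem hmq hamq hrmq⟩
    intro k hk
    exact gsymm (two_imp_all hBS hmq hrmq hqmq hrq (gsymm (hr k hk)) (of_mem hl hk hql) a hamq)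

/-- Hyperbolic-line lemma: if the perp of the pair `(α, q')` lies in `p^⊥`,
then any point collinear with both `α` and `p` is collinear with `q'`. -/
private lemma HYP
    (hBS : ∀ p : P, ∀ l ∈ 𝓛, p ∉ l →
      (∃! q : P, q ∈ l ∧ GeomCollinear 𝓛 p q) ∨ (∀ q ∈ l, GeomCollinear 𝓛 p q))
    {α q' p : P} (hαq' : ¬ GeomCollinear 𝓛 α q')
    (hαp : ¬ GeomCollinear 𝓛 α p)
    (hX : ∀ x, GeomCollinear 𝓛 x α → GeomCollinear 𝓛 x q' → GeomCollinear 𝓛 x p)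
    {t : P} (htα : GeomCollinear 𝓛 t α) (htp : GeomCollinear 𝓛 t p) :
    GeomCollinear 𝓛 t q' := by
  obtain ⟨ν, hν, htν, hαν⟩ := htα
  have hq'α : ¬ GeomCollinear 𝓛 q' α := fun h => hαq' (gsymm h)
  obtain ⟨τ, ⟨hτν, hq'τ⟩, -⟩ := unique_nbr hBS hν hαν hq'α
  have hτα : GeomCollinear 𝓛 τ α := of_mem hν hτν hαν
  have hτp : GeomCollinear 𝓛 τ p := hX τ hτα (gsymm hq'τ)
  by_cases htτ : t = τ
  · exact htτ ▸ (gsymm hq'τ)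
  · exfalso
    have := two_imp_all hBS hν htν hτν htτ (gsymm htp) (gsymm hτp) α hαν
    exact hαp (gsymm this)

/-- If the perps `X(q,q')` and `X(a,q')` of two pairs sharing the end `q'` are both contained
in the same `p^⊥`, with `a` collinear with `q` and distinct from it, we get a contradiction. -/
private lemma PAIRCONTRA
    (hBS : ∀ p : P, ∀ l ∈ 𝓛, p ∉ l →
      (∃! q : P, q ∈ l ∧ GeomCollinear 𝓛 p q) ∨ (∀ q ∈ l, GeomCollinear 𝓛 p q))
    (hnondeg : ∀ p : P, ∃ q : P, ¬ GeomCollinear 𝓛 p q)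
    {q q' a p : P}
    (hqq' : ¬ GeomCollinear 𝓛 q q') (haq' : ¬ GeomCollinear 𝓛 a q')
    (haq : GeomCollinear 𝓛 a q) (hane : a ≠ q)
    (hq'p : ¬ GeomCollinear 𝓛 q' p)
    (hXq : ∀ x, GeomCollinear 𝓛 x q → GeomCollinear 𝓛 x q' → GeomCollinear 𝓛 x p)
    (hXa : ∀ x, GeomCollinear 𝓛 x a → GeomCollinear 𝓛 x q' → GeomCollinear 𝓛 x p) :
    False := by
  have hdom : ∀ x, GeomCollinear 𝓛 x q → GeomCollinear 𝓛 x q' → GeomCollinear 𝓛 x a := by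
    intro x hxq hxq'
    obtain ⟨σ, hσ, hq'σ, hxσ⟩ := gsymm hxq'
    obtain ⟨xa, ⟨hxaσ, haxa⟩, -⟩ := unique_nbr hBS hσ hq'σ haq'
    have hxap : GeomCollinear 𝓛 xa p := hXa xa (gsymm haxa) (of_mem hσ hxaσ hq'σ)
    have hpq' : ¬ GeomCollinear 𝓛 p q' := fun h => hq'p (gsymm h)
    obtain ⟨f, -, uniqf⟩ := unique_nbr hBS hσ hq'σ hpq'
    have h1 : x = f := uniqf x ⟨hxσ, gsymm (hXq x hxq hxq')⟩
    have h2 : xa = f := uniqf xa ⟨hxaσ, gsymm hxap⟩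
    rw [show x = xa from h1.trans h2.symm]
    exact gsymm haxa
  obtain ⟨lam, hlam, hqlam, halam⟩ := gsymm haq
  have hq'q : ¬ GeomCollinear 𝓛 q' q := fun h => hqq' (gsymm h)
  obtain ⟨t₀, ⟨ht₀lam, hq't₀⟩, -⟩ := unique_nbr hBS hlam hqlam hq'q
  have ht₀q : GeomCollinear 𝓛 t₀ q := of_mem hlam ht₀lam hqlam
  have ht₀q' : GeomCollinear 𝓛 t₀ q' := gsymm hq't₀
  have domt₀ : ∀ x, GeomCollinear 𝓛 x q → GeomCollinear 𝓛 x q' → GeomCollinear 𝓛 t₀ x := by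
    intro x hxq hxq'
    have hxa : GeomCollinear 𝓛 x a := hdom x hxq hxq'
    exact gsymm (two_imp_all hBS hlam hqlam halam (Ne.symm hane) hxq hxa t₀ ht₀lam)
  exact NDrad hBS hnondeg hqq' ht₀q ht₀q' domt₀

/-- Endgame: given the one-sided covering `X(q,q') ⊆ pa^⊥`, produce a path. -/
private lemma FINAL
    (hline3 : ∀ l ∈ 𝓛, 3 ≤ l.encard)
    (hunique : ∀ p q : P, p ≠ q → ∀ l₁ ∈ 𝓛, ∀ l₂ ∈ 𝓛,
      p ∈ l₁ → q ∈ l₁ → p ∈ l₂ → q ∈ l₂ → l₁ = l₂)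
    (hpointline : ∀ p : P, ∃ l ∈ 𝓛, p ∈ l)
    (hBS : ∀ p : P, ∀ l ∈ 𝓛, p ∉ l →
      (∃! q : P, q ∈ l ∧ GeomCollinear 𝓛 p q) ∨ (∀ q ∈ l, GeomCollinear 𝓛 p q))
    (hnondeg : ∀ p : P, ∃ q : P, ¬ GeomCollinear 𝓛 p q)
    (hrank3 : ∀ l ∈ 𝓛, ∃ p : P, p ∉ l ∧ ∀ q ∈ l, GeomCollinear 𝓛 p q)
    {q q' pa pb : P}
    (hqq' : ¬ GeomCollinear 𝓛 q q')
    (hqpa : ¬ GeomCollinear 𝓛 q pa) (hqpb : ¬ GeomCollinear 𝓛 q pb)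
    (hq'pa : ¬ GeomCollinear 𝓛 q' pa) (hq'pb : ¬ GeomCollinear 𝓛 q' pb)
    (hP : ∀ x, GeomCollinear 𝓛 x q → GeomCollinear 𝓛 x q' → GeomCollinear 𝓛 x pa) :
    ∃ (n : ℕ) (x : ℕ → P), x 0 = q ∧ x n = q' ∧
      (∀ i ≤ n, ¬ GeomCollinear 𝓛 (x i) pa ∧ ¬ GeomCollinear 𝓛 (x i) pb) ∧
      ∀ i < n, GeomCollinear 𝓛 (x i) (x (i + 1)) := by
  obtain ⟨l₀, hl₀, hql₀⟩ := hpointline q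
  obtain ⟨x₀, hx₀l₀, hq'x₀⟩ := exists_nbr hline3 hpointline hBS q' hl₀
  have hx₀q : GeomCollinear 𝓛 x₀ q := of_mem hl₀ hx₀l₀ hql₀
  have hx₀q' : GeomCollinear 𝓛 x₀ q' := gsymm hq'x₀
  have hx₀ne : x₀ ≠ q := by rintro rfl; exact hqq' hx₀q'
  obtain ⟨r₀, hr₀l₀, hr₀⟩ := hrank3 l₀ hl₀
  obtain ⟨a₁, ha₁pa, ha₁pb, ha₁q, ha₁l, ha₁r⟩ :=
    exists_S_nbr hline3 hunique hBS hl₀ hql₀ hqpa hqpb hr₀l₀ hr₀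
  have ha₁colq : GeomCollinear 𝓛 a₁ q := ha₁l q hql₀
  have ha₁x₀ : GeomCollinear 𝓛 a₁ x₀ := ha₁l x₀ hx₀l₀
  by_cases ha₁q' : GeomCollinear 𝓛 a₁ q'
  · -- path of length 2
    refine ⟨2, fun i => match i with | 0 => q | 1 => a₁ | _ => q', rfl, rfl, ?_, ?_⟩
    · intro i hi
      interval_cases i
      · exact ⟨hqpa, hqpb⟩
      · exact ⟨ha₁pa, ha₁pb⟩
      · exact ⟨hq'pa, hq'pb⟩
    · intro i hi
      interval_cases i
      · exact gsymm ha₁colq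
      · exact ha₁q'
  by_cases hX₁S : ∃ s, GeomCollinear 𝓛 s a₁ ∧ GeomCollinear 𝓛 s q' ∧
      ¬ GeomCollinear 𝓛 s pa ∧ ¬ GeomCollinear 𝓛 s pb
  · obtain ⟨s, hsa₁, hsq', hspa, hspb⟩ := hX₁S
    refine ⟨3, fun i => match i with | 0 => q | 1 => a₁ | 2 => s | _ => q', rfl, rfl, ?_, ?_⟩
    · intro i hi
      interval_cases i
      · exact ⟨hqpa, hqpb⟩
      · exact ⟨ha₁pa, ha₁pb⟩
      · exact ⟨hspa, hspb⟩
      · exact ⟨hq'pa, hq'pb⟩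
    · intro i hi
      interval_cases i
      · exact gsymm ha₁colq
      · exact gsymm hsa₁
      · exact hsq'
  -- otherwise X(a₁, q') is covered; split it
  have cover₁ : ∀ x, GeomCollinear 𝓛 x a₁ → GeomCollinear 𝓛 x q' →
      GeomCollinear 𝓛 x pa ∨ GeomCollinear 𝓛 x pb := by
    intro x h1 h2
    by_contra hcc
    push_neg at hcc
    exact hX₁S ⟨x, h1, h2, hcc.1, hcc.2⟩
  have hsplit : (∀ x, GeomCollinear 𝓛 x a₁ → GeomCollinear 𝓛 x q' → GeomCollinear 𝓛 x pa) ∨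
      (∀ x, GeomCollinear 𝓛 x a₁ → GeomCollinear 𝓛 x q' → GeomCollinear 𝓛 x pb) := by
    by_cases hA : ∃ z, GeomCollinear 𝓛 z a₁ ∧ GeomCollinear 𝓛 z q' ∧ ¬ GeomCollinear 𝓛 z pa
    · by_cases hB : ∃ w, GeomCollinear 𝓛 w a₁ ∧ GeomCollinear 𝓛 w q' ∧
          ¬ GeomCollinear 𝓛 w pb
      · obtain ⟨z, hz1, hz2, hz3⟩ := hA
        obtain ⟨w, hw1, hw2, hw3⟩ := hB
        exact absurd (COV hline3 hunique hpointline hBS hnondeg hrank3 ha₁q' cover₁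
          hz1 hz2 hz3 hw1 hw2 hw3) id
      · right
        intro x h1 h2
        by_contra hx
        exact hB ⟨x, h1, h2, hx⟩
    · left
      intro x h1 h2
      by_contra hx
      exact hA ⟨x, h1, h2, hx⟩
  rcases hsplit with hPa | hPb
  · exact absurd (PAIRCONTRA hBS hnondeg hqq' ha₁q' ha₁colq ha₁q hq'pa hP hPa) id
  -- main case : X(a₁, q') ⊆ pb^⊥
  -- KSTEP
  have KSTEP : ∀ k, GeomCollinear 𝓛 k q → GeomCollinear 𝓛 k a₁ → k ≠ q → k ≠ a₁ →
      ¬ GeomCollinear 𝓛 k q' →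
      (∃ (n : ℕ) (x : ℕ → P), x 0 = q ∧ x n = q' ∧
        (∀ i ≤ n, ¬ GeomCollinear 𝓛 (x i) pa ∧ ¬ GeomCollinear 𝓛 (x i) pb) ∧
        ∀ i < n, GeomCollinear 𝓛 (x i) (x (i + 1))) := by
    intro k hkq hka₁ hkq0 hka0 hkq'
    by_cases hkS : ¬ GeomCollinear 𝓛 k pa ∧ ¬ GeomCollinear 𝓛 k pb
    · -- k is in S
      obtain ⟨hkpa, hkpb⟩ := hkS
      by_cases hXkS : ∃ s, GeomCollinear 𝓛 s k ∧ GeomCollinear 𝓛 s q' ∧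
          ¬ GeomCollinear 𝓛 s pa ∧ ¬ GeomCollinear 𝓛 s pb
      · obtain ⟨s, hsk, hsq', hspa, hspb⟩ := hXkS
        refine ⟨3, fun i => match i with | 0 => q | 1 => k | 2 => s | _ => q', rfl, rfl, ?_, ?_⟩
        · intro i hi
          interval_cases i
          · exact ⟨hqpa, hqpb⟩
          · exact ⟨hkpa, hkpb⟩
          · exact ⟨hspa, hspb⟩
          · exact ⟨hq'pa, hq'pb⟩
        · intro i hi
          interval_cases i
          · exact gsymm hkq
          · exact gsymm hsk
          · exact hsq'
      · exfalso
        have coverk : ∀ x, GeomCollinear 𝓛 x k → GeomCollinear 𝓛 x q' →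
            GeomCollinear 𝓛 x pa ∨ GeomCollinear 𝓛 x pb := by
          intro x h1 h2
          by_contra hcc
          push_neg at hcc
          exact hXkS ⟨x, h1, h2, hcc.1, hcc.2⟩
        have hsplitk : (∀ x, GeomCollinear 𝓛 x k → GeomCollinear 𝓛 x q' →
            GeomCollinear 𝓛 x pa) ∨
            (∀ x, GeomCollinear 𝓛 x k → GeomCollinear 𝓛 x q' → GeomCollinear 𝓛 x pb) := by
          by_cases hA : ∃ z, GeomCollinear 𝓛 z k ∧ GeomCollinear 𝓛 z q' ∧
              ¬ GeomCollinear 𝓛 z pa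
          · by_cases hB : ∃ w, GeomCollinear 𝓛 w k ∧ GeomCollinear 𝓛 w q' ∧
                ¬ GeomCollinear 𝓛 w pb
            · obtain ⟨z, hz1, hz2, hz3⟩ := hA
              obtain ⟨w, hw1, hw2, hw3⟩ := hB
              exact absurd (COV hline3 hunique hpointline hBS hnondeg hrank3 hkq' coverk
                hz1 hz2 hz3 hw1 hw2 hw3) id
            · right
              intro x h1 h2
              by_contra hx
              exact hB ⟨x, h1, h2, hx⟩
          · left
            intro x h1 h2
            by_contra hx
            exact hA ⟨x, h1, h2, hx⟩
        rcases hsplitk with hk1 | hk2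
        · exact PAIRCONTRA hBS hnondeg hqq' hkq' hkq hkq0 hq'pa hP hk1
        · exact PAIRCONTRA hBS hnondeg ha₁q' hkq' hka₁ hka0 hq'pb hPb hk2
    · exfalso
      rcases not_and_or.mp hkS with h | h
      · rw [not_not] at h
        exact hkq' (HYP hBS hqq' hqpa hP hkq h)
      · rw [not_not] at h
        exact hkq' (HYP hBS ha₁q' ha₁pb hPb hka₁ h)
  by_cases ha₁l₀ : a₁ ∈ l₀
  · -- use the line through r₀ and q
    obtain ⟨m, hm, hr₀m, hqm⟩ := hr₀ q hql₀
    have ha₁m : a₁ ∉ m := by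
      intro h
      have hml : m = l₀ := line_eq hunique ha₁q hm hl₀ h hqm ha₁l₀ hql₀
      exact hr₀l₀ (hml ▸ hr₀m)
    have hr₀q : r₀ ≠ q := fun h => hr₀l₀ (h ▸ hql₀)
    have hmq : ∀ k ∈ m, GeomCollinear 𝓛 k q := fun k hk => gsymm (of_mem hm hqm hk)
    have hma₁ : ∀ k ∈ m, GeomCollinear 𝓛 k a₁ := by
      intro k hk
      exact gsymm (two_imp_all hBS hm hr₀m hqm hr₀q ha₁r ha₁colq k hk)
    obtain ⟨k₁, hk₁m, hk₁q, -⟩ := thick3 hline3 hm q q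
    obtain ⟨k₂, hk₂m, hk₂q, hk₂k₁⟩ := thick3 hline3 hm q k₁
    by_cases h1 : GeomCollinear 𝓛 k₁ q'
    · by_cases h2 : GeomCollinear 𝓛 k₂ q'
      · exfalso
        have := two_imp_all hBS hm hk₁m hk₂m (fun h => hk₂k₁ h.symm)
          (gsymm h1) (gsymm h2) q hqm
        exact hqq' (gsymm this)
      · exact KSTEP k₂ (hmq k₂ hk₂m) (hma₁ k₂ hk₂m) hk₂q (fun h => ha₁m (h ▸ hk₂m)) h2
    · exact KSTEP k₁ (hmq k₁ hk₁m) (hma₁ k₁ hk₁m) hk₁q (fun h => ha₁m (h ▸ hk₁m)) h1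
  · -- use the line through a₁ and x₀
    have ha₁x₀ne : a₁ ≠ x₀ := by
      rintro rfl
      exact ha₁pa (hP a₁ hx₀q hx₀q')
    obtain ⟨m, hm, ha₁m, hx₀m⟩ := ha₁x₀
    have hqm : q ∉ m := by
      intro h
      have hml : m = l₀ := line_eq hunique hx₀ne hm hl₀ hx₀m h hx₀l₀ hql₀
      exact ha₁l₀ (hml ▸ ha₁m)
    have hma₁ : ∀ k ∈ m, GeomCollinear 𝓛 k a₁ := fun k hk => gsymm (of_mem hm ha₁m hk)
    have hmq : ∀ k ∈ m, GeomCollinear 𝓛 k q := by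
      intro k hk
      exact gsymm (two_imp_all hBS hm ha₁m hx₀m ha₁x₀ne (gsymm ha₁colq) (gsymm hx₀q) k hk)
    obtain ⟨k₁, hk₁m, hk₁a, -⟩ := thick3 hline3 hm a₁ a₁
    obtain ⟨k₂, hk₂m, hk₂a, hk₂k₁⟩ := thick3 hline3 hm a₁ k₁
    by_cases h1 : GeomCollinear 𝓛 k₁ q'
    · by_cases h2 : GeomCollinear 𝓛 k₂ q'
      · exfalso
        have := two_imp_all hBS hm hk₁m hk₂m (fun h => hk₂k₁ h.symm)
          (gsymm h1) (gsymm h2) a₁ ha₁m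
        exact ha₁q' (gsymm this)
      · exact KSTEP k₂ (hmq k₂ hk₂m) (hma₁ k₂ hk₂m) (fun h => hqm (h ▸ hk₂m)) hk₂a h2
    · exact KSTEP k₁ (hmq k₁ hk₁m) (hma₁ k₁ hk₁m) (fun h => hqm (h ▸ hk₁m)) hk₁a h1

end PolarProofAux

/-- In a thick polar space of rank at least `3`, the collinearity graph on
the set `S` of points opposite two given points `p₁, p₂` is connected. -/
theorem polar_space_points_opposite_two_points_connected
    {P : Type*} (𝓛 : Set (Set P))
    -- thick polar space of rank at least 3: axioms
    (hline3 : ∀ l ∈ 𝓛, 3 ≤ l.encard)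
    (hunique : ∀ p q : P, p ≠ q → ∀ l₁ ∈ 𝓛, ∀ l₂ ∈ 𝓛,
      p ∈ l₁ → q ∈ l₁ → p ∈ l₂ → q ∈ l₂ → l₁ = l₂)
    (hpointline : ∀ p : P, ∃ l ∈ 𝓛, p ∈ l)
    (hBS : ∀ p : P, ∀ l ∈ 𝓛, p ∉ l →
      (∃! q : P, q ∈ l ∧ GeomCollinear 𝓛 p q) ∨ (∀ q ∈ l, GeomCollinear 𝓛 p q))
    (hnondeg : ∀ p : P, ∃ q : P, ¬ GeomCollinear 𝓛 p q)
    (hrank3 : ∀ l ∈ 𝓛, ∃ p : P, p ∉ l ∧ ∀ q ∈ l, GeomCollinear 𝓛 p q)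
    (p₁ p₂ : P)
    (S : Set P)
    (hS : S = {q : P | ¬ GeomCollinear 𝓛 q p₁ ∧ ¬ GeomCollinear 𝓛 q p₂}) :
    ∀ q ∈ S, ∀ q' ∈ S, ∃ (n : ℕ) (x : ℕ → P),
      x 0 = q ∧ x n = q' ∧ (∀ i ≤ n, x i ∈ S) ∧
      ∀ i < n, GeomCollinear 𝓛 (x i) (x (i + 1)) := by
  subst hS
  intro q hq q' hq'
  simp only [Set.mem_setOf_eq] at hq hq'
  obtain ⟨hqp₁, hqp₂⟩ := hq
  obtain ⟨hq'p₁, hq'p₂⟩ := hq'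
  by_cases hqq : q = q'
  · refine ⟨0, fun _ => q, rfl, hqq ▸ rfl, ?_, ?_⟩
    · intro i hi
      exact Set.mem_setOf_eq ▸ ⟨hqp₁, hqp₂⟩
    · intro i hi
      omega
  by_cases hcol : GeomCollinear 𝓛 q q'
  · refine ⟨1, fun i => match i with | 0 => q | _ => q', rfl, rfl, ?_, ?_⟩
    · intro i hi
      interval_cases i
      · exact Set.mem_setOf_eq ▸ ⟨hqp₁, hqp₂⟩
      · exact Set.mem_setOf_eq ▸ ⟨hq'p₁, hq'p₂⟩
    · intro i hi
      interval_cases i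
      exact hcol
  by_cases hX₀S : ∃ s, GeomCollinear 𝓛 s q ∧ GeomCollinear 𝓛 s q' ∧
      ¬ GeomCollinear 𝓛 s p₁ ∧ ¬ GeomCollinear 𝓛 s p₂
  · obtain ⟨s, hsq, hsq', hsp₁, hsp₂⟩ := hX₀S
    refine ⟨2, fun i => match i with | 0 => q | 1 => s | _ => q', rfl, rfl, ?_, ?_⟩
    · intro i hi
      interval_cases i
      · exact Set.mem_setOf_eq ▸ ⟨hqp₁, hqp₂⟩
      · exact Set.mem_setOf_eq ▸ ⟨hsp₁, hsp₂⟩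
      · exact Set.mem_setOf_eq ▸ ⟨hq'p₁, hq'p₂⟩
    · intro i hi
      interval_cases i
      · exact PolarProofAux.gsymm hsq
      · exact hsq'
  have cover₀ : ∀ x, GeomCollinear 𝓛 x q → GeomCollinear 𝓛 x q' →
      GeomCollinear 𝓛 x p₁ ∨ GeomCollinear 𝓛 x p₂ := by
    intro x h1 h2
    by_contra hcc
    push_neg at hcc
    exact hX₀S ⟨x, h1, h2, hcc.1, hcc.2⟩
  have hsplit : (∀ x, GeomCollinear 𝓛 x q → GeomCollinear 𝓛 x q' → GeomCollinear 𝓛 x p₁) ∨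
      (∀ x, GeomCollinear 𝓛 x q → GeomCollinear 𝓛 x q' → GeomCollinear 𝓛 x p₂) := by
    by_cases hA : ∃ z, GeomCollinear 𝓛 z q ∧ GeomCollinear 𝓛 z q' ∧ ¬ GeomCollinear 𝓛 z p₁
    · by_cases hB : ∃ w, GeomCollinear 𝓛 w q ∧ GeomCollinear 𝓛 w q' ∧
          ¬ GeomCollinear 𝓛 w p₂
      · obtain ⟨z, hz1, hz2, hz3⟩ := hA
        obtain ⟨w, hw1, hw2, hw3⟩ := hB
        exact absurd (PolarProofAux.COV hline3 hunique hpointline hBS hnondeg hrank3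
          hcol cover₀ hz1 hz2 hz3 hw1 hw2 hw3) id
      · right
        intro x h1 h2
        by_contra hx
        exact hB ⟨x, h1, h2, hx⟩
    · left
      intro x h1 h2
      by_contra hx
      exact hA ⟨x, h1, h2, hx⟩
  rcases hsplit with hP | hP
  · obtain ⟨n, x, h0, hn, hmem, hcols⟩ := PolarProofAux.FINAL hline3 hunique hpointline hBS
      hnondeg hrank3 hcol hqp₁ hqp₂ hq'p₁ hq'p₂ hP
    exact ⟨n, x, h0, hn, fun i hi => Set.mem_setOf_eq ▸ hmem i hi, hcols⟩
  · obtain ⟨n, x, h0, hn, hmem, hcols⟩ := PolarProofAux.FINAL hline3 hunique hpointline hBS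
      hnondeg hrank3 hcol hqp₂ hqp₁ hq'p₂ hq'p₁ hP
    exact ⟨n, x, h0, hn,
      fun i hi => Set.mem_setOf_eq ▸ ⟨(hmem i hi).2, (hmem i hi).1⟩, hcols⟩
end

section
/- Let (P, 𝓛) be a point-line geometry with P nonempty satisfying: every line contains at least 3 points; any two distinct points lie on at most one common line; every point lies on at least one line; (Buekenhout–Shult axiom) for every point p and every line l with p ∉ l, either exactly one point of l is collinear with p or every point of l is collinear with p; and (nondegeneracy) for every point p there is a point not collinear with p. Then P is not the union of two proper geometric hyperplanes: if H₁ and H₂ are geometric hyperplanes with H₁ ∪ H₂ = P, then H₁ = P or H₂ = P. -/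
/-- A subspace of a point-line geometry: every line containing at least two distinct points
of `S` is contained in `S`. -/
def IsGeomSubspace {P : Type*} (𝓛 : Set (Set P)) (S : Set P) : Prop :=
  ∀ l ∈ 𝓛, ∀ p ∈ l, ∀ q ∈ l, p ∈ S → q ∈ S → p ≠ q → l ⊆ S

/-- A geometric hyperplane: a subspace meeting every line. -/
def IsGeomHyperplane {P : Type*} (𝓛 : Set (Set P)) (H : Set P) : Prop :=
  IsGeomSubspace 𝓛 H ∧ ∀ l ∈ 𝓛, (l ∩ H).Nonempty

/-- Symmetry of collinearity. -/
lemma GeomCollinear.symm' {P : Type*} {𝓛 : Set (Set P)} {p q : P}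
    (h : GeomCollinear 𝓛 p q) : GeomCollinear 𝓛 q p := by
  obtain ⟨l, hl, hp, hq⟩ := h
  exact ⟨l, hl, hq, hp⟩

/-- A set with at least 3 elements has an element different from two given points. -/
lemma third_point {P : Type*} {s : Set P} (h : 3 ≤ s.encard) (a b : P) :
    ∃ c ∈ s, c ≠ a ∧ c ≠ b := by
  by_contra hc
  push_neg at hc
  have hsub : s ⊆ {a, b} := by
    intro x hx
    rcases eq_or_ne x a with rfl | hxa
    · exact Set.mem_insert _ _
    · exact Set.mem_insert_of_mem _ (hc x hx hxa)
  have h2 : s.encard ≤ 2 := by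
    calc s.encard ≤ (({a, b} : Set P)).encard := Set.encard_le_encard hsub
    _ ≤ 1 + 1 := by
        refine le_trans (Set.encard_insert_le _ _) ?_
        simp [Set.encard_singleton]
    _ = 2 := by norm_num
  have : (3 : ℕ∞) ≤ 2 := le_trans h h2
  norm_num at this

/-- Key perp lemma: if `m ⊆ B` is a line whose only point in `A` is `r`, and every line lies
in `A` or in `B`, then every point not collinear with `r` lies in `B`. -/
lemma aux_perp {P : Type*} {𝓛 : Set (Set P)}
    (hBS : ∀ p : P, ∀ l ∈ 𝓛, p ∉ l →
      (∃! q : P, q ∈ l ∧ GeomCollinear 𝓛 p q) ∨ (∀ q ∈ l, GeomCollinear 𝓛 p q))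
    {A B : Set P} (hlAB : ∀ l ∈ 𝓛, l ⊆ A ∨ l ⊆ B)
    {r : P} {m : Set P} (hm : m ∈ 𝓛) (hmB : m ⊆ B)
    (hmA : ∀ x ∈ m, x ∈ A → x = r) (hrm : r ∈ m)
    {u : P} (hu : ¬ GeomCollinear 𝓛 u r) : u ∈ B := by
  by_contra huB
  have hum : u ∉ m := fun h => huB (hmB h)
  rcases hBS u m hm hum with ⟨v, ⟨hvm, hcol⟩, -⟩ | hall
  · obtain ⟨n, hn, hun, hvn⟩ := hcol
    rcases hlAB n hn with hA | hB
    · have hvr := hmA v hvm (hA hvn)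
      exact hu (hvr ▸ ⟨n, hn, hun, hvn⟩)
    · exact huB (hB hun)
  · exact hu (hall r hrm)

/-- A nondegenerate polar space (Buekenhout–Shult axioms) with nonempty
point set is never the union of two proper geometric hyperplanes. -/
theorem polar_space_not_union_of_two_proper_hyperplanes
    {P : Type*} [Nonempty P] (𝓛 : Set (Set P))
    (hline3 : ∀ l ∈ 𝓛, 3 ≤ l.encard)
    (hunique : ∀ p q : P, p ≠ q → ∀ l₁ ∈ 𝓛, ∀ l₂ ∈ 𝓛,
      p ∈ l₁ → q ∈ l₁ → p ∈ l₂ → q ∈ l₂ → l₁ = l₂)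
    (hpointline : ∀ p : P, ∃ l ∈ 𝓛, p ∈ l)
    (hBS : ∀ p : P, ∀ l ∈ 𝓛, p ∉ l →
      (∃! q : P, q ∈ l ∧ GeomCollinear 𝓛 p q) ∨ (∀ q ∈ l, GeomCollinear 𝓛 p q))
    (hnondeg : ∀ p : P, ∃ q : P, ¬ GeomCollinear 𝓛 p q)
    (H₁ H₂ : Set P)
    (hH₁ : IsGeomHyperplane 𝓛 H₁) (hH₂ : IsGeomHyperplane 𝓛 H₂)
    (hcover : H₁ ∪ H₂ = Set.univ) :
    H₁ = Set.univ ∨ H₂ = Set.univ := by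
  by_contra hcon
  push_neg at hcon
  obtain ⟨hne₁, hne₂⟩ := hcon
  obtain ⟨q, hq⟩ := (Set.ne_univ_iff_exists_notMem _).mp hne₁
  obtain ⟨p, hp⟩ := (Set.ne_univ_iff_exists_notMem _).mp hne₂
  -- p ∉ H₂, q ∉ H₁
  have cover : ∀ x : P, x ∈ H₁ ∨ x ∈ H₂ := by
    intro x
    have : x ∈ H₁ ∪ H₂ := hcover ▸ Set.mem_univ x
    exact this
  -- every line lies entirely in H₁ or in H₂
  have hlAB : ∀ l ∈ 𝓛, l ⊆ H₁ ∨ l ⊆ H₂ := by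
    intro l hl
    by_contra hcc
    push_neg at hcc
    obtain ⟨hnA, hnB⟩ := hcc
    obtain ⟨a, hal, haA⟩ := Set.not_subset.mp hnA
    obtain ⟨b, hbl, hbB⟩ := Set.not_subset.mp hnB
    have haB : a ∈ H₂ := (cover a).resolve_left haA
    have hbA : b ∈ H₁ := (cover b).resolve_right hbB
    obtain ⟨c, hcl, hca, hcb⟩ := third_point (hline3 l hl) a b
    rcases cover c with hcA | hcB
    · exact haA (hH₁.1 l hl b hbl c hcl hbA hcA (Ne.symm hcb) hal)
    · exact hbB (hH₂.1 l hl a hal c hcl haB hcB (Ne.symm hca) hbl)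
  have hlBA : ∀ l ∈ 𝓛, l ⊆ H₂ ∨ l ⊆ H₁ := fun l hl => (hlAB l hl).symm
  -- p and q are not collinear
  have hpq : ¬ GeomCollinear 𝓛 p q := by
    rintro ⟨n, hn, hpn, hqn⟩
    rcases hlAB n hn with h | h
    · exact hq (h hqn)
    · exact hp (h hpn)
  -- a line l through p; it lies in H₁
  obtain ⟨l, hl, hpl⟩ := hpointline p
  have hlA : l ⊆ H₁ := (hlAB l hl).resolve_right (fun h => hp (h hpl))
  have hql : q ∉ l := fun h => hpq ⟨l, hl, hpl, h⟩
  -- unique point r of l collinear with q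
  have hBSql := hBS q l hl hql
  rcases hBSql with ⟨r, ⟨hrl, hqr⟩, hruniq⟩ | hall
  swap
  · exact hpq (hall p hpl).symm'
  -- line m through q and r
  obtain ⟨m, hm, hqm, hrm⟩ := hqr
  have hmB : m ⊆ H₂ := (hlAB m hm).resolve_left (fun h => hq (h hqm))
  have hrA : r ∈ H₁ := hlA hrl
  have hrB : r ∈ H₂ := hmB hrm
  -- l meets H₂ only in r, m meets H₁ only in r
  have hlB1 : ∀ x ∈ l, x ∈ H₂ → x = r := by
    intro x hxl hxB
    by_contra hne
    exact hp (hH₂.1 l hl x hxl r hrl hxB hrB hne hpl)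
  have hmA1 : ∀ x ∈ m, x ∈ H₁ → x = r := by
    intro x hxm hxA
    by_contra hne
    exact hq (hH₁.1 m hm x hxm r hrm hxA hrA hne hqm)
  -- perp lemma at r: anything noncollinear with r lies in H₁ ∩ H₂
  have perpR : ∀ u : P, ¬ GeomCollinear 𝓛 u r → u ∈ H₁ ∧ u ∈ H₂ :=
    fun u hu => ⟨aux_perp hBS hlBA hl hlA hlB1 hrl hu, aux_perp hBS hlAB hm hmB hmA1 hrm hu⟩
  -- nondegeneracy at r
  obtain ⟨u₀, hu₀⟩ := hnondeg r
  have hu₀' : ¬ GeomCollinear 𝓛 u₀ r := fun h => hu₀ h.symm'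
  obtain ⟨k, hk, hu₀k⟩ := hpointline u₀
  have hrk : r ∉ k := fun h => hu₀ ⟨k, hk, h, hu₀k⟩
  -- unique point z of k collinear with r
  have hBSrk := hBS r k hk hrk
  rcases hBSrk with ⟨z, ⟨hzk, hrz⟩, hzuniq⟩ | hall
  swap
  · exact hu₀ (hall u₀ hu₀k)
  -- k ⊆ H₁ ∩ H₂
  obtain ⟨c₁, hc₁k, hc₁z, -⟩ := third_point (hline3 k hk) z z
  obtain ⟨c₂, hc₂k, hc₂z, hc₂c₁⟩ := third_point (hline3 k hk) z c₁
  have hmemk : ∀ x ∈ k, x ≠ z → x ∈ H₁ ∧ x ∈ H₂ := by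
    intro x hxk hxz
    refine perpR x (fun h => hxz (hzuniq x ⟨hxk, h.symm'⟩))
  obtain ⟨hc₁A, hc₁B⟩ := hmemk c₁ hc₁k hc₁z
  obtain ⟨hc₂A, hc₂B⟩ := hmemk c₂ hc₂k hc₂z
  have hkA : k ⊆ H₁ := hH₁.1 k hk c₁ hc₁k c₂ hc₂k hc₁A hc₂A (Ne.symm hc₂c₁)
  have hkB : k ⊆ H₂ := hH₂.1 k hk c₁ hc₁k c₂ hc₂k hc₁B hc₂B (Ne.symm hc₂c₁)
  -- any point of k collinear with p equals z
  have step5₁ : ∀ a ∈ k, GeomCollinear 𝓛 a p → a = z := by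
    intro a hak hap
    obtain ⟨n, hn, han, hpn⟩ := hap
    have hnA : n ⊆ H₁ := (hlAB n hn).resolve_right (fun h => hp (h hpn))
    have haB : a ∈ H₂ := hkB hak
    have hnB1 : ∀ x ∈ n, x ∈ H₂ → x = a := by
      intro x hxn hxB
      by_contra hne
      exact hp (hH₂.1 n hn x hxn a han hxB haB hne hpn)
    obtain ⟨e, hen, hep, hea⟩ := third_point (hline3 n hn) p a
    have heB : e ∉ H₂ := fun h => hea (hnB1 e hen h)
    have her : GeomCollinear 𝓛 e r := by
      by_contra hcon'
      exact heB (perpR e hcon').2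
    have hpr : GeomCollinear 𝓛 p r := ⟨l, hl, hpl, hrl⟩
    have hrn : r ∉ n := by
      intro h
      exact hrk ((hnB1 r h hrB) ▸ hak)
    rcases hBS r n hn hrn with ⟨v, -, hvuniq⟩ | hall'
    · have h1 : p = v := hvuniq p ⟨hpn, hpr.symm'⟩
      have h2 : e = v := hvuniq e ⟨hen, her.symm'⟩
      exact absurd (h1.trans h2.symm) hep.symm
    · exact hzuniq a ⟨hak, hall' a han⟩
  -- any point of k collinear with q equals z
  have step5₂ : ∀ a ∈ k, GeomCollinear 𝓛 a q → a = z := by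
    intro a hak haq
    obtain ⟨n, hn, han, hqn⟩ := haq
    have hnB : n ⊆ H₂ := (hlAB n hn).resolve_left (fun h => hq (h hqn))
    have haA : a ∈ H₁ := hkA hak
    have hnA1 : ∀ x ∈ n, x ∈ H₁ → x = a := by
      intro x hxn hxA
      by_contra hne
      exact hq (hH₁.1 n hn x hxn a han hxA haA hne hqn)
    obtain ⟨e, hen, heq, hea⟩ := third_point (hline3 n hn) q a
    have heA : e ∉ H₁ := fun h => hea (hnA1 e hen h)
    have her : GeomCollinear 𝓛 e r := by
      by_contra hcon'
      exact heA (perpR e hcon').1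
    have hqr' : GeomCollinear 𝓛 q r := ⟨m, hm, hqm, hrm⟩
    have hrn : r ∉ n := by
      intro h
      exact hrk ((hnA1 r h hrA) ▸ hak)
    rcases hBS r n hn hrn with ⟨v, -, hvuniq⟩ | hall'
    · have h1 : q = v := hvuniq q ⟨hqn, hqr'.symm'⟩
      have h2 : e = v := hvuniq e ⟨hen, her.symm'⟩
      exact absurd (h1.trans h2.symm) heq.symm
    · exact hzuniq a ⟨hak, hall' a han⟩
  -- pick w ∈ k, w ≠ z
  obtain ⟨w, hwk, hwz, -⟩ := third_point (hline3 k hk) z z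
  have hwp : ¬ GeomCollinear 𝓛 w p := fun h => hwz (step5₁ w hwk h)
  have hwq : ¬ GeomCollinear 𝓛 w q := fun h => hwz (step5₂ w hwk h)
  have hwB : w ∈ H₂ := hkB hwk
  -- w is not on m; unique point ŝ of m collinear with w
  have hwm : w ∉ m := fun h => hwq ⟨m, hm, h, hqm⟩
  rcases hBS w m hm hwm with ⟨s, ⟨hsm, hws⟩, -⟩ | hall'
  swap
  · exact hwq (hall' q hqm)
  have hsr : s ≠ r := by
    intro h
    subst h
    exact hwz (hzuniq w ⟨hwk, hws.symm'⟩)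
  have hsA : s ∉ H₁ := fun h => hsr (hmA1 s hsm h)
  -- line n₂ through w and s; it lies in H₂ and meets H₁ only in w
  obtain ⟨n₂, hn₂, hwn₂, hsn₂⟩ := hws
  have hn₂B : n₂ ⊆ H₂ := (hlAB n₂ hn₂).resolve_left (fun h => hsA (h hsn₂))
  have hn₂A1 : ∀ x ∈ n₂, x ∈ H₁ → x = w := by
    intro x hxn hxA
    by_contra hne
    have hwA : w ∈ H₁ := hkA hwk
    exact hsA (hH₁.1 n₂ hn₂ x hxn w hwn₂ hxA hwA hne hsn₂)
  -- final contradiction: p is not collinear with w, so p ∈ H₂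
  have hpw : ¬ GeomCollinear 𝓛 p w := fun h => hwp h.symm'
  exact hp (aux_perp hBS hlAB hn₂ hn₂B hn₂A1 hwn₂ hpw)
end

section
/- Let (P, 𝓛) be a thick polar space of rank at least 3, let H be a geometric hyperplane of (P, 𝓛), and let k ∈ P with k ∉ H. If θ : P → P is an automorphism of the geometry (a bijection such that a subset l ⊆ P is a line if and only if its image θ(l) is a line) which fixes every point of H and fixes k, then θ is the identity. Consequently, a collineation pointwise fixing a geometric hyperplane H is uniquely determined by the image of a single point outside H. -/
/-- In a thick polar space of rank at least `3`, an automorphism that fixes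
a geometric hyperplane `H` pointwise as well as one point `k ∉ H` is the identity; hence a
collineation pointwise fixing a geometric hyperplane is determined by the image of a single
point outside it. -/
theorem collineation_fixing_hyperplane_and_outside_point_is_id
    {P : Type*} (𝓛 : Set (Set P))
    -- thick polar space of rank at least 3: axioms
    (hline3 : ∀ l ∈ 𝓛, 3 ≤ l.encard)
    (hunique : ∀ p q : P, p ≠ q → ∀ l₁ ∈ 𝓛, ∀ l₂ ∈ 𝓛,
      p ∈ l₁ → q ∈ l₁ → p ∈ l₂ → q ∈ l₂ → l₁ = l₂)
    (hpointline : ∀ p : P, ∃ l ∈ 𝓛, p ∈ l)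
    (hBS : ∀ p : P, ∀ l ∈ 𝓛, p ∉ l →
      (∃! q : P, q ∈ l ∧ GeomCollinear 𝓛 p q) ∨ (∀ q ∈ l, GeomCollinear 𝓛 p q))
    (hnondeg : ∀ p : P, ∃ q : P, ¬ GeomCollinear 𝓛 p q)
    (hrank3 : ∀ l ∈ 𝓛, ∃ p : P, p ∉ l ∧ ∀ q ∈ l, GeomCollinear 𝓛 p q)
    (H : Set P) (hH : IsGeomHyperplane 𝓛 H)
    (k : P) (hk : k ∉ H)
    (θ : Equiv.Perm P)
    (hlines : ∀ l : Set P, l ∈ 𝓛 ↔ (θ '' l) ∈ 𝓛)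
    (hfixH : ∀ p ∈ H, θ p = p)
    (hfixk : θ k = k) :
    ∀ p : P, θ p = p := by
  set Col : P → P → Prop := GeomCollinear 𝓛 with hColdef
  -- basic facts
  have col_self : ∀ p, Col p p := by
    intro p
    obtain ⟨l, hl, hpl⟩ := hpointline p
    exact ⟨l, hl, hpl, hpl⟩
  have col_symm : ∀ p q, Col p q → Col q p := by
    rintro p q ⟨l, hl, hp, hq⟩
    exact ⟨l, hl, hq, hp⟩
  have col_of_mem : ∀ l, l ∈ 𝓛 → ∀ p, p ∈ l → ∀ q, q ∈ l → Col p q := by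
    intro l hl p hp q hq
    exact ⟨l, hl, hp, hq⟩
  have θcol : ∀ p q, Col p q → Col (θ p) (θ q) := by
    rintro p q ⟨l, hl, hp, hq⟩
    exact ⟨θ '' l, (hlines l).mp hl, Set.mem_image_of_mem _ hp, Set.mem_image_of_mem _ hq⟩
  -- from the BS axiom: if p ∉ l is collinear with two distinct points of l,
  -- then it is collinear with every point of l
  have bs_all : ∀ p l, l ∈ 𝓛 → p ∉ l → ∀ q₁ q₂, q₁ ∈ l → q₂ ∈ l → q₁ ≠ q₂ →
      Col p q₁ → Col p q₂ → ∀ q ∈ l, Col p q := by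
    intro p l hl hpl q₁ q₂ h1 h2 hne hc1 hc2
    rcases hBS p l hl hpl with ⟨s, _, hu⟩ | hall
    · exact absurd ((hu q₁ ⟨h1, hc1⟩).trans (hu q₂ ⟨h2, hc2⟩).symm) hne
    · exact hall
  -- every line containing a point outside H has a unique point in H
  have Hpt : ∀ l, l ∈ 𝓛 → ∀ x, x ∈ l → x ∉ H →
      ∃ u, u ∈ l ∧ u ∈ H ∧ ∀ w, w ∈ l → w ∈ H → w = u := by
    intro l hl x hx hxH
    obtain ⟨u, hul, huH⟩ := hH.2 l hl
    refine ⟨u, hul, huH, ?_⟩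
    intro w hwl hwH
    by_contra hne
    exact hxH (hH.1 l hl w hwl u hul hwH huH hne hx)
  -- a line containing two distinct fixed points is invariant
  have inv_line : ∀ l, l ∈ 𝓛 → ∀ a b, a ∈ l → b ∈ l → a ≠ b → θ a = a → θ b = b →
      ∀ x, x ∈ l → θ x ∈ l := by
    intro l hl a b hal hbl hab hfa hfb x hx
    have himg : θ '' l ∈ 𝓛 := (hlines l).mp hl
    have haimg : a ∈ θ '' l := ⟨a, hal, hfa⟩
    have hbimg : b ∈ θ '' l := ⟨b, hbl, hfb⟩
    have heq : l = θ '' l := hunique a b hab l hl (θ '' l) himg hal hbl haimg hbimg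
    rw [heq]
    exact Set.mem_image_of_mem _ hx
  have movedH : ∀ x, θ x ≠ x → x ∉ H := fun x hx hxH => hx (hfixH _ hxH)
  -- The perp-injectivity lemma: if x ≠ y and every neighbour of x is a neighbour of y,
  -- contradiction.  (Uses nondegeneracy + BS, twice.)
  have perp_lemma : ∀ x y, x ≠ y → (∀ w, Col w x → Col w y) → False := by
    intro x y hxy hsub
    have hxy' : Col x y := hsub x (col_self x)
    obtain ⟨L, hL, hxL, hyL⟩ := hxy'
    -- every neighbour of x is a neighbour of every point of L
    have ha : ∀ w, Col w x → ∀ t, t ∈ L → Col w t := by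
      intro w hwx t htL
      by_cases hwL : w ∈ L
      · exact col_of_mem L hL w hwL t htL
      · exact bs_all w L hL hwL x y hxL hyL hxy hwx (hsub w hwx) t htL
    obtain ⟨z₂, hz₂⟩ := hnondeg x
    have hz₂x : ¬ Col z₂ x := fun h => hz₂ (col_symm _ _ h)
    have hz₂L : z₂ ∉ L := fun h => hz₂x (col_of_mem L hL z₂ h x hxL)
    rcases hBS z₂ L hL hz₂L with h1 | h2
    swap
    · exact hz₂x (h2 x hxL)
    obtain ⟨a, ⟨haL, hz₂a⟩, -⟩ := h1
    have hax : a ≠ x := fun h => hz₂x (h ▸ hz₂a)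
    obtain ⟨z₃, hz₃⟩ := hnondeg a
    have hz₃a : ¬ Col z₃ a := fun h => hz₃ (col_symm _ _ h)
    have hz₃x : ¬ Col z₃ x := fun h => hz₃a (ha z₃ h a haL)
    obtain ⟨M, hM, hz₂M, haM⟩ := hz₂a
    have hz₃M : z₃ ∉ M := fun h => hz₃a (col_of_mem M hM z₃ h a haM)
    have hxM : x ∉ M := fun h => hz₂x (col_of_mem M hM z₂ hz₂M x h)
    have hxMa : ∀ s, s ∈ M → Col x s → s = a := by
      intro s hsM hxs
      by_contra hsa
      have hxa : Col x a := col_of_mem L hL x hxL a haL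
      exact hz₂x (col_symm _ _
        (bs_all x M hM hxM a s haM hsM (fun h => hsa h.symm) hxa hxs z₂ hz₂M))
    obtain ⟨m, hmM, hz₃m⟩ : ∃ s, s ∈ M ∧ Col z₃ s := by
      rcases hBS z₃ M hM hz₃M with ⟨s, ⟨hs1, hs2⟩, -⟩ | h
      · exact ⟨s, hs1, hs2⟩
      · exact absurd (h a haM) hz₃a
    have hma : m ≠ a := fun h => hz₃a (h ▸ hz₃m)
    have hxm : ¬ Col x m := fun h => hma (hxMa m hmM h)
    obtain ⟨W, hW, hz₃W, hmW⟩ := hz₃m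
    have haW : a ∉ W := fun h => hz₃a (col_of_mem W hW z₃ hz₃W a h)
    have hxW : x ∉ W := fun h => hxm (col_of_mem W hW x h m hmW)
    obtain ⟨w, hwW, hxw⟩ : ∃ w, w ∈ W ∧ Col x w := by
      rcases hBS x W hW hxW with ⟨s, ⟨hs1, hs2⟩, -⟩ | h
      · exact ⟨s, hs1, hs2⟩
      · exact absurd (h m hmW) hxm
    have hwm : w ≠ m := fun h => hxm (h ▸ hxw)
    have hwa : Col a w := col_symm _ _ (ha w (col_symm _ _ hxw) a haL)
    have ham : Col a m := col_of_mem M hM a haM m hmM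
    exact hz₃a (col_symm _ _
      (bs_all a W hW haW m w hmW hwW (fun h => hwm h.symm) ham hwa z₃ hz₃W))
  -- push: if x is moved and collinear with θ x, every neighbour of x is a neighbour of θ x
  have push : ∀ x, θ x ≠ x → Col x (θ x) → ∀ w, Col w x → Col w (θ x) := by
    intro x hx hcx w hwx
    by_cases hw : w = x
    · rw [hw]; exact hcx
    obtain ⟨m, hm, hwm, hxm⟩ := hwx
    have hxH := movedH x hx
    obtain ⟨u, hum, huH, huuniq⟩ := Hpt m hm x hxm hxH
    have hufix := hfixH u huH
    have hux : Col u x := col_of_mem m hm u hum x hxm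
    have huθx : Col u (θ x) := by
      have := θcol u x hux
      rwa [hufix] at this
    by_cases hθxm : θ x ∈ m
    · exact col_of_mem m hm w hwm (θ x) hθxm
    · have hu_ne_x : u ≠ x := fun h => hxH (h ▸ huH)
      exact col_symm _ _ (bs_all (θ x) m hm hθxm u x hum hxm hu_ne_x
        (col_symm _ _ huθx) (col_symm _ _ hcx) w hwm)
  -- no moved point is collinear with its image
  have noC : ∀ x, θ x ≠ x → ¬ Col x (θ x) := by
    intro x hx hcx
    exact perp_lemma x (θ x) (Ne.symm hx) (push x hx hcx)
  -- a moved point is not collinear with any fixed point outside H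
  have D : ∀ x, θ x ≠ x → ∀ f, θ f = f → f ∉ H → Col x f → False := by
    intro x hx f hf hfH hcol
    have hfx : f ≠ x := fun h => hx (h ▸ hf)
    obtain ⟨l, hl, hxl, hfl⟩ := hcol
    obtain ⟨u, hul, huH, -⟩ := Hpt l hl x hxl (movedH x hx)
    have huf : u ≠ f := fun h => hfH (h ▸ huH)
    have hθxl : θ x ∈ l := inv_line l hl u f hul hfl huf (hfixH u huH) hf x hxl
    exact noC x hx (col_of_mem l hl x hxl (θ x) hθxl)
  -- every point collinear with k is fixed
  have D2 : ∀ p, Col p k → θ p = p := by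
    intro p hpk
    by_contra h
    exact D p h k hfixk hk hpk
  -- the H-point of a line through a moved point is collinear with k
  have E : ∀ x, θ x ≠ x → ∀ m, m ∈ 𝓛 → x ∈ m → ∀ u, u ∈ m → u ∈ H → Col u k := by
    intro x hx m hm hxm u hum huH
    have hkm : k ∉ m := fun h => hx (D2 x (col_of_mem m hm x hxm k h))
    obtain ⟨s, hsm, hks⟩ : ∃ s, s ∈ m ∧ Col k s := by
      rcases hBS k m hm hkm with ⟨s, ⟨hs1, hs2⟩, -⟩ | h
      · exact ⟨s, hs1, hs2⟩
      · exact ⟨u, hum, h u hum⟩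
    have hsfix : θ s = s := D2 s (col_symm _ _ hks)
    have hsH : s ∈ H := by
      by_contra hsH
      exact D x hx s hsfix hsH (col_of_mem m hm x hxm s hsm)
    obtain ⟨u', hu'm, hu'H, huniq⟩ := Hpt m hm x hxm (movedH x hx)
    have h1 : u = u' := huniq u hum huH
    have h2 : s = u' := huniq s hsm hsH
    rw [h1, ← h2]
    exact col_symm _ _ hks
  -- every moved point is collinear with the H-point of a line through a moved point
  have F : ∀ x, θ x ≠ x → ∀ m, m ∈ 𝓛 → x ∈ m → ∀ u, u ∈ m → u ∈ H →
      ∀ y, θ y ≠ y → Col y u := by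
    intro x hx m hm hxm u hum huH y hy
    have huk : Col u k := E x hx m hm hxm u hum huH
    obtain ⟨n, hn, hun, hkn⟩ := huk
    have hnfix : ∀ t, t ∈ n → θ t = t := fun t ht =>
      D2 t (col_of_mem n hn t ht k hkn)
    have hyn : y ∉ n := fun h => hy (hnfix y h)
    obtain ⟨t, htn, hyt⟩ : ∃ t, t ∈ n ∧ Col y t := by
      rcases hBS y n hn hyn with ⟨s, ⟨hs1, hs2⟩, -⟩ | h
      · exact ⟨s, hs1, hs2⟩
      · exact ⟨u, hun, h u hun⟩
    have htH : t ∈ H := by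
      by_contra htH
      exact D y hy t (hnfix t htn) htH hyt
    obtain ⟨u', hu'n, hu'H, huniq⟩ := Hpt n hn k hkn hk
    have h1 : t = u := (huniq t htn htH).trans (huniq u hun huH).symm
    rwa [h1] at hyt
  -- every line has a point distinct from two given points
  have third : ∀ l, l ∈ 𝓛 → ∀ a b : P, ∃ c, c ∈ l ∧ c ≠ a ∧ c ≠ b := by
    intro l hl a b
    by_contra h
    push_neg at h
    have hsub : l ⊆ {a, b} := by
      intro c hc
      by_cases hca : c = a
      · exact Or.inl hca
      · exact Or.inr (h c hc hca)
    have h2 : ({a, b} : Set P).encard ≤ 2 := by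
      apply le_trans (Set.encard_insert_le _ _)
      rw [Set.encard_singleton]
      norm_num
    have h3 : (3 : ℕ∞) ≤ 2 :=
      le_trans (hline3 l hl) (le_trans (Set.encard_mono hsub) h2)
    norm_num at h3
  -- two H-neighbours (on lines) of a moved point are collinear
  have G : ∀ x, θ x ≠ x → ∀ m g, m ∈ 𝓛 → g ∈ 𝓛 → x ∈ m → x ∈ g →
      ∀ u v, u ∈ m → u ∈ H → v ∈ g → v ∈ H → Col u v := by
    intro x hx m g hm hg hxm hxg u v hum huH hvg hvH
    by_cases huv : v = u
    · rw [huv]; exact col_self u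
    obtain ⟨u', hu'm, hu'H, huniq⟩ := Hpt m hm x hxm (movedH x hx)
    have huu' : u = u' := huniq u hum huH
    have hvm : v ∉ m := fun h => huv ((huniq v h hvH).trans huu'.symm)
    have hvx : Col v x := col_of_mem g hg v hvg x hxg
    rcases hBS v m hm hvm with ⟨q, ⟨hqm, hvq⟩, huq⟩ | hall
    · exfalso
      have hxq : x = q := huq x ⟨hxm, hvx⟩
      obtain ⟨w, hwm, hwu, hwx⟩ := third m hm u x
      have hwH : w ∉ H := fun h => hwu ((huniq w hwm h).trans huu'.symm)
      have hwmoved : θ w ≠ w := fun hfix =>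
        D x hx w hfix hwH (col_of_mem m hm x hxm w hwm)
      have hwv : Col w v := F x hx g hg hxg v hvg hvH w hwmoved
      exact hwx ((huq w ⟨hwm, col_symm _ _ hwv⟩).trans hxq.symm)
    · exact col_symm _ _ (hall u hum)
  -- main proof
  intro p₀
  by_contra hp₀
  obtain ⟨m, hm, hxm⟩ := hpointline p₀
  obtain ⟨u, hum, huH, huniq⟩ := Hpt m hm p₀ hxm (movedH p₀ hp₀)
  obtain ⟨z, hz⟩ := hnondeg u
  apply hz
  show Col u z
  by_cases hzmv : θ z = z
  · -- z is fixed
    by_cases hzk : Col z k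
    · -- z collinear with k
      by_cases hzk' : z = k
      · rw [hzk']
        exact E p₀ hp₀ m hm hxm u hum huH
      · obtain ⟨r, hr, hzr, hkr⟩ := hzk
        have hrfix : ∀ t, t ∈ r → θ t = t := fun t ht =>
          D2 t (col_of_mem r hr t ht k hkr)
        obtain ⟨v, hvr, hvH, hvuniq⟩ := Hpt r hr k hkr hk
        have hxr : p₀ ∉ r := fun h => hp₀ (hrfix _ h)
        obtain ⟨s, hsr, hxs⟩ : ∃ s, s ∈ r ∧ Col p₀ s := by
          rcases hBS p₀ r hr hxr with ⟨s, ⟨hs1, hs2⟩, -⟩ | h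
          · exact ⟨s, hs1, hs2⟩
          · exact ⟨v, hvr, h v hvr⟩
        have hsH : s ∈ H := by
          by_contra hsH
          exact D p₀ hp₀ s (hrfix s hsr) hsH hxs
        have hsv : s = v := hvuniq s hsr hsH
        have hxv : Col p₀ v := by rwa [hsv] at hxs
        by_cases huv : u = v
        · exact col_of_mem r hr u (huv ▸ hvr) z hzr
        · obtain ⟨g, hg, hxg, hvg⟩ := hxv
          have huvcol : Col u v := G p₀ hp₀ m g hm hg hxm hxg u v hum huH hvg hvH
          by_cases hur : u ∈ r
          · exact col_of_mem r hr u hur z hzr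
          · have hkv : k ≠ v := fun h => hk (h ▸ hvH)
            have huk : Col u k := E p₀ hp₀ m hm hxm u hum huH
            exact bs_all u r hr hur k v hkr hvr hkv huk huvcol z hzr
    · -- z fixed, not collinear with k
      by_cases hzu : z = u
      · rw [hzu]; exact col_self u
      by_cases hzm : z ∈ m
      · by_cases hzH : z ∈ H
        · exact absurd (huniq z hzm hzH) hzu
        · exact absurd hzmv (fun hfix =>
            D p₀ hp₀ z hfix hzH (col_of_mem m hm p₀ hxm z hzm))
      · obtain ⟨s, hsm, hzs⟩ : ∃ s, s ∈ m ∧ Col z s := by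
          rcases hBS z m hm hzm with ⟨s, ⟨hs1, hs2⟩, -⟩ | h
          · exact ⟨s, hs1, hs2⟩
          · exact ⟨u, hum, h u hum⟩
        by_cases hsmv : θ s = s
        · by_cases hsH : s ∈ H
          · have hsu : s = u := huniq s hsm hsH
            exact col_symm _ _ (hsu ▸ hzs)
          · exact absurd hsmv (fun hfix =>
              D p₀ hp₀ s hfix hsH (col_of_mem m hm p₀ hxm s hsm))
        · have hzH : z ∈ H := by
            by_contra hzH
            exact D s hsmv z hzmv hzH (col_symm _ _ hzs)
          obtain ⟨m₃, hm₃, hzm₃, hsm₃⟩ := hzs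
          exact absurd (E s hsmv m₃ hm₃ hsm₃ z hzm₃ hzH) hzk
  · -- z is moved
    exact col_symm _ _ (F p₀ hp₀ m hm hxm u hum huH z hzmv)
end

section
/- Let K be a field with char K ≠ 2. On V = K⁷ with coordinates (x₁,…,x₇) and standard basis e₁,…,e₇, define the quadratic form q(x) := x₁x₇ + x₂x₆ + x₃x₅ − x₄². Let α := span(e₁,e₂,e₃), β := span(e₅,e₆,e₇), and for k ∈ K, k ≠ 0, let π_k := span(e₁, e₆, k⁻¹e₃ + e₄ + k·e₅) (a totally singular plane). For k ≠ 0 let d_k be the linear map given by the diagonal matrix diag(1,1,1,k,k²,k²,k²). Then: (1) q(d_k(x)) = k²·q(x) for all x, so d_k maps the quadric {q = 0} onto itself; (2) d_k fixes every vector of α, multiplies every vector of β by k², and maps π₁ onto π_k; and (3) every K-linear automorphism φ of V such that φ maps {q = 0} onto itself, φ(v) ∈ K·v for every v ∈ α ∪ β, and φ(π₁) = π_k, is equal to c·d_k for some scalar c ∈ K, c ≠ 0. In particular, the homology of the parabolic quadric with axes the planes α and β carrying π₁ to π_k is unique up to scalar. -/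
noncomputable section

/-- The parabolic quadratic form `q(x) = x₁x₇ + x₂x₆ + x₃x₅ − x₄²` on `K⁷`
(coordinates indexed by `Fin 7`). -/
def parabolicQ7 {K : Type*} [Field K] (x : Fin 7 → K) : K :=
  x 0 * x 6 + x 1 * x 5 + x 2 * x 4 - x 3 ^ 2

/-- The standard basis vector `eᵢ` of `K⁷`. -/
def stdBasis7 {K : Type*} [Field K] (i : Fin 7) : Fin 7 → K :=
  Pi.single i 1

/-- The linear map with matrix `diag(1,1,1,k,k²,k²,k²)`. -/
def diagMap7 {K : Type*} [Field K] (k : K) (x : Fin 7 → K) : Fin 7 → K :=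
  fun i => (if (i : ℕ) ≤ 2 then 1 else if (i : ℕ) = 3 then k else k ^ 2) * x i

/-- The plane `α = span(e₁,e₂,e₃)`. -/
def planeAlpha7 (K : Type*) [Field K] : Submodule K (Fin 7 → K) :=
  Submodule.span K {stdBasis7 0, stdBasis7 1, stdBasis7 2}

/-- The plane `β = span(e₅,e₆,e₇)`. -/
def planeBeta7 (K : Type*) [Field K] : Submodule K (Fin 7 → K) :=
  Submodule.span K {stdBasis7 4, stdBasis7 5, stdBasis7 6}

/-- The totally singular plane `π_k = span(e₁, e₆, k⁻¹e₃ + e₄ + k·e₅)`. -/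
def planePi7 {K : Type*} [Field K] (k : K) : Submodule K (Fin 7 → K) :=
  Submodule.span K {stdBasis7 0, stdBasis7 5, k⁻¹ • stdBasis7 2 + stdBasis7 3 + k • stdBasis7 4}

namespace Hq8aux

variable {K : Type*} [Field K]

lemma E_apply (i j : Fin 7) : stdBasis7 (K:=K) i j = if j = i then 1 else 0 :=
  Pi.single_apply i 1 j

lemma val0 : ((0 : Fin 7) : ℕ) = 0 := rfl
lemma val1 : ((1 : Fin 7) : ℕ) = 1 := rfl
lemma val2 : ((2 : Fin 7) : ℕ) = 2 := rfl
lemma val3 : ((3 : Fin 7) : ℕ) = 3 := rfl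
lemma val4 : ((4 : Fin 7) : ℕ) = 4 := rfl
lemma val5 : ((5 : Fin 7) : ℕ) = 5 := rfl
lemma val6 : ((6 : Fin 7) : ℕ) = 6 := rfl

/-- `diagMap7` bundled as a linear map. -/
def diagLM (k : K) : (Fin 7 → K) →ₗ[K] (Fin 7 → K) where
  toFun := diagMap7 k
  map_add' x y := by
    funext i
    simp only [diagMap7, Pi.add_apply, Pi.smul_apply, smul_eq_mul, RingHom.id_apply]
    split_ifs <;> ring
  map_smul' c x := by
    funext i
    simp only [diagMap7, Pi.add_apply, Pi.smul_apply, smul_eq_mul, RingHom.id_apply]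
    split_ifs <;> ring

lemma diagLM_apply (k : K) (x : Fin 7 → K) : diagLM k x = diagMap7 k x := rfl

lemma dm0 (k : K) : diagMap7 k (stdBasis7 (K:=K) 0) = stdBasis7 0 := by
  funext j; fin_cases j <;> simp [diagMap7, E_apply]
lemma dm1 (k : K) : diagMap7 k (stdBasis7 (K:=K) 1) = stdBasis7 1 := by
  funext j; fin_cases j <;> simp [diagMap7, E_apply]
lemma dm2 (k : K) : diagMap7 k (stdBasis7 (K:=K) 2) = stdBasis7 2 := by
  funext j; fin_cases j <;> simp [diagMap7, E_apply]
lemma dm3 (k : K) : diagMap7 k (stdBasis7 (K:=K) 3) = k • stdBasis7 3 := by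
  funext j; fin_cases j <;> simp [diagMap7, E_apply]
lemma dm4 (k : K) : diagMap7 k (stdBasis7 (K:=K) 4) = k ^ 2 • stdBasis7 4 := by
  funext j; fin_cases j <;> simp [diagMap7, E_apply]
lemma dm5 (k : K) : diagMap7 k (stdBasis7 (K:=K) 5) = k ^ 2 • stdBasis7 5 := by
  funext j; fin_cases j <;> simp [diagMap7, E_apply]
lemma dm6 (k : K) : diagMap7 k (stdBasis7 (K:=K) 6) = k ^ 2 • stdBasis7 6 := by
  funext j; fin_cases j <;> simp [diagMap7, E_apply]

lemma mem_planePi7_prop (k : K) (hk : k ≠ 0) {v : Fin 7 → K}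
    (hv : v ∈ planePi7 k) : k * v 2 = v 3 ∧ v 4 = k * v 3 := by
  induction hv using Submodule.span_induction with
  | mem x h =>
    simp only [Set.mem_insert_iff, Set.mem_singleton_iff] at h
    rcases h with rfl | rfl | rfl
    · constructor <;> simp [E_apply]
    · constructor <;> simp [E_apply]
    · constructor <;> simp [E_apply, mul_inv_cancel₀ hk]
  | zero => simp
  | add x y _ _ hx hy =>
    simp only [Pi.add_apply]
    exact ⟨by linear_combination hx.1 + hy.1, by linear_combination hx.2 + hy.2⟩
  | smul c x _ hx =>
    simp only [Pi.smul_apply, smul_eq_mul]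
    exact ⟨by linear_combination c * hx.1, by linear_combination c * hx.2⟩

end Hq8aux

open Hq8aux

/-- For `char K ≠ 2` and `k ≠ 0`: the diagonal map
`d_k = diag(1,1,1,k,k²,k²,k²)` is a similitude of `q` with factor `k²` (so it preserves the
quadric), it fixes `α` vectorwise, multiplies `β` by `k²` and carries `π₁` to `π_k`; and any
linear automorphism preserving the quadric, fixing `α` and `β` projectively pointwise and
carrying `π₁` to `π_k` equals `c·d_k` for some nonzero scalar `c`. -/
theorem homology_of_parabolic_quadric_unique_up_to_scalar
    {K : Type*} [Field K] (hchar : (2 : K) ≠ 0) (k : K) (hk : k ≠ 0) :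
    (∀ x : Fin 7 → K, parabolicQ7 (diagMap7 k x) = k ^ 2 * parabolicQ7 x) ∧
    (∀ v ∈ planeAlpha7 K, diagMap7 k v = v) ∧
    (∀ v ∈ planeBeta7 K, diagMap7 k v = (k ^ 2) • v) ∧
    (diagMap7 k '' (planePi7 (1 : K) : Set (Fin 7 → K)) = (planePi7 k : Set (Fin 7 → K))) ∧
    (∀ φ : (Fin 7 → K) ≃ₗ[K] (Fin 7 → K),
      (∀ x : Fin 7 → K, parabolicQ7 x = 0 ↔ parabolicQ7 (φ x) = 0) →
      (∀ v : Fin 7 → K, (v ∈ planeAlpha7 K ∨ v ∈ planeBeta7 K) → ∃ a : K, φ v = a • v) →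
      (φ '' (planePi7 (1 : K) : Set (Fin 7 → K)) = (planePi7 k : Set (Fin 7 → K))) →
      ∃ c : K, c ≠ 0 ∧ ∀ x : Fin 7 → K, φ x = c • diagMap7 k x) := by
  refine ⟨?_, ?_, ?_, ?_, ?_⟩
  · -- part 1
    intro x
    simp [parabolicQ7, diagMap7, val0, val1, val2, val3, val4, val5, val6]
    ring
  · -- part 2
    intro v hv
    induction hv using Submodule.span_induction with
    | mem x h =>
      simp only [Set.mem_insert_iff, Set.mem_singleton_iff] at h
      rcases h with rfl | rfl | rfl
      exacts [dm0 k, dm1 k, dm2 k]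
    | zero => rw [← diagLM_apply, map_zero]
    | add x y _ _ hx hy => rw [← diagLM_apply, map_add, diagLM_apply, diagLM_apply, hx, hy]
    | smul c x _ hx => rw [← diagLM_apply, map_smul, diagLM_apply, hx]
  · -- part 3
    intro v hv
    induction hv using Submodule.span_induction with
    | mem x h =>
      simp only [Set.mem_insert_iff, Set.mem_singleton_iff] at h
      rcases h with rfl | rfl | rfl
      exacts [dm4 k, dm5 k, dm6 k]
    | zero => rw [← diagLM_apply, map_zero, smul_zero]
    | add x y _ _ hx hy =>
      rw [← diagLM_apply, map_add, diagLM_apply, diagLM_apply, hx, hy, smul_add]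
    | smul c x _ hx =>
      rw [← diagLM_apply, map_smul, diagLM_apply, hx, smul_comm]
  · -- part 4
    have hmap : Submodule.map (diagLM k) (planePi7 (1 : K)) = planePi7 k := by
      apply le_antisymm
      · rw [planePi7, Submodule.map_span, Submodule.span_le]
        rintro _ ⟨x, hx, rfl⟩
        simp only [Set.mem_insert_iff, Set.mem_singleton_iff] at hx
        rcases hx with rfl | rfl | rfl
        · rw [diagLM_apply, dm0]
          exact Submodule.subset_span (by simp)
        · rw [diagLM_apply, dm5]
          exact Submodule.smul_mem _ _ (Submodule.subset_span (by simp))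
        · have : diagLM k ((1:K)⁻¹ • stdBasis7 2 + stdBasis7 3 + (1:K) • stdBasis7 4)
              = k • (k⁻¹ • stdBasis7 2 + stdBasis7 3 + k • stdBasis7 4) := by
            funext j; fin_cases j <;>
              simp [diagLM_apply, diagMap7, E_apply, val0, val1, val2, val3, val4, val5, val6,
                mul_inv_cancel₀ hk, pow_two]
          rw [this]
          exact Submodule.smul_mem _ _ (Submodule.subset_span (by simp))
      · rw [planePi7, Submodule.span_le]
        rintro y hy
        simp only [Set.mem_insert_iff, Set.mem_singleton_iff] at hy
        rcases hy with rfl | rfl | rfl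
        · exact ⟨stdBasis7 0, Submodule.subset_span (by simp), dm0 k⟩
        · refine ⟨(k ^ 2)⁻¹ • stdBasis7 5,
            Submodule.smul_mem _ _ (Submodule.subset_span (by simp)), ?_⟩
          rw [map_smul, diagLM_apply, dm5, smul_smul,
            inv_mul_cancel₀ (pow_ne_zero 2 hk), one_smul]
        · refine ⟨k⁻¹ • ((1:K)⁻¹ • stdBasis7 2 + stdBasis7 3 + (1:K) • stdBasis7 4),
            Submodule.smul_mem _ _ (Submodule.subset_span (by simp)), ?_⟩
          funext j; fin_cases j <;>
            simp [diagLM_apply, diagMap7, E_apply, val0, val1, val2, val3, val4, val5, val6,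
              mul_inv_cancel₀ hk, pow_two]
    show ⇑(diagLM k) '' (planePi7 (1 : K) : Set (Fin 7 → K)) = _
    rw [← Submodule.map_coe, hmap]
  · -- part 5
    intro φ hq heig hpi
    have m0 : stdBasis7 (K:=K) 0 ∈ planeAlpha7 K := Submodule.subset_span (by simp)
    have m1 : stdBasis7 (K:=K) 1 ∈ planeAlpha7 K := Submodule.subset_span (by simp)
    have m2 : stdBasis7 (K:=K) 2 ∈ planeAlpha7 K := Submodule.subset_span (by simp)
    have m4 : stdBasis7 (K:=K) 4 ∈ planeBeta7 K := Submodule.subset_span (by simp)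
    have m5 : stdBasis7 (K:=K) 5 ∈ planeBeta7 K := Submodule.subset_span (by simp)
    have m6 : stdBasis7 (K:=K) 6 ∈ planeBeta7 K := Submodule.subset_span (by simp)
    obtain ⟨a, h0⟩ := heig _ (Or.inl m0)
    obtain ⟨a1, h1⟩ := heig _ (Or.inl m1)
    obtain ⟨a2, h2⟩ := heig _ (Or.inl m2)
    obtain ⟨b, h4⟩ := heig _ (Or.inr m4)
    obtain ⟨b5, h5⟩ := heig _ (Or.inr m5)
    obtain ⟨b6, h6⟩ := heig _ (Or.inr m6)
    have ha1 : a1 = a := by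
      obtain ⟨t, ht⟩ := heig (stdBasis7 0 + stdBasis7 1) (Or.inl (add_mem m0 m1))
      rw [map_add, h0, h1] at ht
      have e0 := congrFun ht 0
      have e1 := congrFun ht 1
      simp only [Pi.add_apply, Pi.smul_apply, smul_eq_mul, E_apply, Fin.reduceEq, if_true,
        if_false, ite_true, ite_false, mul_one, mul_zero, add_zero, zero_add] at e0 e1
      exact e1.trans e0.symm
    have ha2 : a2 = a := by
      obtain ⟨t, ht⟩ := heig (stdBasis7 0 + stdBasis7 2) (Or.inl (add_mem m0 m2))
      rw [map_add, h0, h2] at ht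
      have e0 := congrFun ht 0
      have e1 := congrFun ht 2
      simp only [Pi.add_apply, Pi.smul_apply, smul_eq_mul, E_apply, Fin.reduceEq, if_true,
        if_false, ite_true, ite_false, mul_one, mul_zero, add_zero, zero_add] at e0 e1
      exact e1.trans e0.symm
    have hb5 : b5 = b := by
      obtain ⟨t, ht⟩ := heig (stdBasis7 4 + stdBasis7 5) (Or.inr (add_mem m4 m5))
      rw [map_add, h4, h5] at ht
      have e0 := congrFun ht 4
      have e1 := congrFun ht 5
      simp only [Pi.add_apply, Pi.smul_apply, smul_eq_mul, E_apply, Fin.reduceEq, if_true,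
        if_false, ite_true, ite_false, mul_one, mul_zero, add_zero, zero_add] at e0 e1
      exact e1.trans e0.symm
    have hb6 : b6 = b := by
      obtain ⟨t, ht⟩ := heig (stdBasis7 4 + stdBasis7 6) (Or.inr (add_mem m4 m6))
      rw [map_add, h4, h6] at ht
      have e0 := congrFun ht 4
      have e1 := congrFun ht 6
      simp only [Pi.add_apply, Pi.smul_apply, smul_eq_mul, E_apply, Fin.reduceEq, if_true,
        if_false, ite_true, ite_false, mul_one, mul_zero, add_zero, zero_add] at e0 e1
      exact e1.trans e0.symm
    rw [ha1] at h1; rw [ha2] at h2; rw [hb5] at h5; rw [hb6] at h6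
    have hane : a ≠ 0 := by
      intro h; rw [h, zero_smul] at h0
      have h' : stdBasis7 (K:=K) 0 = 0 := by
        apply φ.injective; rw [h0, map_zero]
      have := congrFun h' 0
      simp [E_apply] at this
    have hbne : b ≠ 0 := by
      intro h; rw [h, zero_smul] at h4
      have h' : stdBasis7 (K:=K) 4 = 0 := by
        apply φ.injective; rw [h4, map_zero]
      have := congrFun h' 4
      simp [E_apply] at this
    have hcancel : ∀ {u v : K}, u ≠ 0 → u * v = 0 → v = 0 := by
      intro u v hu huv
      rcases mul_eq_zero.mp huv with h | h
      · exact absurd h hu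
      · exact h
    -- quadric constraints
    have T1 := (hq (stdBasis7 0 + stdBasis7 3 + stdBasis7 6)).mp (by
      simp only [parabolicQ7, Pi.add_apply, E_apply, Fin.reduceEq, if_true, if_false,
        ite_true, ite_false]; norm_num)
    rw [map_add, map_add, h0, h6] at T1
    have T2 := (hq (stdBasis7 3 - stdBasis7 0 - stdBasis7 6)).mp (by
      simp only [parabolicQ7, Pi.sub_apply, E_apply, Fin.reduceEq, if_true, if_false,
        ite_true, ite_false]; norm_num)
    rw [map_sub, map_sub, h0, h6] at T2
    have T3 := (hq (stdBasis7 0 + stdBasis7 1 + stdBasis7 3 + stdBasis7 6)).mp (by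
      simp only [parabolicQ7, Pi.add_apply, E_apply, Fin.reduceEq, if_true, if_false,
        ite_true, ite_false]; norm_num)
    rw [map_add, map_add, map_add, h0, h1, h6] at T3
    have T4 := (hq (stdBasis7 1 + stdBasis7 3 + stdBasis7 5)).mp (by
      simp only [parabolicQ7, Pi.add_apply, E_apply, Fin.reduceEq, if_true, if_false,
        ite_true, ite_false]; norm_num)
    rw [map_add, map_add, h1, h5] at T4
    have T5 := (hq (stdBasis7 3 - stdBasis7 1 - stdBasis7 5)).mp (by
      simp only [parabolicQ7, Pi.sub_apply, E_apply, Fin.reduceEq, if_true, if_false,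
        ite_true, ite_false]; norm_num)
    rw [map_sub, map_sub, h1, h5] at T5
    have T6 := (hq (stdBasis7 0 + stdBasis7 2 + stdBasis7 3 + stdBasis7 6)).mp (by
      simp only [parabolicQ7, Pi.add_apply, E_apply, Fin.reduceEq, if_true, if_false,
        ite_true, ite_false]; norm_num)
    rw [map_add, map_add, map_add, h0, h2, h6] at T6
    have T7 := (hq (stdBasis7 0 + stdBasis7 1 + stdBasis7 3 + stdBasis7 5)).mp (by
      simp only [parabolicQ7, Pi.add_apply, E_apply, Fin.reduceEq, if_true, if_false,
        ite_true, ite_false]; norm_num)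
    rw [map_add, map_add, map_add, h0, h1, h5] at T7
    have T8 := (hq (stdBasis7 2 + stdBasis7 3 + stdBasis7 4)).mp (by
      simp only [parabolicQ7, Pi.add_apply, E_apply, Fin.reduceEq, if_true, if_false,
        ite_true, ite_false]; norm_num)
    rw [map_add, map_add, h2, h4] at T8
    have T9 := (hq (stdBasis7 3 - stdBasis7 2 - stdBasis7 4)).mp (by
      simp only [parabolicQ7, Pi.sub_apply, E_apply, Fin.reduceEq, if_true, if_false,
        ite_true, ite_false]; norm_num)
    rw [map_sub, map_sub, h2, h4] at T9
    simp only [parabolicQ7, Pi.add_apply, Pi.sub_apply, Pi.smul_apply, smul_eq_mul, E_apply,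
      Fin.reduceEq, if_true, if_false, ite_true, ite_false, mul_one, mul_zero, add_zero,
      zero_add, sub_zero, zero_sub] at T1 T2 T3 T4 T5 T6 T7 T8 T9
    have hf5 : φ (stdBasis7 3) 5 = 0 := hcancel hane (by linear_combination T3 - T1)
    have hf4 : φ (stdBasis7 3) 4 = 0 := hcancel hane (by linear_combination T6 - T1)
    have hf6 : φ (stdBasis7 3) 6 = 0 := hcancel hane (by linear_combination T7 - T4)
    have hf0 : φ (stdBasis7 3) 0 = 0 :=
      hcancel hbne (hcancel hchar (by linear_combination T1 - T2 - 2 * a * hf6))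
    have hf1 : φ (stdBasis7 3) 1 = 0 :=
      hcancel hbne (hcancel hchar (by linear_combination T4 - T5 - 2 * a * hf5))
    have hf2 : φ (stdBasis7 3) 2 = 0 :=
      hcancel hbne (hcancel hchar (by linear_combination T8 - T9 - 2 * a * hf4))
    -- the plane condition
    have hu : stdBasis7 (K:=K) 2 + stdBasis7 3 + stdBasis7 4 ∈ planePi7 (1 : K) := by
      apply Submodule.subset_span
      simp only [Set.mem_insert_iff, Set.mem_singleton_iff]
      right; right; simp
    have himg : φ (stdBasis7 2 + stdBasis7 3 + stdBasis7 4) ∈ planePi7 k := by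
      have : φ (stdBasis7 2 + stdBasis7 3 + stdBasis7 4) ∈
          (planePi7 k : Set (Fin 7 → K)) := by
        rw [← hpi]; exact Set.mem_image_of_mem φ hu
      exact this
    obtain ⟨hw1, hw2⟩ := mem_planePi7_prop k hk himg
    rw [map_add, map_add, h2, h4] at hw1 hw2
    simp only [Pi.add_apply, Pi.smul_apply, smul_eq_mul, E_apply, Fin.reduceEq, if_true,
      if_false, ite_true, ite_false, mul_one, mul_zero, add_zero, zero_add] at hw1 hw2
    have hf3 : φ (stdBasis7 3) 3 = k * a := by linear_combination -hw1 + k * hf2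
    have hb : b = a * k ^ 2 := by linear_combination hw2 - hf4 + k * hf3
    have hfE : φ (stdBasis7 3) = (k * a) • stdBasis7 3 := by
      funext j; fin_cases j <;>
        simp [E_apply, hf0, hf1, hf2, hf3, hf4, hf5, hf6]
    refine ⟨a, hane, fun x => ?_⟩
    have hxdec : x = x 0 • stdBasis7 0 + x 1 • stdBasis7 1 + x 2 • stdBasis7 2 +
        x 3 • stdBasis7 3 + x 4 • stdBasis7 4 + x 5 • stdBasis7 5 + x 6 • stdBasis7 6 := by
      funext j; fin_cases j <;> simp [E_apply]
    conv_lhs => rw [hxdec]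
    simp only [map_add, map_smul]
    rw [h0, h1, h2, hfE, h4, h5, h6, hb]
    funext j
    fin_cases j <;>
      simp [E_apply, diagMap7, val0, val1, val2, val3, val4, val5, val6] <;> ring
end
end

section
/- Let L be a division ring and σ : L → L an involution (an additive bijection with σ(ab) = σ(b)σ(a) and σ(σ(a)) = a for all a, b ∈ L). Let V be a right L-vector space and g : V × V → L a (σ,1)-linear form, i.e., additive in each argument with g(v·a, w·b) = σ(a)·g(v,w)·b for all a, b ∈ L and v, w ∈ V. Define the norm set N := { (g(w,w) + u − σ(u)) · (g(v,v) + t − σ(t)) + g(w,v) + σ(g(v,w)) + 1 | v, w ∈ V, t, u ∈ L }. Then N is closed under conjugation by every nonzero element of L: for every r ∈ L with r ≠ 0 and every x ∈ N, also r⁻¹·x·r ∈ N. -/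
/-- Let `L` be a division ring with involution `σ`, `V` a right
`L`-vector space, and `g : V × V → L` a `(σ,1)`-linear form.  The norm set
`N = {(g(w,w)+u−σ(u))·(g(v,v)+t−σ(t)) + g(w,v) + σ(g(v,w)) + 1}` is closed under
conjugation by every nonzero element of `L`. -/
theorem norm_set_closed_under_conjugation
    {L V : Type*} [DivisionRing L] [AddCommGroup V] [Module Lᵐᵒᵖ V]
    (σ : L → L)
    (hσadd : ∀ a b : L, σ (a + b) = σ a + σ b)
    (hσmul : ∀ a b : L, σ (a * b) = σ b * σ a)
    (hσinv : ∀ a : L, σ (σ a) = a)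
    (g : V → V → L)
    (hgaddl : ∀ v v' w : V, g (v + v') w = g v w + g v' w)
    (hgaddr : ∀ v w w' : V, g v (w + w') = g v w + g v w')
    (hgsmul : ∀ (a b : L) (v w : V),
      g (MulOpposite.op a • v) (MulOpposite.op b • w) = σ a * g v w * b)
    (N : Set L)
    (hN : N = {x : L | ∃ (v w : V) (t u : L),
      x = (g w w + u - σ u) * (g v v + t - σ t) + g w v + σ (g v w) + 1}) :
    ∀ r : L, r ≠ 0 → ∀ x ∈ N, r⁻¹ * x * r ∈ N := by
  have σ0 : σ 0 = 0 := by
    have h := hσadd 0 0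
    simpa using h.symm
  have σne : ∀ a : L, a ≠ 0 → σ a ≠ 0 := by
    intro a ha h0
    apply ha
    have := hσinv a
    rw [h0, σ0] at this
    exact this.symm
  have σ1 : σ 1 = 1 := by
    have h : σ 1 * σ 1 = σ 1 * 1 := by
      rw [← hσmul]; simp
    exact mul_left_cancel₀ (σne 1 one_ne_zero) h
  have σsub : ∀ a b : L, σ (a - b) = σ a - σ b := by
    intro a b
    have h := hσadd (a - b) b
    rw [sub_add_cancel] at h
    rw [h]; abel
  have σinv' : ∀ a : L, a ≠ 0 → σ a⁻¹ = (σ a)⁻¹ := by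
    intro a ha
    have h : σ a⁻¹ * σ a = 1 := by rw [← hσmul, mul_inv_cancel₀ ha, σ1]
    exact eq_inv_of_mul_eq_one_left h
  intro r hr x hx
  subst hN
  obtain ⟨v, w, t, u, rfl⟩ := hx
  have hσr : σ r ≠ 0 := σne r hr
  refine ⟨MulOpposite.op r • v, MulOpposite.op (σ r⁻¹) • w,
    σ r * t * r, r⁻¹ * u * (σ r)⁻¹, ?_⟩
  rw [hgsmul, hgsmul, hgsmul, hgsmul]
  rw [hσinv, σinv' r hr]
  -- rewrite the σ applications of products
  have σt' : σ (σ r * t * r) = σ r * σ t * r := by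
    rw [hσmul, hσmul, hσinv, mul_assoc]
  have σu' : σ (r⁻¹ * u * (σ r)⁻¹) = r⁻¹ * σ u * (σ r)⁻¹ := by
    rw [hσmul, hσmul, σinv' (σ r) hσr, hσinv, σinv' r hr, mul_assoc]
  have σd' : σ (σ r * g v w * (σ r)⁻¹) = r⁻¹ * σ (g v w) * r := by
    rw [hσmul, hσmul, σinv' (σ r) hσr, hσinv, ← mul_assoc]
  rw [σt', σu', σd']
  have hs : (σ r)⁻¹ * σ r = 1 := inv_mul_cancel₀ hσr
  have hrr : r⁻¹ * r = 1 := inv_mul_cancel₀ hr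
  set a := g w w
  set b := g v v
  set c := g w v
  set d := σ (g v w)
  have key : ∀ X Y : L, (r⁻¹ * X * (σ r)⁻¹) * (σ r * Y * r) = r⁻¹ * (X * Y) * r := by
    intro X Y
    calc (r⁻¹ * X * (σ r)⁻¹) * (σ r * Y * r)
        = r⁻¹ * X * ((σ r)⁻¹ * σ r) * (Y * r) := by noncomm_ring
      _ = r⁻¹ * (X * Y) * r := by rw [hs]; noncomm_ring
  have e1 : r⁻¹ * a * (σ r)⁻¹ + r⁻¹ * u * (σ r)⁻¹ - r⁻¹ * σ u * (σ r)⁻¹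
      = r⁻¹ * (a + u - σ u) * (σ r)⁻¹ := by noncomm_ring
  have e2 : σ r * b * r + σ r * t * r - σ r * σ t * r
      = σ r * (b + t - σ t) * r := by noncomm_ring
  rw [e1, e2, key]
  calc r⁻¹ * ((a + u - σ u) * (b + t - σ t) + c + d + 1) * r
      = r⁻¹ * ((a + u - σ u) * (b + t - σ t)) * r + r⁻¹ * c * r + r⁻¹ * d * r
        + r⁻¹ * r := by noncomm_ring
    _ = r⁻¹ * ((a + u - σ u) * (b + t - σ t)) * r + r⁻¹ * c * r + r⁻¹ * d * r + 1 := by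
        rw [hrr]
end

section
/- Let L be a division ring, σ : L → L an involution, V₀ a right L-vector space, and g₀ : V₀ × V₀ → L a (σ,1)-linear form; set f₀(v,w) := g₀(v,w) + σ(g₀(w,v)). Let W := L × L × V₀ × L × L as a right L-vector space, with coordinates written (x₋₂, x₋₁, v, x₁, x₂), basis vectors e₋₂ := (1,0,0,0,0), e₋₁ := (0,1,0,0,0), e₁ := (0,0,0,1,0), e₂ := (0,0,0,0,1), and σ-sesquilinear form f((x₋₂,x₋₁,v,x₁,x₂),(y₋₂,y₋₁,w,y₁,y₂)) := σ(x₋₂)y₂ + σ(x₂)y₋₂ + σ(x₋₁)y₁ + σ(x₁)y₋₁ + f₀(v,w). For a subspace S of W put S^⊥ := {w ∈ W | f(s,w) = 0 for all s ∈ S}. Fix v₀, w₀ ∈ V₀ and t, u ∈ L, and set g₁ := g₀(v₀,v₀) + t − σ(t), g₂ := g₀(w₀,w₀) + u − σ(u), and D := g₂·g₁ + f₀(w₀,v₀) + 1; assume D ≠ 0. Define the subspaces M₁ := span(e₋₂, e₋₁), M₂ := span(e₁, e₂), M₃ := span(e₁·g₁ + (0,0,v₀,0,0) + e₋₁, e₋₂),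 M₄ := span(e₋₁·σ(g₂) + (0,0,w₀,0,0) + e₁, e₂). Then for every x ∈ L, the fourfold perspectivity chain of perps yields ((((span(e₋₂ + e₋₁·x))^⊥ ∩ M₂)^⊥ ∩ M₃)^⊥ ∩ M₄)^⊥ ∩ M₁ = span(e₋₂ + e₋₁·(D·x)). In other words, the self-projectivity M₁ ⋏ M₂ ⋏ M₃ ⋏ M₄ ⋏ M₁ acts on the line ⟨e₋₂, e₋₁⟩ as the homology x ↦ D·x. -/
/-- In the right `L`-vector space `W = L × L × V₀ × L × L` equipped with
the `σ`-sesquilinear form `f`, the fourfold chain of perps along the maximal singular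
subspaces `M₁, M₂, M₃, M₄` carries the point `⟨e₋₂ + e₋₁·x⟩` of the line `⟨e₋₂, e₋₁⟩` to the
point `⟨e₋₂ + e₋₁·(D·x)⟩`, i.e. the self-projectivity `M₁ ⋏ M₂ ⋏ M₃ ⋏ M₄ ⋏ M₁` acts on
`⟨e₋₂, e₋₁⟩` as the homology `x ↦ D·x`. -/
theorem projectivity_of_maximal_singular_subspace_is_homology_with_factor_D
    {L V₀ : Type*} [DivisionRing L] [AddCommGroup V₀] [Module Lᵐᵒᵖ V₀]
    (σ : L → L)
    (hσadd : ∀ a b : L, σ (a + b) = σ a + σ b)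
    (hσmul : ∀ a b : L, σ (a * b) = σ b * σ a)
    (hσinv : ∀ a : L, σ (σ a) = a)
    (g₀ : V₀ → V₀ → L)
    (hg₀addl : ∀ v v' w : V₀, g₀ (v + v') w = g₀ v w + g₀ v' w)
    (hg₀addr : ∀ v w w' : V₀, g₀ v (w + w') = g₀ v w + g₀ v w')
    (hg₀smul : ∀ (a b : L) (v w : V₀),
      g₀ (MulOpposite.op a • v) (MulOpposite.op b • w) = σ a * g₀ v w * b)
    (f₀ : V₀ → V₀ → L) (hf₀ : ∀ v w : V₀, f₀ v w = g₀ v w + σ (g₀ w v))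
    -- the σ-sesquilinear form on W = L × L × V₀ × L × L, coordinates (x₋₂, x₋₁, v, x₁, x₂)
    (f : (L × L × V₀ × L × L) → (L × L × V₀ × L × L) → L)
    (hf : ∀ p q : L × L × V₀ × L × L,
      f p q = σ p.1 * q.2.2.2.2 + σ p.2.2.2.2 * q.1 + σ p.2.1 * q.2.2.2.1 +
        σ p.2.2.2.1 * q.2.1 + f₀ p.2.2.1 q.2.2.1)
    -- perp with respect to f
    (perp : Set (L × L × V₀ × L × L) → Set (L × L × V₀ × L × L))
    (hperp : ∀ S : Set (L × L × V₀ × L × L), perp S = {w | ∀ s ∈ S, f s w = 0})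
    (v₀ w₀ : V₀) (t u : L)
    (g₁ g₂ D : L)
    (hg₁ : g₁ = g₀ v₀ v₀ + t - σ t)
    (hg₂ : g₂ = g₀ w₀ w₀ + u - σ u)
    (hD : D = g₂ * g₁ + f₀ w₀ v₀ + 1)
    (hD0 : D ≠ 0)
    -- the four maximal singular subspaces, given as sets of right linear combinations:
    -- M₁ = span(e₋₂, e₋₁), M₂ = span(e₁, e₂),
    -- M₃ = span(e₁·g₁ + v₀ + e₋₁, e₋₂), M₄ = span(e₋₁·σ(g₂) + w₀ + e₁, e₂)
    (M₁ M₂ M₃ M₄ : Set (L × L × V₀ × L × L))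
    (hM₁ : M₁ = {p | ∃ a b : L, p = (a, b, 0, 0, 0)})
    (hM₂ : M₂ = {p | ∃ a b : L, p = (0, 0, 0, a, b)})
    (hM₃ : M₃ = {p | ∃ a b : L, p = (b, a, MulOpposite.op a • v₀, g₁ * a, 0)})
    (hM₄ : M₄ = {p | ∃ a b : L, p = (0, σ g₂ * a, MulOpposite.op a • w₀, a, b)})
    (x : L)
    -- the point span(e₋₂ + e₋₁·x) of M₁
    (Px : Set (L × L × V₀ × L × L))
    (hPx : Px = {p | ∃ a : L, p = (a, x * a, 0, 0, 0)}) :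
    perp (perp (perp (perp Px ∩ M₂) ∩ M₃) ∩ M₄) ∩ M₁
      = {p : L × L × V₀ × L × L | ∃ a : L, p = (a, (D * x) * a, 0, 0, 0)} := by
  have hσ0 : σ 0 = 0 := by
    have h := hσadd 0 0
    rw [add_zero] at h
    exact left_eq_add.mp h
  have hσ1 : σ 1 = 1 := by
    have h := hσmul 1 1
    rw [one_mul] at h
    have hne : σ 1 ≠ 0 := by
      intro h0
      have := hσinv 1
      rw [h0, hσ0] at this
      exact one_ne_zero this.symm
    exact (mul_left_cancel₀ hne (by rw [mul_one]; exact h)).symm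
  have hσneg : ∀ a : L, σ (-a) = -σ a := by
    intro a
    have h := hσadd a (-a)
    rw [add_neg_cancel, hσ0] at h
    exact eq_neg_of_add_eq_zero_right h.symm
  -- g₀ lemmas
  have hop1 : ∀ v : V₀, MulOpposite.op (1:L) • v = v := fun v => by
    rw [MulOpposite.op_one, one_smul]
  have hgl : ∀ (a : L) (v w : V₀), g₀ (MulOpposite.op a • v) w = σ a * g₀ v w := by
    intro a v w
    have h := hg₀smul a 1 v w
    rwa [hop1, mul_one] at h
  have hgr : ∀ (b : L) (v w : V₀), g₀ v (MulOpposite.op b • w) = g₀ v w * b := by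
    intro b v w
    have h := hg₀smul 1 b v w
    rwa [hop1, hσ1, one_mul] at h
  have hg0l : ∀ w : V₀, g₀ 0 w = 0 := by
    intro w
    have h := hg₀addl 0 0 w
    rw [add_zero] at h
    exact left_eq_add.mp h
  have hg0r : ∀ v : V₀, g₀ v 0 = 0 := by
    intro v
    have h := hg₀addr v 0 0
    rw [add_zero] at h
    exact left_eq_add.mp h
  -- f₀ lemmas
  have hf₀0l : ∀ w : V₀, f₀ 0 w = 0 := by
    intro w; rw [hf₀, hg0l, hg0r, hσ0, add_zero]
  have hf₀0r : ∀ v : V₀, f₀ v 0 = 0 := by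
    intro v; rw [hf₀, hg0l, hg0r, hσ0, add_zero]
  have hf₀l : ∀ (a : L) (v w : V₀), f₀ (MulOpposite.op a • v) w = σ a * f₀ v w := by
    intro a v w
    rw [hf₀, hf₀, hgl, hgr, hσmul, mul_add]
  have hf₀r : ∀ (a : L) (v w : V₀), f₀ v (MulOpposite.op a • w) = f₀ v w * a := by
    intro a v w
    rw [hf₀, hf₀, hgr, hgl, hσmul, hσinv, add_mul]
  have hf₀σ : σ (f₀ w₀ v₀) = f₀ v₀ w₀ := by
    rw [hf₀, hf₀, hσadd, hσinv, add_comm]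
  have hσD : σ D = σ g₁ * σ g₂ + f₀ v₀ w₀ + 1 := by
    rw [hD, hσadd, hσadd, hσmul, hσ1, hf₀σ]
  -- Step 1 : perp Px ∩ M₂
  have h1 : perp Px ∩ M₂ = {p | ∃ c : L, p = (0, 0, 0, c, -(σ x * c))} := by
    ext p
    simp only [hperp, hM₂, hPx, Set.mem_inter_iff, Set.mem_setOf_eq]
    constructor
    · rintro ⟨hp, c, d, rfl⟩
      have h := hp (1, x * 1, 0, 0, 0) ⟨1, rfl⟩
      simp only [hf, hσmul, hσ0, hσ1, hf₀0l, one_mul, mul_one, zero_mul, mul_zero,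
        add_zero, zero_add] at h
      exact ⟨c, by rw [eq_neg_of_add_eq_zero_left h]⟩
    · rintro ⟨c, rfl⟩
      refine ⟨?_, c, -(σ x * c), rfl⟩
      rintro s ⟨a, rfl⟩
      simp [hf, hσmul, hσ0, hf₀0l, mul_assoc]
  -- Step 2
  have h2 : perp (perp Px ∩ M₂) ∩ M₃
      = {p | ∃ b : L, p = (b, x * b, MulOpposite.op (x * b) • v₀, g₁ * (x * b), 0)} := by
    rw [h1]
    ext p
    simp only [hperp, hM₃, Set.mem_inter_iff, Set.mem_setOf_eq]
    constructor
    · rintro ⟨hp, a, b, rfl⟩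
      have h := hp (0, 0, 0, 1, -(σ x * 1)) ⟨1, rfl⟩
      simp only [hf, hσmul, hσneg, hσinv, hσ0, hσ1, hf₀0l, one_mul, mul_one, zero_mul,
        mul_zero, add_zero, zero_add, neg_mul, neg_add_eq_zero] at h
      exact ⟨b, by rw [← h]⟩
    · rintro ⟨b, rfl⟩
      refine ⟨?_, x * b, b, rfl⟩
      rintro s ⟨c, rfl⟩
      simp [hf, hσmul, hσneg, hσinv, hσ0, hf₀0l, mul_assoc]
  -- Step 3
  have h3 : perp (perp (perp Px ∩ M₂) ∩ M₃) ∩ M₄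
      = {p | ∃ a : L, p = (0, σ g₂ * a, MulOpposite.op a • w₀, a, -(σ x * (σ D * a)))} := by
    rw [h2]
    ext p
    simp only [hperp, hM₄, Set.mem_inter_iff, Set.mem_setOf_eq]
    constructor
    · rintro ⟨hp, a, b, rfl⟩
      have h := hp (1, x * 1, MulOpposite.op (x * 1) • v₀, g₁ * (x * 1), 0) ⟨1, rfl⟩
      simp only [hf, hσmul, hσneg, hσinv, hσ0, hσ1, hf₀l, hf₀r, one_mul, mul_one,
        zero_mul, mul_zero, add_zero, zero_add] at h
      refine ⟨a, ?_⟩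
      have h' : b + σ x * (σ D * a) = 0 := by
        rw [hσD, ← h]; noncomm_ring
      rw [eq_neg_of_add_eq_zero_left h']
    · rintro ⟨a, rfl⟩
      refine ⟨?_, a, -(σ x * (σ D * a)), rfl⟩
      rintro s ⟨b, rfl⟩
      simp only [hf, hσmul, hσneg, hσinv, hσ0, hσ1, hf₀l, hf₀r, one_mul, mul_one,
        zero_mul, mul_zero, add_zero, zero_add]
      rw [hσD]; noncomm_ring
  -- Step 4
  rw [h3]
  ext p
  simp only [hperp, hM₁, Set.mem_inter_iff, Set.mem_setOf_eq]
  constructor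
  · rintro ⟨hp, c, d, rfl⟩
    have h := hp (0, σ g₂ * 1, MulOpposite.op (1:L) • w₀, 1, -(σ x * (σ D * 1))) ⟨1, rfl⟩
    simp only [hf, hσmul, hσneg, hσinv, hσ0, hσ1, hf₀l, hf₀r, hf₀0l, hf₀0r, hop1,
      one_mul, mul_one, zero_mul, mul_zero, add_zero, zero_add, neg_mul,
      neg_add_eq_zero, mul_assoc] at h
    refine ⟨c, ?_⟩
    rw [mul_assoc, h]
  · rintro ⟨c, rfl⟩
    refine ⟨?_, c, D * x * c, rfl⟩
    rintro s ⟨a, rfl⟩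
    simp only [hf, hσmul, hσneg, hσinv, hσ0, hσ1, hf₀l, hf₀r, hf₀0r, one_mul, mul_one,
      zero_mul, mul_zero, add_zero, zero_add, neg_mul, mul_assoc, neg_add_cancel]
end
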